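/- arXiv:1709.02168 — 4 statements merged into one kernel-verified Lean document; each statement's English description precedes it below -/
import Mathlib

section
/- For every rate R > C_Wyner(X;Y) there exist a sequence of synthesis codes of rate R and a constant c > 0 such that the total variation distance satisfies |P_{X^nY^n} − π_{X^nY^n}| ≤ e^{−cn} for all sufficiently large n; i.e., the total variation distance between the synthesized and target distributions can be made to vanish exponentially fast above Wyner's common information. -/
open Filter

noncomputable section

/-- `P` is a probability mass function on the finite type `α`. -/
def IsPMF {α : Type*} [Fintype α] (P : α → ℝ) : Prop :=
  (∀ a, 0 ≤ P a) ∧ (∑ a, P a) = 1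

/-- Rényi divergence of order `1 + s` (natural logarithm), `EReal`-valued.
For `s ≥ 0` it is `⊤` when `supp P ⊄ supp Q`; for `s = 0` it is the relative
entropy; otherwise it is `(1/s) log ∑_{x ∈ supp P} P(x)^{1+s} Q(x)^{-s}`. -/
def renyiDiv {α : Type*} [Fintype α] (s : ℝ) (P Q : α → ℝ) : EReal :=
  if 0 ≤ s ∧ ∃ a, 0 < P a ∧ Q a = 0 then ⊤
  else if s = 0 then
    (((∑ a ∈ Finset.univ.filter (fun a => 0 < P a), P a * Real.log (P a / Q a)) : ℝ) : EReal)
  else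
    ((((1 / s) * Real.log (∑ a ∈ Finset.univ.filter (fun a => 0 < P a),
        P a ^ (1 + s) * Q a ^ (-s))) : ℝ) : EReal)

/-- Mutual information `I(XY; W)` of a joint distribution on `(X × Y) × W`. -/
def mutualInfoW {X Y W : Type*} [Fintype X] [Fintype Y] [Fintype W] (P : X × Y × W → ℝ) : ℝ :=
  ∑ z ∈ Finset.univ.filter (fun z : X × Y × W => 0 < P z),
    P z * Real.log (P z /
      ((∑ w, P (z.1, z.2.1, w)) * (∑ p : X × Y, P (p.1, p.2, z.2.2))))

/-- The Markov chain condition `X − W − Y`. -/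
def IsMarkovXWY {X Y W : Type*} [Fintype X] [Fintype Y] [Fintype W] (P : X × Y × W → ℝ) : Prop :=
  ∀ x y w, P (x, y, w) * (∑ p : X × Y, P (p.1, p.2, w)) =
    (∑ y', P (x, y', w)) * (∑ x', P (x', y, w))

/-- Wyner's common information of the target distribution `π` on `X × Y`. -/
def CWyner {X Y : Type*} [Fintype X] [Fintype Y] (π : X × Y → ℝ) : ℝ :=
  sInf { r | ∃ P : X × Y × Fin (Fintype.card X * Fintype.card Y) → ℝ,
    IsPMF P ∧ (∀ x y, (∑ w, P (x, y, w)) = π (x, y)) ∧ IsMarkovXWY P ∧ r = mutualInfoW P }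

/-- The message set size `⌈e^{nR}⌉` of a rate-`R` synthesis code at blocklength `n`. -/
def numMsgs (R : ℝ) (n : ℕ) : ℕ := ⌈Real.exp (n * R)⌉₊

/-- A synthesis code: a pair of conditional distributions from the message set to
`X^n` and `Y^n` respectively. -/
structure SynthCode (X Y : Type*) [Fintype X] [Fintype Y] (M n : ℕ) where
  PX : Fin M → (Fin n → X) → ℝ
  PY : Fin M → (Fin n → Y) → ℝ
  PX_pmf : ∀ m, IsPMF (PX m)
  PY_pmf : ∀ m, IsPMF (PY m)

/-- The distribution `P_{X^n Y^n}` induced by a synthesis code. -/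
def SynthCode.induced {X Y : Type*} [Fintype X] [Fintype Y] {M n : ℕ}
    (c : SynthCode X Y M n) : (Fin n → X) × (Fin n → Y) → ℝ :=
  fun z => (M : ℝ)⁻¹ * ∑ m, c.PX m z.1 * c.PY m z.2

/-- The `n`-fold product distribution `π^{⊗ n}` on `X^n × Y^n`. -/
def prodDist {X Y : Type*} [Fintype X] [Fintype Y] (π : X × Y → ℝ) (n : ℕ) :
    (Fin n → X) × (Fin n → Y) → ℝ :=
  fun z => ∏ i, π (z.1 i, z.2 i)

/-- Total variation distance between two distributions on a finite type. -/
def tvDist {α : Type*} [Fintype α] (P Q : α → ℝ) : ℝ :=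
  (∑ a, |P a - Q a|) / 2


private lemma sum_pi_prod {ι κ : Type*} [Fintype ι] [DecidableEq ι] [Fintype κ]
    (f : ι → κ → ℝ) : ∑ g : ι → κ, ∏ i, f i (g i) = ∏ i, ∑ a, f i a := by
  rw [Finset.prod_univ_sum (fun _ => Finset.univ) f, Fintype.piFinset_univ]

private lemma exists_le_average {ι : Type*} [Fintype ι] (μ f : ι → ℝ)
    (hμ0 : ∀ i, 0 ≤ μ i) (hμ1 : ∑ i, μ i = 1) :
    ∃ i, f i ≤ ∑ i, μ i * f i := by
  by_contra h
  push_neg at h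
  obtain ⟨i0, hi0⟩ : ∃ i, 0 < μ i := by
    by_contra h2; push_neg at h2
    have : ∑ i, μ i = 0 := Finset.sum_eq_zero (fun i _ => le_antisymm (h2 i) (hμ0 i))
    rw [this] at hμ1; norm_num at hμ1
  have hlt : ∑ i, μ i * (∑ j, μ j * f j) < ∑ i, μ i * f i := by
    refine Finset.sum_lt_sum (fun i _ => mul_le_mul_of_nonneg_left (h i).le (hμ0 i)) ?_
    exact ⟨i0, Finset.mem_univ _, mul_lt_mul_of_pos_left (h i0) hi0⟩
  rw [← Finset.sum_mul, hμ1, one_mul] at hlt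
  exact lt_irrefl _ hlt

private lemma exists_lt_of_sInf_lt' {S : Set ℝ} {R : ℝ} (hne : S.Nonempty) (h : sInf S < R) :
    ∃ x ∈ S, x < R := by
  by_cases hb : BddBelow S
  · exact (csInf_lt_iff hb hne).mp h
  · exact not_bddBelow_iff.mp hb R

private lemma prod_ite_two {ι : Type*} [Fintype ι] [DecidableEq ι] {m m' : ι} (h : m ≠ m')
    (a b : ι → ℝ) :
    (∏ k, (if k = m then a k else if k = m' then b k else 1)) = a m * b m' := by
  rw [← Finset.mul_prod_erase Finset.univ _ (Finset.mem_univ m)]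
  rw [if_pos rfl]
  have hm' : m' ∈ (Finset.univ : Finset ι).erase m :=
    Finset.mem_erase.mpr ⟨h.symm, Finset.mem_univ _⟩
  rw [← Finset.mul_prod_erase _ _ hm', if_neg h.symm, if_pos rfl]
  rw [Finset.prod_eq_one, mul_one]
  intro k hk
  have hk1 := Finset.ne_of_mem_erase hk
  have hk2 := Finset.ne_of_mem_erase (Finset.mem_of_mem_erase hk)
  rw [if_neg hk2, if_neg hk1]

private lemma exp_coord {V : Type*} [Fintype V] {M : ℕ} (μ : V → ℝ) (hμ1 : ∑ v, μ v = 1)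
    (m : Fin M) (F : V → ℝ) :
    ∑ C : Fin M → V, (∏ k, μ (C k)) * F (C m) = ∑ v, μ v * F v := by
  have step1 : ∀ C : Fin M → V, (∏ k, μ (C k)) * F (C m)
      = ∏ k, (μ (C k) * (if k = m then F (C k) else 1)) := by
    intro C
    rw [Finset.prod_mul_distrib, Finset.prod_ite_eq' Finset.univ m (fun k => F (C k)),
      if_pos (Finset.mem_univ m)]
  calc ∑ C : Fin M → V, (∏ k, μ (C k)) * F (C m)
      = ∑ C : Fin M → V, ∏ k, (fun k v => μ v * (if k = m then F v else 1)) k (C k) := by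
        exact Finset.sum_congr rfl (fun C _ => step1 C)
    _ = ∏ k, ∑ v, μ v * (if k = m then F v else 1) :=
        sum_pi_prod (fun (k : Fin M) (v : V) => μ v * (if k = m then F v else 1))
    _ = ∏ k, (if k = m then (∑ v, μ v * F v) else 1) := by
        refine Finset.prod_congr rfl (fun k _ => ?_)
        split_ifs with hk
        · rfl
        · simp [hμ1]
    _ = ∑ v, μ v * F v := by
        rw [Finset.prod_ite_eq' Finset.univ m (fun _ => ∑ v, μ v * F v),
          if_pos (Finset.mem_univ m)]

private lemma exp_coord2 {V : Type*} [Fintype V] {M : ℕ} (μ : V → ℝ) (hμ1 : ∑ v, μ v = 1)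
    {m m' : Fin M} (hmm : m ≠ m') (F G : V → ℝ) :
    ∑ C : Fin M → V, (∏ k, μ (C k)) * (F (C m) * G (C m'))
      = (∑ v, μ v * F v) * (∑ v, μ v * G v) := by
  have step1 : ∀ C : Fin M → V, (∏ k, μ (C k)) * (F (C m) * G (C m'))
      = ∏ k, (μ (C k) * (if k = m then F (C k) else if k = m' then G (C k) else 1)) := by
    intro C
    rw [Finset.prod_mul_distrib, prod_ite_two hmm (fun k => F (C k)) (fun k => G (C k))]
  calc ∑ C : Fin M → V, (∏ k, μ (C k)) * (F (C m) * G (C m'))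
      = ∑ C : Fin M → V, ∏ k,
          (fun k v => μ v * (if k = m then F v else if k = m' then G v else 1)) k (C k) :=
        Finset.sum_congr rfl (fun C _ => step1 C)
    _ = ∏ k, ∑ v, μ v * (if k = m then F v else if k = m' then G v else 1) :=
        sum_pi_prod (fun (k : Fin M) (v : V) =>
          μ v * (if k = m then F v else if k = m' then G v else 1))
    _ = ∏ k, (if k = m then (∑ v, μ v * F v) else if k = m' then (∑ v, μ v * G v) else 1) := by
        refine Finset.prod_congr rfl (fun k _ => ?_)
        split_ifs with h1 h2
        · rfl
        · rfl
        · simp [hμ1]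
    _ = (∑ v, μ v * F v) * (∑ v, μ v * G v) :=
        prod_ite_two hmm (fun _ => ∑ v, μ v * F v) (fun _ => ∑ v, μ v * G v)

private lemma avg_abs_le_sqrt_avg_sq {ι : Type*} [Fintype ι] (μ u : ι → ℝ)
    (h0 : ∀ i, 0 ≤ μ i) (h1 : ∑ i, μ i = 1) :
    ∑ i, μ i * |u i| ≤ Real.sqrt (∑ i, μ i * (u i) ^ 2) := by
  have key : (∑ i, μ i * |u i|) ^ 2 ≤ ∑ i, μ i * (u i) ^ 2 := by
    have cs := Finset.sum_mul_sq_le_sq_mul_sq Finset.univ (fun i => Real.sqrt (μ i))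
      (fun i => Real.sqrt (μ i) * |u i|)
    have e1 : ∀ i : ι, Real.sqrt (μ i) * (Real.sqrt (μ i) * |u i|) = μ i * |u i| := by
      intro i; rw [← mul_assoc, Real.mul_self_sqrt (h0 i)]
    have e2 : ∀ i : ι, (Real.sqrt (μ i)) ^ 2 = μ i := fun i => Real.sq_sqrt (h0 i)
    have e3 : ∀ i : ι, (Real.sqrt (μ i) * |u i|) ^ 2 = μ i * (u i) ^ 2 := by
      intro i; rw [mul_pow, Real.sq_sqrt (h0 i), sq_abs]
    simp only [e1, e2, e3] at cs
    calc (∑ i, μ i * |u i|) ^ 2 ≤ (∑ i, μ i) * ∑ i, μ i * (u i) ^ 2 := cs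
      _ = ∑ i, μ i * (u i) ^ 2 := by rw [h1, one_mul]
  have h2 : 0 ≤ ∑ i, μ i * |u i| :=
    Finset.sum_nonneg (fun i _ => mul_nonneg (h0 i) (abs_nonneg _))
  calc ∑ i, μ i * |u i| = Real.sqrt ((∑ i, μ i * |u i|) ^ 2) := (Real.sqrt_sq h2).symm
    _ ≤ Real.sqrt (∑ i, μ i * (u i) ^ 2) := Real.sqrt_le_sqrt key

private lemma sum_pair_prod {X Y : Type*} [Fintype X] [Fintype Y] (n : ℕ) (F : X × Y → ℝ) :
    ∑ z : (Fin n → X) × (Fin n → Y), ∏ i, F (z.1 i, z.2 i) = (∑ p, F p) ^ n := by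
  rw [← Equiv.sum_comp (Equiv.arrowProdEquivProdArrow (Fin n) (fun _ => X) (fun _ => Y))
    (fun z : (Fin n → X) × (Fin n → Y) => ∏ i, F (z.1 i, z.2 i))]
  have : ∀ h : Fin n → X × Y,
      (∏ i, F (((Equiv.arrowProdEquivProdArrow (Fin n) (fun _ => X) (fun _ => Y)) h).1 i,
        ((Equiv.arrowProdEquivProdArrow (Fin n) (fun _ => X) (fun _ => Y)) h).2 i)) = ∏ i, (fun _ p => F p) i (h i) := by
    intro h
    refine Finset.prod_congr rfl (fun i _ => ?_)
    simp [Equiv.arrowProdEquivProdArrow]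
  rw [Finset.sum_congr rfl (fun h _ => this h), sum_pi_prod (fun _ p => F p)]
  simp [Finset.prod_const, Finset.card_univ]

private lemma soft_covering {X Y W : Type*} [Fintype X] [Fintype Y] [Fintype W]
    (π : X × Y → ℝ) (hπ : IsPMF π)
    (pW : W → ℝ) (gX : W → X → ℝ) (gY : W → Y → ℝ)
    (hpW : IsPMF pW) (hgX : ∀ w, IsPMF (gX w)) (hgY : ∀ w, IsPMF (gY w))
    (hmix : ∀ x y, (∑ w, pW w * (gX w x * gY w y)) = π (x, y))
    (lam t Λ : ℝ) (hlam : 0 < lam)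
    (hcher : ∑ p ∈ Finset.univ.filter (fun p : X × Y => 0 < π p),
        (π p) ^ (-lam) * ∑ w, pW w * (gX w p.1 * gY w p.2) ^ (1 + lam) ≤ Λ)
    (M n : ℕ) (hM : 0 < M) :
    ∃ code : SynthCode X Y M n,
      tvDist code.induced (prodDist π n)
        ≤ Real.sqrt (Real.exp (n * t) / M) / 2 + Real.exp (-(lam * t) * n) * Λ ^ n := by
  classical
  have hg0 : ∀ (w : W) (x : X) (y : Y), 0 ≤ gX w x * gY w y :=
    fun w x y => mul_nonneg ((hgX w).1 _) ((hgY w).1 _)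
  set T : ℝ := Real.exp (n * t) with hTdef
  have hT0 : 0 < T := Real.exp_pos _
  have hMr : (0:ℝ) < (M:ℝ) := Nat.cast_pos.mpr hM
  -- basic objects
  set μv : (Fin n → W) → ℝ := fun v => ∏ i, pW (v i) with hμvdef
  set G : (Fin n → W) → (Fin n → X) × (Fin n → Y) → ℝ :=
    fun v z => ∏ i, gX (v i) (z.1 i) * gY (v i) (z.2 i) with hGdef
  set a : (Fin n → X) × (Fin n → Y) → ℝ := fun z => prodDist π n z with hadef
  have hμv0 : ∀ v, 0 ≤ μv v := fun v => Finset.prod_nonneg (fun i _ => hpW.1 _)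
  have hμv1 : (∑ v, μv v) = 1 := by
    rw [hμvdef]
    rw [sum_pi_prod (fun (_ : Fin n) (w : W) => pW w)]
    rw [Finset.prod_congr rfl (fun i _ => hpW.2), Finset.prod_const_one]
  have hG0 : ∀ v z, 0 ≤ G v z := fun v z => Finset.prod_nonneg (fun i _ => hg0 _ _ _)
  have ha0 : ∀ z, 0 ≤ a z := fun z => Finset.prod_nonneg (fun i _ => hπ.1 _)
  have hmean : ∀ z, (∑ v, μv v * G v z) = a z := by
    intro z
    have e1 : ∀ v : Fin n → W, μv v * G v z
        = ∏ i, (fun (i : Fin n) (w : W) => pW w * (gX w (z.1 i) * gY w (z.2 i))) i (v i) := by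
      intro v
      rw [hμvdef, hGdef]
      dsimp only
      rw [← Finset.prod_mul_distrib]
    rw [Finset.sum_congr rfl (fun v _ => e1 v),
      sum_pi_prod (fun (i : Fin n) (w : W) => pW w * (gX w (z.1 i) * gY w (z.2 i)))]
    exact Finset.prod_congr rfl (fun i _ => hmix (z.1 i) (z.2 i))
  -- truncation
  set A : (Fin n → W) → (Fin n → X) × (Fin n → Y) → ℝ :=
    fun v z => if G v z ≤ T * a z then G v z else 0 with hAdef
  set B : (Fin n → W) → (Fin n → X) × (Fin n → Y) → ℝ :=
    fun v z => if G v z ≤ T * a z then 0 else G v z with hBdef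
  have hA0 : ∀ v z, 0 ≤ A v z := by
    intro v z; rw [hAdef]; dsimp only; split_ifs; exacts [hG0 v z, le_refl 0]
  have hB0 : ∀ v z, 0 ≤ B v z := by
    intro v z; rw [hBdef]; dsimp only; split_ifs; exacts [le_refl 0, hG0 v z]
  have hABG : ∀ v z, A v z + B v z = G v z := by
    intro v z; rw [hAdef, hBdef]; dsimp only; split_ifs <;> ring
  have hAle : ∀ v z, A v z ≤ T * a z := by
    intro v z; rw [hAdef]; dsimp only; split_ifs with h
    · exact h
    · exact mul_nonneg hT0.le (ha0 z)
  set aA : (Fin n → X) × (Fin n → Y) → ℝ := fun z => ∑ v, μv v * A v z with haAdef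
  set aB : (Fin n → X) × (Fin n → Y) → ℝ := fun z => ∑ v, μv v * B v z with haBdef
  have haA0 : ∀ z, 0 ≤ aA z :=
    fun z => Finset.sum_nonneg (fun v _ => mul_nonneg (hμv0 v) (hA0 v z))
  have haB0 : ∀ z, 0 ≤ aB z :=
    fun z => Finset.sum_nonneg (fun v _ => mul_nonneg (hμv0 v) (hB0 v z))
  have haAB : ∀ z, aA z + aB z = a z := by
    intro z
    rw [haAdef, haBdef, ← hmean z]
    dsimp only
    rw [← Finset.sum_add_distrib]
    exact Finset.sum_congr rfl (fun v _ => by rw [← mul_add, hABG v z])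
  have haAa : ∀ z, aA z ≤ a z := by
    intro z; rw [← haAB z]; linarith [haB0 z]
  -- codebook distribution
  set μC : (Fin M → Fin n → W) → ℝ := fun C => ∏ m, μv (C m) with hμCdef
  have hμC0 : ∀ C, 0 ≤ μC C := fun C => Finset.prod_nonneg (fun m _ => hμv0 _)
  have hμC1 : (∑ C, μC C) = 1 := by
    rw [hμCdef]
    rw [sum_pi_prod (fun (_ : Fin M) (v : Fin n → W) => μv v)]
    rw [Finset.prod_congr rfl (fun m _ => hμv1), Finset.prod_const_one]
  -- pulling a single coordinate out of a codebook average
  have hpull : ∀ F : (Fin n → W) → ℝ,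
      (∑ C, μC C * ((M:ℝ)⁻¹ * ∑ m, F (C m))) = ∑ v, μv v * F v := by
    intro F
    have e1 : ∀ C : Fin M → Fin n → W,
        μC C * ((M:ℝ)⁻¹ * ∑ m, F (C m)) = (M:ℝ)⁻¹ * ∑ m, μC C * F (C m) := by
      intro C
      rw [Finset.mul_sum, Finset.mul_sum, Finset.mul_sum]
      exact Finset.sum_congr rfl (fun m _ => by ring)
    rw [Finset.sum_congr rfl (fun C _ => e1 C), ← Finset.mul_sum, Finset.sum_comm]
    rw [Finset.sum_congr rfl (fun m _ => exp_coord μv hμv1 m F)]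
    rw [Finset.sum_const, Finset.card_univ, Fintype.card_fin, nsmul_eq_mul, ← mul_assoc,
      inv_mul_cancel₀ (ne_of_gt hMr), one_mul]
  -- the codes
  have code_pmfX : ∀ (C : Fin M → Fin n → W) (m : Fin M),
      IsPMF (fun x : Fin n → X => ∏ i, gX (C m i) (x i)) := by
    intro C m
    constructor
    · intro x; exact Finset.prod_nonneg (fun i _ => (hgX _).1 _)
    · rw [sum_pi_prod (fun (i : Fin n) (xx : X) => gX (C m i) xx)]
      rw [Finset.prod_congr rfl (fun i _ => (hgX (C m i)).2), Finset.prod_const_one]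
  have code_pmfY : ∀ (C : Fin M → Fin n → W) (m : Fin M),
      IsPMF (fun y : Fin n → Y => ∏ i, gY (C m i) (y i)) := by
    intro C m
    constructor
    · intro y; exact Finset.prod_nonneg (fun i _ => (hgY _).1 _)
    · rw [sum_pi_prod (fun (i : Fin n) (yy : Y) => gY (C m i) yy)]
      rw [Finset.prod_congr rfl (fun i _ => (hgY (C m i)).2), Finset.prod_const_one]
  set code : (Fin M → Fin n → W) → SynthCode X Y M n := fun C =>
    { PX := fun m x => ∏ i, gX (C m i) (x i)
      PY := fun m y => ∏ i, gY (C m i) (y i)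
      PX_pmf := code_pmfX C
      PY_pmf := code_pmfY C } with hcodedef
  have hind : ∀ C z, (code C).induced z = (M:ℝ)⁻¹ * ∑ m, G (C m) z := by
    intro C z
    rw [hcodedef]
    unfold SynthCode.induced
    dsimp only
    congr 1
    refine Finset.sum_congr rfl (fun m _ => ?_)
    rw [hGdef]
    dsimp only
    rw [← Finset.prod_mul_distrib]
  -- per-z expectation bound
  have stepB : ∀ z, (∑ C, μC C * |(M:ℝ)⁻¹ * (∑ m, G (C m) z) - a z|)
      ≤ Real.sqrt (T / M) * a z + 2 * aB z := by
    intro z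
    have htri : ∀ C : Fin M → Fin n → W,
        |(M:ℝ)⁻¹ * (∑ m, G (C m) z) - a z|
          ≤ |(M:ℝ)⁻¹ * (∑ m, A (C m) z) - aA z|
            + ((M:ℝ)⁻¹ * (∑ m, B (C m) z) + aB z) := by
      intro C
      have hBpos : 0 ≤ (M:ℝ)⁻¹ * (∑ m, B (C m) z) :=
        mul_nonneg (by positivity) (Finset.sum_nonneg (fun m _ => hB0 _ z))
      have h1 : (M:ℝ)⁻¹ * (∑ m, G (C m) z)
          = (M:ℝ)⁻¹ * (∑ m, A (C m) z) + (M:ℝ)⁻¹ * (∑ m, B (C m) z) := by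
        rw [← mul_add, ← Finset.sum_add_distrib]
        congr 1
        exact Finset.sum_congr rfl (fun m _ => (hABG (C m) z).symm)
      calc |(M:ℝ)⁻¹ * (∑ m, G (C m) z) - a z|
          = |((M:ℝ)⁻¹ * (∑ m, A (C m) z) - aA z)
              + ((M:ℝ)⁻¹ * (∑ m, B (C m) z) - aB z)| := by
            rw [h1, ← haAB z]; ring_nf
        _ ≤ |(M:ℝ)⁻¹ * (∑ m, A (C m) z) - aA z|
              + |(M:ℝ)⁻¹ * (∑ m, B (C m) z) - aB z| := abs_add_le _ _
        _ ≤ _ := by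
            refine add_le_add_right ?_ _
            rw [abs_le]
            exact ⟨by linarith [hBpos, haB0 z], by linarith [hBpos, haB0 z]⟩
    have hTerm2 : (∑ C, μC C * ((M:ℝ)⁻¹ * (∑ m, B (C m) z))) = aB z := hpull (B · z)
    have hSA1 : (∑ C, μC C * ((M:ℝ)⁻¹ * (∑ m, A (C m) z))) = aA z := hpull (A · z)
    set E2 : ℝ := ∑ v, μv v * (A v z * A v z) with hE2def
    have hE2nn : 0 ≤ E2 :=
      Finset.sum_nonneg (fun v _ => mul_nonneg (hμv0 v) (mul_nonneg (hA0 v z) (hA0 v z)))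
    -- second moment
    have hSA2 : (∑ C, μC C * (((M:ℝ)⁻¹ * (∑ m, A (C m) z)) * ((M:ℝ)⁻¹ * (∑ m, A (C m) z))))
        = ((M:ℝ)⁻¹)^2 * ((M:ℝ) * E2 + ((M:ℝ)^2 - M) * (aA z * aA z)) := by
      have e1 : ∀ C : Fin M → Fin n → W,
          μC C * (((M:ℝ)⁻¹ * (∑ m, A (C m) z)) * ((M:ℝ)⁻¹ * (∑ m, A (C m) z)))
            = ((M:ℝ)⁻¹)^2 * ∑ m, ∑ m', μC C * (A (C m) z * A (C m') z) := by
        intro C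
        have hS : (∑ m, A (C m) z) * (∑ m', A (C m') z)
            = ∑ m, ∑ m', A (C m) z * A (C m') z :=
          Finset.sum_mul_sum Finset.univ Finset.univ _ _
        calc μC C * (((M:ℝ)⁻¹ * (∑ m, A (C m) z)) * ((M:ℝ)⁻¹ * (∑ m, A (C m) z)))
            = ((M:ℝ)⁻¹)^2 * (μC C * ((∑ m, A (C m) z) * (∑ m', A (C m') z))) := by ring
          _ = ((M:ℝ)⁻¹)^2 * (μC C * ∑ m, ∑ m', A (C m) z * A (C m') z) := by rw [hS]
          _ = ((M:ℝ)⁻¹)^2 * ∑ m, ∑ m', μC C * (A (C m) z * A (C m') z) := by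
              congr 1
              rw [Finset.mul_sum]
              exact Finset.sum_congr rfl (fun m _ => Finset.mul_sum _ _ _)
      rw [Finset.sum_congr rfl (fun C _ => e1 C), ← Finset.mul_sum, Finset.sum_comm]
      have swap2 : ∀ m : Fin M, (∑ C : Fin M → Fin n → W, ∑ m',
          μC C * (A (C m) z * A (C m') z))
          = ∑ m' : Fin M, ∑ C : Fin M → Fin n → W, μC C * (A (C m) z * A (C m') z) :=
        fun m => Finset.sum_comm
      rw [Finset.sum_congr rfl (fun m _ => swap2 m)]
      have inner : ∀ m m' : Fin M, (∑ C : Fin M → Fin n → W, μC C * (A (C m) z * A (C m') z))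
          = if m = m' then E2 else aA z * aA z := by
        intro m m'
        by_cases hmm : m = m'
        · subst hmm
          rw [if_pos rfl, hE2def]
          exact exp_coord μv hμv1 m (fun v => A v z * A v z)
        · rw [if_neg hmm, haAdef]
          exact exp_coord2 μv hμv1 hmm (fun v => A v z) (fun v => A v z)
      rw [Finset.sum_congr rfl (fun m _ => Finset.sum_congr rfl (fun m' _ => inner m m'))]
      have row : ∀ m : Fin M, (∑ m' : Fin M, if m = m' then E2 else aA z * aA z)
          = (M:ℝ) * (aA z * aA z) + (E2 - aA z * aA z) := by
        intro m
        have e2 : ∀ m' : Fin M, (if m = m' then E2 else aA z * aA z)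
            = aA z * aA z + (if m = m' then E2 - aA z * aA z else 0) := by
          intro m'; split_ifs <;> ring
        rw [Finset.sum_congr rfl (fun m' _ => e2 m'), Finset.sum_add_distrib,
          Finset.sum_const, Finset.sum_ite_eq Finset.univ m (fun _ => E2 - aA z * aA z),
          if_pos (Finset.mem_univ m), Finset.card_univ, Fintype.card_fin, nsmul_eq_mul]
      rw [Finset.sum_congr rfl (fun m _ => row m), Finset.sum_const, Finset.card_univ,
        Fintype.card_fin, nsmul_eq_mul]
      ring
    -- variance
    have hvar : (∑ C, μC C * (((M:ℝ)⁻¹ * (∑ m, A (C m) z)) - aA z)^2) ≤ E2 / M := by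
      have expand : ∀ C : Fin M → Fin n → W,
          μC C * (((M:ℝ)⁻¹ * (∑ m, A (C m) z)) - aA z)^2
            = μC C * (((M:ℝ)⁻¹ * (∑ m, A (C m) z)) * ((M:ℝ)⁻¹ * (∑ m, A (C m) z)))
              - 2 * aA z * (μC C * ((M:ℝ)⁻¹ * (∑ m, A (C m) z)))
              + (aA z * aA z) * μC C := by
        intro C; ring
      rw [Finset.sum_congr rfl (fun C _ => expand C), Finset.sum_add_distrib,
        Finset.sum_sub_distrib, hSA2, ← Finset.mul_sum, hSA1, ← Finset.mul_sum, hμC1]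
      have : ((M:ℝ)⁻¹)^2 * ((M:ℝ) * E2 + ((M:ℝ)^2 - M) * (aA z * aA z))
          - 2 * aA z * aA z + aA z * aA z * 1 = E2 / M - (aA z * aA z) / M := by
        field_simp
        ring
      rw [this]
      have h2 : 0 ≤ (aA z * aA z) / M := div_nonneg (mul_self_nonneg _) hMr.le
      linarith
    -- Cauchy-Schwarz for term 1
    have hterm1 : (∑ C, μC C * |((M:ℝ)⁻¹ * (∑ m, A (C m) z)) - aA z|)
        ≤ Real.sqrt (T / M) * a z := by
      have h1 := avg_abs_le_sqrt_avg_sq μC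
        (fun C => ((M:ℝ)⁻¹ * (∑ m, A (C m) z)) - aA z) hμC0 hμC1
      have hE2T : E2 ≤ T * (a z * a z) := by
        have e3 : ∀ v : Fin n → W, μv v * (A v z * A v z) ≤ (T * a z) * (μv v * A v z) := by
          intro v
          have := mul_le_mul_of_nonneg_right (hAle v z) (mul_nonneg (hμv0 v) (hA0 v z))
          calc μv v * (A v z * A v z) = A v z * (μv v * A v z) := by ring
            _ ≤ (T * a z) * (μv v * A v z) := this
        calc E2 ≤ ∑ v, (T * a z) * (μv v * A v z) :=
              Finset.sum_le_sum (fun v _ => e3 v)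
          _ = (T * a z) * aA z := by rw [← Finset.mul_sum, haAdef]
          _ ≤ (T * a z) * a z := by
              exact mul_le_mul_of_nonneg_left (haAa z) (mul_nonneg hT0.le (ha0 z))
          _ = T * (a z * a z) := by ring
      have hq : (∑ C, μC C * (((M:ℝ)⁻¹ * (∑ m, A (C m) z)) - aA z)^2) ≤ T / M * (a z)^2 := by
        calc (∑ C, μC C * (((M:ℝ)⁻¹ * (∑ m, A (C m) z)) - aA z)^2) ≤ E2 / M := hvar
          _ ≤ (T * (a z * a z)) / M := by gcongr
          _ = T / M * (a z)^2 := by ring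
      calc (∑ C, μC C * |((M:ℝ)⁻¹ * (∑ m, A (C m) z)) - aA z|)
          ≤ Real.sqrt (∑ C, μC C * (((M:ℝ)⁻¹ * (∑ m, A (C m) z)) - aA z)^2) := h1
        _ ≤ Real.sqrt (T / M * (a z)^2) := Real.sqrt_le_sqrt hq
        _ = Real.sqrt (T / M) * a z := by
            rw [Real.sqrt_mul (by positivity) ((a z)^2), Real.sqrt_sq (ha0 z)]
    -- combine
    calc (∑ C, μC C * |(M:ℝ)⁻¹ * (∑ m, G (C m) z) - a z|)
        ≤ ∑ C, μC C * (|(M:ℝ)⁻¹ * (∑ m, A (C m) z) - aA z|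
            + ((M:ℝ)⁻¹ * (∑ m, B (C m) z) + aB z)) := by
          exact Finset.sum_le_sum (fun C _ =>
            mul_le_mul_of_nonneg_left (htri C) (hμC0 C))
      _ = (∑ C, μC C * |(M:ℝ)⁻¹ * (∑ m, A (C m) z) - aA z|)
            + ((∑ C, μC C * ((M:ℝ)⁻¹ * (∑ m, B (C m) z))) + (∑ C, μC C) * aB z) := by
          rw [Finset.sum_mul, ← Finset.sum_add_distrib, ← Finset.sum_add_distrib]
          exact Finset.sum_congr rfl (fun C _ => by ring)
      _ ≤ Real.sqrt (T / M) * a z + (aB z + 1 * aB z) := by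
          rw [hTerm2, hμC1]
          exact add_le_add hterm1 (le_refl _)
      _ = Real.sqrt (T / M) * a z + 2 * aB z := by ring
  
  -- tail (Chernoff) bound
  set D : X × Y → ℝ := fun p =>
    if 0 < π p then (π p) ^ (-lam) * ∑ w, pW w * (gX w p.1 * gY w p.2) ^ (1 + lam) else 0
    with hDdef
  have hD0 : ∀ p, 0 ≤ D p := by
    intro p; rw [hDdef]; dsimp only; split_ifs with h
    · exact mul_nonneg (Real.rpow_nonneg (hπ.1 p) _)
        (Finset.sum_nonneg (fun w _ => mul_nonneg (hpW.1 w)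
          (Real.rpow_nonneg (hg0 w p.1 p.2) _)))
    · exact le_refl 0
  have hDΛ : (∑ p, D p) ≤ Λ := by
    rw [hDdef]
    dsimp only
    rw [← Finset.sum_filter]
    exact hcher
  have hΛ0 : 0 ≤ Λ := le_trans (Finset.sum_nonneg fun p _ => hD0 p) hDΛ
  have hsingle : ∀ (w : W) (x : X) (y : Y), pW w * (gX w x * gY w y) ≤ π (x, y) := by
    intro w x y
    rw [← hmix x y]
    exact Finset.single_le_sum
      (fun w' _ => mul_nonneg (hpW.1 w') (hg0 w' x y)) (Finset.mem_univ w)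
  have htail : ∀ z, aB z ≤ T ^ (-lam) * ∏ i, D (z.1 i, z.2 i) := by
    intro z
    by_cases haz : 0 < a z
    · -- positive case
      have hπpos : ∀ i, 0 < π (z.1 i, z.2 i) := by
        intro i
        rcases eq_or_lt_of_le (hπ.1 (z.1 i, z.2 i)) with h | h
        · exfalso
          have : a z = 0 := by
            rw [hadef]
            exact Finset.prod_eq_zero (Finset.mem_univ i) h.symm
          rw [this] at haz; exact lt_irrefl 0 haz
        · exact h
      have hTa : 0 < T * a z := mul_pos hT0 haz
      have hperv : ∀ v, μv v * B v z ≤ (T * a z) ^ (-lam) * (μv v * G v z ^ (1 + lam)) := by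
        intro v
        rw [hBdef]; dsimp only; split_ifs with h
        · rw [mul_zero]
          exact mul_nonneg (Real.rpow_nonneg hTa.le _)
            (mul_nonneg (hμv0 v) (Real.rpow_nonneg (hG0 v z) _))
        · push_neg at h
          have hGpos : 0 < G v z := lt_trans hTa h
          have h1 : (1:ℝ) ≤ (G v z / (T * a z)) ^ lam :=
            Real.one_le_rpow ((one_le_div hTa).mpr h.le) hlam.le
          have h2 : (G v z / (T * a z)) ^ lam = G v z ^ lam * (T * a z) ^ (-lam) := by
            rw [Real.div_rpow (hG0 v z) hTa.le, Real.rpow_neg hTa.le, div_eq_mul_inv]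
          have h3 : G v z ^ (1 + lam) = G v z * G v z ^ lam := by
            rw [Real.rpow_add hGpos, Real.rpow_one]
          calc μv v * G v z = μv v * G v z * 1 := by ring
            _ ≤ μv v * G v z * ((G v z / (T * a z)) ^ lam) :=
                mul_le_mul_of_nonneg_left h1 (mul_nonneg (hμv0 v) (hG0 v z))
            _ = (T * a z) ^ (-lam) * (μv v * G v z ^ (1 + lam)) := by
                rw [h2, h3]; ring
      have hGpow : (∑ v, μv v * G v z ^ (1 + lam))
          = ∏ i, ∑ w, pW w * (gX w (z.1 i) * gY w (z.2 i)) ^ (1 + lam) := by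
        have e1 : ∀ v : Fin n → W, μv v * G v z ^ (1 + lam)
            = ∏ i, (fun (i : Fin n) (w : W) =>
                pW w * (gX w (z.1 i) * gY w (z.2 i)) ^ (1 + lam)) i (v i) := by
          intro v
          rw [hμvdef, hGdef]
          dsimp only
          rw [← Real.finset_prod_rpow Finset.univ _ (fun i _ => hg0 _ _ _) (1 + lam)]
          rw [← Finset.prod_mul_distrib]
        rw [Finset.sum_congr rfl (fun v _ => e1 v),
          sum_pi_prod (fun (i : Fin n) (w : W) =>
            pW w * (gX w (z.1 i) * gY w (z.2 i)) ^ (1 + lam))]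
      have hsum : aB z ≤ (T * a z) ^ (-lam) * (∑ v, μv v * G v z ^ (1 + lam)) := by
        rw [haBdef]
        dsimp only
        rw [Finset.mul_sum]
        exact Finset.sum_le_sum (fun v _ => hperv v)
      have hDfac : (T * a z) ^ (-lam) * (∑ v, μv v * G v z ^ (1 + lam))
          = T ^ (-lam) * ∏ i, D (z.1 i, z.2 i) := by
        rw [hGpow, Real.mul_rpow hT0.le (ha0 z), mul_assoc]
        congr 1
        have e2 : a z ^ (-lam) = ∏ i, π (z.1 i, z.2 i) ^ (-lam) := by
          rw [hadef]
          exact (Real.finset_prod_rpow Finset.univ _ (fun i _ => hπ.1 _) (-lam)).symm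
        rw [e2, ← Finset.prod_mul_distrib]
        refine Finset.prod_congr rfl (fun i _ => ?_)
        rw [hDdef]
        dsimp only
        rw [if_pos (hπpos i)]
      rw [← hDfac]
      exact hsum
    · -- a z = 0 : tail is zero
      have haz0 : a z = 0 := le_antisymm (not_lt.mp haz) (ha0 z)
      have hμG : ∀ v, μv v * G v z = 0 := by
        intro v
        have e1 : μv v * G v z = ∏ i, pW (v i) * (gX (v i) (z.1 i) * gY (v i) (z.2 i)) := by
          rw [hμvdef, hGdef]
          dsimp only
          rw [← Finset.prod_mul_distrib]
        have hle : μv v * G v z ≤ a z := by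
          rw [e1, hadef]
          exact Finset.prod_le_prod
            (fun i _ => mul_nonneg (hpW.1 _) (hg0 _ _ _))
            (fun i _ => hsingle _ _ _)
        have hge : 0 ≤ μv v * G v z := mul_nonneg (hμv0 v) (hG0 v z)
        rw [haz0] at hle
        exact le_antisymm hle hge
      have haBz : aB z = 0 := by
        rw [haBdef]
        dsimp only
        refine Finset.sum_eq_zero (fun v _ => ?_)
        rw [hBdef]
        dsimp only
        split_ifs with h
        · rw [mul_zero]
        · exact hμG v
      rw [haBz]
      exact mul_nonneg (Real.rpow_nonneg hT0.le _)
        (Finset.prod_nonneg (fun i _ => hD0 _))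
  have hsumtail : (∑ z, aB z) ≤ T ^ (-lam) * Λ ^ n := by
    calc ∑ z, aB z ≤ ∑ z, T ^ (-lam) * ∏ i, D (z.1 i, z.2 i) :=
          Finset.sum_le_sum (fun z _ => htail z)
      _ = T ^ (-lam) * ∑ z : (Fin n → X) × (Fin n → Y), ∏ i, D (z.1 i, z.2 i) :=
          (Finset.mul_sum _ _ _).symm
      _ = T ^ (-lam) * (∑ p, D p) ^ n := by rw [sum_pair_prod n D]
      _ ≤ T ^ (-lam) * Λ ^ n :=
          mul_le_mul_of_nonneg_left
            (pow_le_pow_left₀ (Finset.sum_nonneg fun p _ => hD0 p) hDΛ n)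
            (Real.rpow_nonneg hT0.le _)
  have hTlam : T ^ (-lam) = Real.exp (-(lam * t) * n) := by
    rw [hTdef, Real.rpow_def_of_pos (Real.exp_pos _), Real.log_exp]
    exact congrArg Real.exp (by ring)
  have hsa : (∑ z, a z) = 1 := by
    rw [hadef]
    unfold prodDist
    rw [sum_pair_prod n π, hπ.2, one_pow]
  -- expectation of the TV distance
  have Etv : (∑ C, μC C * tvDist ((code C).induced) (prodDist π n))
      ≤ Real.sqrt (T / M) / 2 + Real.exp (-(lam * t) * n) * Λ ^ n := by
    have e1 : ∀ C, tvDist ((code C).induced) (prodDist π n)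
        = (∑ z, |(M:ℝ)⁻¹ * (∑ m, G (C m) z) - a z|) / 2 := by
      intro C
      unfold tvDist
      congr 1
      exact Finset.sum_congr rfl (fun z _ => by rw [hind C z])
    calc (∑ C, μC C * tvDist ((code C).induced) (prodDist π n))
        = ∑ C, (∑ z, μC C * |(M:ℝ)⁻¹ * (∑ m, G (C m) z) - a z|) / 2 := by
          refine Finset.sum_congr rfl (fun C _ => ?_)
          rw [e1 C, ← mul_div_assoc, Finset.mul_sum]
      _ = (∑ z, ∑ C, μC C * |(M:ℝ)⁻¹ * (∑ m, G (C m) z) - a z|) / 2 := by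
          rw [← Finset.sum_div]
          rw [Finset.sum_comm]
      _ ≤ (∑ z, (Real.sqrt (T / M) * a z + 2 * aB z)) / 2 := by
          gcongr with z hz
          exact stepB z
      _ = (Real.sqrt (T / M) * 1 + 2 * ∑ z, aB z) / 2 := by
          rw [Finset.sum_add_distrib, ← Finset.mul_sum, ← Finset.mul_sum, hsa]
      _ ≤ (Real.sqrt (T / M) * 1 + 2 * (T ^ (-lam) * Λ ^ n)) / 2 := by
          gcongr
      _ = Real.sqrt (T / M) / 2 + Real.exp (-(lam * t) * n) * Λ ^ n := by
          rw [hTlam]; ring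
  obtain ⟨C0, hC0⟩ := exists_le_average μC
    (fun C => tvDist ((code C).induced) (prodDist π n)) hμC0 hμC1
  exact ⟨code C0, le_trans hC0 Etv⟩

/-- Exponential achievability under total variation: for every rate `R > C_Wyner(X;Y)`
there exist a sequence of rate-`R` synthesis codes and a constant `c > 0` such that
the TV distance between the synthesized and target distributions is at most `e^{−cn}`
for all sufficiently large `n`. -/
theorem tv_exponential_achievability
    {X Y : Type*} [Fintype X] [Fintype Y] (π : X × Y → ℝ) (hπ : IsPMF π)
    (R : ℝ) (hR : CWyner π < R) :
    ∃ (c : (n : ℕ) → SynthCode X Y (numMsgs R n) n) (γ : ℝ), 0 < γ ∧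
      ∀ᶠ n : ℕ in atTop,
        tvDist ((c n).induced) (prodDist π n) ≤ Real.exp (-(γ * n)) := by
  classical
  -- Step 1: the defining set of `CWyner` is nonempty
  have hSne : { r | ∃ P : X × Y × Fin (Fintype.card X * Fintype.card Y) → ℝ,
      IsPMF P ∧ (∀ x y, (∑ w, P (x, y, w)) = π (x, y)) ∧ IsMarkovXWY P ∧
        r = mutualInfoW P }.Nonempty := by
    set e : X × Y ≃ Fin (Fintype.card X * Fintype.card Y) :=
      (Fintype.equivFin (X × Y)).trans (finCongr (Fintype.card_prod X Y)) with hedef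
    set P0 : X × Y × Fin (Fintype.card X * Fintype.card Y) → ℝ :=
      fun z => if e (z.1, z.2.1) = z.2.2 then π (z.1, z.2.1) else 0 with hP0def
    have hsumw : ∀ x y, (∑ w, P0 (x, y, w)) = π (x, y) := by
      intro x y
      rw [hP0def]
      dsimp only
      rw [Finset.sum_ite_eq Finset.univ (e (x, y)) (fun _ => π (x, y)),
        if_pos (Finset.mem_univ _)]
    have hpmf : IsPMF P0 := by
      constructor
      · intro z; rw [hP0def]; dsimp only; split_ifs
        exacts [hπ.1 _, le_refl 0]
      · rw [Fintype.sum_prod_type]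
        have : ∀ x : X, (∑ q : Y × Fin (Fintype.card X * Fintype.card Y), P0 (x, q)) =
            ∑ y, π (x, y) := by
          intro x
          rw [Fintype.sum_prod_type]
          exact Finset.sum_congr rfl (fun y _ => hsumw x y)
        rw [Finset.sum_congr rfl (fun x _ => this x), ← Fintype.sum_prod_type]
        exact hπ.2
    have hcond : ∀ (x : X) (y : Y) (w : Fin (Fintype.card X * Fintype.card Y)),
        (e (x, y) = w) ↔ ((x, y) = e.symm w) := fun x y w => Equiv.apply_eq_iff_eq_symm_apply e
    have hsum1 : ∀ (x : X) (w : Fin (Fintype.card X * Fintype.card Y)),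
        (∑ y', P0 (x, y', w)) = if x = (e.symm w).1 then π (e.symm w) else 0 := by
      intro x w
      have e2 : ∀ y', P0 (x, y', w)
          = if y' = (e.symm w).2 then (if x = (e.symm w).1 then π (e.symm w) else 0) else 0 := by
        intro y'
        rw [hP0def]
        dsimp only
        by_cases h1 : e (x, y') = w
        · have h2 : (x, y') = e.symm w := (hcond x y' w).mp h1
          have hx : x = (e.symm w).1 := congrArg Prod.fst h2
          have hy : y' = (e.symm w).2 := congrArg Prod.snd h2
          rw [if_pos h1, if_pos hy, if_pos hx, h2]
        · rw [if_neg h1]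
          by_cases hy : y' = (e.symm w).2
          · by_cases hx : x = (e.symm w).1
            · exfalso; exact h1 ((hcond x y' w).mpr (Prod.ext hx hy))
            · rw [if_pos hy, if_neg hx]
          · rw [if_neg hy]
      rw [Finset.sum_congr rfl (fun y' _ => e2 y'),
        Finset.sum_ite_eq' Finset.univ ((e.symm w).2)
          (fun _ => if x = (e.symm w).1 then π (e.symm w) else 0),
        if_pos (Finset.mem_univ _)]
    have hsum2 : ∀ (y : Y) (w : Fin (Fintype.card X * Fintype.card Y)),
        (∑ x', P0 (x', y, w)) = if y = (e.symm w).2 then π (e.symm w) else 0 := by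
      intro y w
      have e2 : ∀ x', P0 (x', y, w)
          = if x' = (e.symm w).1 then (if y = (e.symm w).2 then π (e.symm w) else 0) else 0 := by
        intro x'
        rw [hP0def]
        dsimp only
        by_cases h1 : e (x', y) = w
        · have h2 : (x', y) = e.symm w := (hcond x' y w).mp h1
          have hx : x' = (e.symm w).1 := congrArg Prod.fst h2
          have hy : y = (e.symm w).2 := congrArg Prod.snd h2
          rw [if_pos h1, if_pos hx, if_pos hy, h2]
        · rw [if_neg h1]
          by_cases hx : x' = (e.symm w).1
          · by_cases hy : y = (e.symm w).2
            · exfalso; exact h1 ((hcond x' y w).mpr (Prod.ext hx hy))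
            · rw [if_pos hx, if_neg hy]
          · rw [if_neg hx]
      rw [Finset.sum_congr rfl (fun x' _ => e2 x'),
        Finset.sum_ite_eq' Finset.univ ((e.symm w).1)
          (fun _ => if y = (e.symm w).2 then π (e.symm w) else 0),
        if_pos (Finset.mem_univ _)]
    have hsumr : ∀ w : Fin (Fintype.card X * Fintype.card Y),
        (∑ p : X × Y, P0 (p.1, p.2, w)) = π (e.symm w) := by
      intro w
      have e2 : ∀ p : X × Y, P0 (p.1, p.2, w) = if p = e.symm w then π p else 0 := by
        intro p
        rw [hP0def]
        dsimp only
        by_cases h1 : e (p.1, p.2) = w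
        · have h2 : (p.1, p.2) = e.symm w := (hcond p.1 p.2 w).mp h1
          rw [if_pos h1, if_pos (by rw [← h2])]
        · rw [if_neg h1, if_neg (by intro h; exact h1 ((hcond p.1 p.2 w).mpr (by rw [← h])))]
      rw [Finset.sum_congr rfl (fun p _ => e2 p),
        Finset.sum_ite_eq' Finset.univ (e.symm w) (fun p => π p), if_pos (Finset.mem_univ _)]
    have hmark : IsMarkovXWY P0 := by
      intro x y w
      rw [hsumr w, hsum1 x w, hsum2 y w, hP0def]
      dsimp only
      by_cases h1 : e (x, y) = w
      · have h2 : (x, y) = e.symm w := (hcond x y w).mp h1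
        have hx : x = (e.symm w).1 := congrArg Prod.fst h2
        have hy : y = (e.symm w).2 := congrArg Prod.snd h2
        rw [if_pos h1, if_pos hx, if_pos hy, h2]
      · rw [if_neg h1]
        by_cases hx : x = (e.symm w).1
        · by_cases hy : y = (e.symm w).2
          · exfalso; exact h1 ((hcond x y w).mpr (Prod.ext hx hy))
          · rw [if_neg hy, zero_mul, mul_zero]
        · rw [if_neg hx, zero_mul, zero_mul]
    exact ⟨mutualInfoW P0, P0, hpmf, hsumw, hmark, rfl⟩
  -- Step 2: extract a distribution with mutual information below R
  unfold CWyner at hR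
  obtain ⟨r, hrmem, hrR⟩ := exists_lt_of_sInf_lt' hSne hR
  obtain ⟨P, hPpmf, hPmarg, hPmark, hrI⟩ := hrmem
  rw [hrI] at hrR
  have hP0 : ∀ z, 0 ≤ P z := hPpmf.1
  -- Step 3: conditional distributions
  set pW : Fin (Fintype.card X * Fintype.card Y) → ℝ :=
    fun w => ∑ p : X × Y, P (p.1, p.2, w) with hpWdef
  have hpW0 : ∀ w, 0 ≤ pW w := fun w => Finset.sum_nonneg (fun p _ => hP0 _)
  have hPlepW : ∀ x y w, P (x, y, w) ≤ pW w := by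
    intro x y w
    rw [hpWdef]
    exact Finset.single_le_sum (f := fun p : X × Y => P (p.1, p.2, w))
      (fun p _ => hP0 _) (Finset.mem_univ (x, y))
  have hpWsum : (∑ w, pW w) = 1 := by
    rw [hpWdef, Finset.sum_comm]
    have : ∀ p : X × Y, (∑ w, P (p.1, p.2, w)) = π p := by
      intro p; rw [hPmarg p.1 p.2]
    rw [Finset.sum_congr rfl (fun p _ => this p)]
    exact hπ.2
  have hpWpmf : IsPMF pW := ⟨hpW0, hpWsum⟩
  have hπX1 : (∑ x, ∑ y, π (x, y)) = 1 := by
    rw [← Fintype.sum_prod_type]; exact hπ.2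
  have hπY1 : (∑ y, ∑ x, π (x, y)) = 1 := by rw [Finset.sum_comm]; exact hπX1
  have hpWalt : ∀ w, (∑ x, ∑ y, P (x, y, w)) = pW w := fun w =>
    (Fintype.sum_prod_type (fun p : X × Y => P (p.1, p.2, w))).symm
  have hpWalt2 : ∀ w, (∑ y, ∑ x, P (x, y, w)) = pW w := by
    intro w; rw [Finset.sum_comm]; exact hpWalt w
  set gX : Fin (Fintype.card X * Fintype.card Y) → X → ℝ :=
    fun w x => if 0 < pW w then (∑ y, P (x, y, w)) / pW w else ∑ y, π (x, y) with hgXdef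
  set gY : Fin (Fintype.card X * Fintype.card Y) → Y → ℝ :=
    fun w y => if 0 < pW w then (∑ x, P (x, y, w)) / pW w else ∑ x, π (x, y) with hgYdef
  have hgXpmf : ∀ w, IsPMF (gX w) := by
    intro w
    constructor
    · intro x; rw [hgXdef]; dsimp only; split_ifs with h
      · exact div_nonneg (Finset.sum_nonneg (fun y _ => hP0 _)) (hpW0 w)
      · exact Finset.sum_nonneg (fun y _ => hπ.1 _)
    · rw [hgXdef]; dsimp only
      by_cases h : 0 < pW w
      · rw [Finset.sum_congr rfl (fun x _ => if_pos h), ← Finset.sum_div, hpWalt w,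
          div_self (ne_of_gt h)]
      · rw [Finset.sum_congr rfl (fun x _ => if_neg h)]
        exact hπX1
  have hgYpmf : ∀ w, IsPMF (gY w) := by
    intro w
    constructor
    · intro y; rw [hgYdef]; dsimp only; split_ifs with h
      · exact div_nonneg (Finset.sum_nonneg (fun x _ => hP0 _)) (hpW0 w)
      · exact Finset.sum_nonneg (fun x _ => hπ.1 _)
    · rw [hgYdef]; dsimp only
      by_cases h : 0 < pW w
      · rw [Finset.sum_congr rfl (fun y _ => if_pos h), ← Finset.sum_div, hpWalt2 w,
          div_self (ne_of_gt h)]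
      · rw [Finset.sum_congr rfl (fun y _ => if_neg h)]
        exact hπY1
  have hgprod : ∀ w x y, 0 < pW w → gX w x * gY w y = P (x, y, w) / pW w := by
    intro w x y hw
    rw [hgXdef, hgYdef]
    dsimp only
    rw [if_pos hw, if_pos hw]
    have hmk : P (x, y, w) * pW w = (∑ y', P (x, y', w)) * (∑ x', P (x', y, w)) :=
      hPmark x y w
    rw [div_mul_div_comm, ← hmk, mul_comm (P (x, y, w)) (pW w),
      mul_div_mul_left _ _ (ne_of_gt hw)]
  have hPzero : ∀ w, ¬ 0 < pW w → ∀ x y, P (x, y, w) = 0 := by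
    intro w hw x y
    have h0 : pW w = 0 := le_antisymm (not_lt.mp hw) (hpW0 w)
    exact le_antisymm (by rw [← h0]; exact hPlepW x y w) (hP0 _)
  have hmix : ∀ x y, (∑ w, pW w * (gX w x * gY w y)) = π (x, y) := by
    intro x y
    have e1 : ∀ w, pW w * (gX w x * gY w y) = P (x, y, w) := by
      intro w
      by_cases h : 0 < pW w
      · rw [hgprod w x y h, mul_div_cancel₀ _ (ne_of_gt h)]
      · have h0 : pW w = 0 := le_antisymm (not_lt.mp h) (hpW0 w)
        rw [h0, zero_mul, hPzero w h x y]
    rw [Finset.sum_congr rfl (fun w _ => e1 w)]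
    exact hPmarg x y
  -- Step 4: the cumulant-type function and its derivative at 0
  set I : ℝ := mutualInfoW P with hIdef
  set t : ℝ := (I + R) / 2 with htdef
  have hIt : I < t := by rw [htdef]; linarith
  have htR : t < R := by rw [htdef]; linarith
  set S0 : Finset (X × Y × Fin (Fintype.card X * Fintype.card Y)) :=
    Finset.univ.filter (fun z => 0 < P z) with hS0def
  set cf : X × Y × Fin (Fintype.card X * Fintype.card Y) → ℝ :=
    fun z => Real.log (P z / (π (z.1, z.2.1) * pW z.2.2)) with hcfdef
  set Λf : ℝ → ℝ := fun l => ∑ z ∈ S0, P z * Real.exp (l * cf z) with hΛfdef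
  have hS0sum : (∑ z ∈ S0, P z) = 1 := by
    rw [hS0def]
    rw [Finset.sum_filter_of_ne (fun z _ hz => lt_of_le_of_ne (hP0 z) (Ne.symm hz))]
    exact hPpmf.2
  have hΛf0 : Λf 0 = 1 := by
    rw [hΛfdef]
    dsimp only
    rw [Finset.sum_congr rfl (fun z _ => by rw [zero_mul, Real.exp_zero, mul_one])]
    exact hS0sum
  have hIsum : I = ∑ z ∈ S0, P z * cf z := by
    rw [hIdef]
    unfold mutualInfoW
    rw [← hS0def]
    refine Finset.sum_congr rfl (fun z hz => ?_)
    rw [hcfdef]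
    dsimp only
    rw [hPmarg z.1 z.2.1]
  have hderiv : HasDerivAt Λf I 0 := by
    rw [hIsum]
    have h1 : ∀ z ∈ S0, HasDerivAt (fun l => P z * Real.exp (l * cf z))
        (P z * (Real.exp ((0:ℝ) * cf z) * cf z)) 0 :=
      fun z _ => ((hasDerivAt_mul_const (cf z)).exp).const_mul (P z)
    have h2 := HasDerivAt.fun_sum h1
    have e1 : (∑ z ∈ S0, P z * (Real.exp ((0:ℝ) * cf z) * cf z)) = ∑ z ∈ S0, P z * cf z := by
      refine Finset.sum_congr rfl (fun z _ => ?_)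
      rw [zero_mul, Real.exp_zero, one_mul]
    rw [e1] at h2
    exact h2
  have hexpderiv : HasDerivAt (fun l => Real.exp (l * t)) t 0 := by
    have h0 : HasDerivAt (fun l : ℝ => l * t) t 0 := hasDerivAt_mul_const t
    have h1 := h0.exp
    simpa using h1
  have hΦderiv : HasDerivAt (fun l => Real.exp (l * t) - Λf l) (t - I) 0 :=
    hexpderiv.sub hderiv
  -- find a positive lam with Λf lam < exp (lam * t)
  obtain ⟨lam, hlam_slope, hlam_pos⟩ :
      ∃ lam, 0 < slope (fun l => Real.exp (l * t) - Λf l) 0 lam ∧ 0 < lam := by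
    have hslope := hasDerivAt_iff_tendsto_slope.mp hΦderiv
    have hmono : (nhdsWithin (0:ℝ) (Set.Ioi 0)) ≤ (nhdsWithin (0:ℝ) {(0:ℝ)}ᶜ) :=
      nhdsWithin_mono 0 (fun x hx => ne_of_gt hx)
    have h2 := hslope.mono_left hmono
    have h3 : ∀ᶠ l in nhdsWithin (0:ℝ) (Set.Ioi 0),
        0 < slope (fun l => Real.exp (l * t) - Λf l) 0 l :=
      h2.eventually (lt_mem_nhds (by linarith))
    have h4 : ∀ᶠ l in nhdsWithin (0:ℝ) (Set.Ioi 0), 0 < l :=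
      eventually_nhdsWithin_of_forall (fun x hx => hx)
    exact (h3.and h4).exists
  have hΦ0 : Real.exp ((0:ℝ) * t) - Λf 0 = 0 := by
    rw [zero_mul, Real.exp_zero, hΛf0, sub_self]
  have hΦpos : 0 < Real.exp (lam * t) - Λf lam := by
    have e1 : slope (fun l => Real.exp (l * t) - Λf l) 0 lam
        = (Real.exp (lam * t) - Λf lam) / lam := by
      rw [slope_def_field, hΦ0, sub_zero, sub_zero]
    rw [e1] at hlam_slope
    have := mul_pos hlam_slope hlam_pos
    rwa [div_mul_cancel₀ _ (ne_of_gt hlam_pos)] at this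
  set Λ : ℝ := Λf lam with hΛdef
  have hS0ne : S0.Nonempty := by
    by_contra h
    rw [Finset.not_nonempty_iff_eq_empty] at h
    rw [h, Finset.sum_empty] at hS0sum
    norm_num at hS0sum
  have hΛpos : 0 < Λ := by
    rw [hΛdef, hΛfdef]
    refine Finset.sum_pos (fun z hz => ?_) hS0ne
    rw [hS0def] at hz
    exact mul_pos (Finset.mem_filter.mp hz).2 (Real.exp_pos _)
  have hΛlt : Λ < Real.exp (lam * t) := by rw [hΛdef]; linarith
  have hdelta : 0 < lam * t - Real.log Λ := by
    have := Real.log_lt_log hΛpos hΛlt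
    rw [Real.log_exp] at this
    linarith
  -- Step 5: the Chernoff hypothesis
  have hcher : ∑ p ∈ Finset.univ.filter (fun p : X × Y => 0 < π p),
      (π p) ^ (-lam) * ∑ w, pW w * (gX w p.1 * gY w p.2) ^ (1 + lam) ≤ Λ := by
    have hpoint : ∀ (x : X) (y : Y) (w : Fin (Fintype.card X * Fintype.card Y)),
        (if 0 < π (x, y) then
          (π (x, y)) ^ (-lam) * (pW w * (gX w x * gY w y) ^ (1 + lam)) else 0)
        = (if 0 < P (x, y, w) then
            P (x, y, w) * Real.exp (lam * Real.log (P (x, y, w) / (π (x, y) * pW w)))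
          else 0) := by
      intro x y w
      by_cases hP : 0 < P (x, y, w)
      · have hπp : 0 < π (x, y) := by
          have h1 : P (x, y, w) ≤ π (x, y) := by
            rw [← hPmarg x y]
            exact Finset.single_le_sum (f := fun w' => P (x, y, w'))
              (fun w' _ => hP0 _) (Finset.mem_univ w)
          linarith
        have hpWp : 0 < pW w := lt_of_lt_of_le hP (hPlepW x y w)
        have hg : gX w x * gY w y = P (x, y, w) / pW w := hgprod w x y hpWp
        have hr : 0 < P (x, y, w) / (π (x, y) * pW w) := div_pos hP (mul_pos hπp hpWp)
        rw [if_pos hπp, if_pos hP, hg]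
        rw [show Real.exp (lam * Real.log (P (x, y, w) / (π (x, y) * pW w)))
            = (P (x, y, w) / (π (x, y) * pW w)) ^ lam from by
          rw [Real.rpow_def_of_pos hr, mul_comm]]
        have e1 : (P (x, y, w) / pW w) ^ (1 + lam)
            = (P (x, y, w) / pW w) * (P (x, y, w) / pW w) ^ lam := by
          rw [Real.rpow_add (div_pos hP hpWp), Real.rpow_one]
        have e2 : (P (x, y, w) / (π (x, y) * pW w)) ^ lam
            = (P (x, y, w) / pW w) ^ lam * (π (x, y)) ^ (-lam) := by
          have hsw : P (x, y, w) / (π (x, y) * pW w) = (P (x, y, w) / pW w) / π (x, y) := by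
            rw [div_div, mul_comm (π (x, y)) (pW w)]
          rw [hsw, Real.div_rpow (div_nonneg hP.le hpWp.le) hπp.le, Real.rpow_neg hπp.le,
            div_eq_mul_inv]
        calc (π (x, y)) ^ (-lam) * (pW w * (P (x, y, w) / pW w) ^ (1 + lam))
            = (π (x, y)) ^ (-lam)
                * (pW w * (P (x, y, w) / pW w * (P (x, y, w) / pW w) ^ lam)) := by rw [e1]
          _ = (π (x, y)) ^ (-lam)
                * ((pW w * (P (x, y, w) / pW w)) * (P (x, y, w) / pW w) ^ lam) := by ring
          _ = (π (x, y)) ^ (-lam) * (P (x, y, w) * (P (x, y, w) / pW w) ^ lam) := by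
              rw [mul_div_cancel₀ _ (ne_of_gt hpWp)]
          _ = P (x, y, w) * ((P (x, y, w) / pW w) ^ lam * (π (x, y)) ^ (-lam)) := by ring
          _ = P (x, y, w) * (P (x, y, w) / (π (x, y) * pW w)) ^ lam := by rw [e2]
      · rw [if_neg hP]
        by_cases hπp : 0 < π (x, y)
        · rw [if_pos hπp]
          by_cases hpWp : 0 < pW w
          · have hg : gX w x * gY w y = P (x, y, w) / pW w := hgprod w x y hpWp
            have hP0' : P (x, y, w) = 0 := le_antisymm (not_lt.mp hP) (hP0 _)
            rw [hg, hP0', zero_div, Real.zero_rpow (by positivity), mul_zero, mul_zero]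
          · have h0 : pW w = 0 := le_antisymm (not_lt.mp hpWp) (hpW0 w)
            rw [h0, zero_mul, mul_zero]
        · rw [if_neg hπp]
      -- end hpoint
    have lhs_eq : (∑ p ∈ Finset.univ.filter (fun p : X × Y => 0 < π p),
        (π p) ^ (-lam) * ∑ w, pW w * (gX w p.1 * gY w p.2) ^ (1 + lam))
        = ∑ x, ∑ y, ∑ w, (if 0 < π (x, y) then
            (π (x, y)) ^ (-lam) * (pW w * (gX w x * gY w y) ^ (1 + lam)) else 0) := by
      rw [Finset.sum_filter]
      rw [Fintype.sum_prod_type]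
      refine Finset.sum_congr rfl (fun x _ => Finset.sum_congr rfl (fun y _ => ?_))
      by_cases h : 0 < π (x, y)
      · rw [if_pos h, Finset.mul_sum]
        exact Finset.sum_congr rfl (fun w _ => by rw [if_pos h])
      · rw [if_neg h]
        exact (Finset.sum_eq_zero (fun w _ => if_neg h)).symm
    have rhs_eq : Λ = ∑ x, ∑ y, ∑ w, (if 0 < P (x, y, w) then
        P (x, y, w) * Real.exp (lam * Real.log (P (x, y, w) / (π (x, y) * pW w)))
        else 0) := by
      rw [hΛdef, hΛfdef]
      dsimp only
      rw [hS0def, Finset.sum_filter, Fintype.sum_prod_type]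
      refine Finset.sum_congr rfl (fun x _ => ?_)
      rw [Fintype.sum_prod_type]
    rw [lhs_eq, rhs_eq]
    refine le_of_eq ?_
    exact Finset.sum_congr rfl (fun x _ => Finset.sum_congr rfl (fun y _ =>
      Finset.sum_congr rfl (fun w _ => hpoint x y w)))
  -- Step 6: apply the soft covering lemma for every n
  have hcode : ∀ n : ℕ, ∃ code : SynthCode X Y (numMsgs R n) n,
      tvDist code.induced (prodDist π n)
        ≤ Real.sqrt (Real.exp (n * t) / (numMsgs R n)) / 2
          + Real.exp (-(lam * t) * n) * Λ ^ n := by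
    intro n
    refine soft_covering π hπ pW gX gY hpWpmf hgXpmf hgYpmf hmix lam t Λ hlam_pos hcher
      (numMsgs R n) n ?_
    unfold numMsgs
    exact Nat.ceil_pos.mpr (Real.exp_pos _)
  -- Step 7: pick the codes and the exponent
  set β : ℝ := (R - t) / 2 with hβdef
  set δ : ℝ := lam * t - Real.log Λ with hδdef
  set m0 : ℝ := min β δ with hm0def
  have hβpos : 0 < β := by rw [hβdef]; linarith
  have hm0pos : 0 < m0 := lt_min hβpos hdelta
  set γ : ℝ := m0 / 2 with hγdef
  have hγpos : 0 < γ := by rw [hγdef]; linarith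
  refine ⟨fun n => (hcode n).choose, γ, hγpos, ?_⟩
  rw [eventually_atTop]
  refine ⟨⌈Real.log 2 / γ⌉₊ + 1, fun n hn => ?_⟩
  have hbound := (hcode n).choose_spec
  refine le_trans hbound ?_
  have hn0 : (0:ℝ) ≤ (n:ℝ) := Nat.cast_nonneg n
  -- bound the first term
  have hM1 : Real.exp (n * R) ≤ (numMsgs R n : ℝ) := by
    unfold numMsgs
    exact Nat.le_ceil _
  have hterm1 : Real.sqrt (Real.exp (n * t) / (numMsgs R n)) / 2
      ≤ Real.exp (-(β * n)) / 2 := by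
    have h1 : Real.exp (n * t) / (numMsgs R n : ℝ) ≤ Real.exp (n * t) / Real.exp (n * R) :=
      div_le_div_of_nonneg_left (Real.exp_pos _).le (Real.exp_pos _) hM1
    have h2 : Real.exp (n * t) / Real.exp (n * R) = Real.exp (n * t - n * R) :=
      (Real.exp_sub _ _).symm
    have h3 : Real.exp (n * t - n * R) = (Real.exp (-(β * n)))^2 := by
      rw [← Real.exp_nat_mul]
      · exact congrArg Real.exp (by rw [hβdef]; push_cast; ring)
    have h4 : Real.sqrt (Real.exp (n * t) / (numMsgs R n)) ≤ Real.exp (-(β * n)) := by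
      calc Real.sqrt (Real.exp (n * t) / (numMsgs R n))
          ≤ Real.sqrt (Real.exp (n * t - n * R)) := by
            rw [← h2]; exact Real.sqrt_le_sqrt h1
        _ = Real.exp (-(β * n)) := by rw [h3, Real.sqrt_sq (Real.exp_pos _).le]
    linarith
  -- bound the second term
  have hterm2 : Real.exp (-(lam * t) * n) * Λ ^ n = Real.exp (-(δ * n)) := by
    rw [← Real.exp_log hΛpos, ← Real.exp_nat_mul, ← Real.exp_add]
    exact congrArg Real.exp (by rw [hδdef]; ring)
  -- combine
  have hγγ : γ + γ = m0 := by rw [hγdef]; ring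
  have hβm : -(β * n) ≤ -(γ * n) - γ * n := by
    have h1 : m0 ≤ β := min_le_left _ _
    have h2 : m0 * n ≤ β * n := mul_le_mul_of_nonneg_right h1 hn0
    have h3 : (γ + γ) * n = m0 * n := by rw [hγγ]
    linarith [h2, h3]
  have hδm : -(δ * n) ≤ -(γ * n) - γ * n := by
    have h1 : m0 ≤ δ := min_le_right _ _
    have h2 : m0 * n ≤ δ * n := mul_le_mul_of_nonneg_right h1 hn0
    have h3 : (γ + γ) * n = m0 * n := by rw [hγγ]
    linarith [h2, h3]
  have hlog2 : Real.log 2 ≤ γ * n := by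
    have h0 : ⌈Real.log 2 / γ⌉₊ ≤ n := le_trans (Nat.le_succ _) hn
    have h1 : (⌈Real.log 2 / γ⌉₊ : ℝ) ≤ (n : ℝ) := Nat.cast_le.mpr h0
    have h2 : Real.log 2 / γ ≤ (n : ℝ) := le_trans (Nat.le_ceil _) h1
    calc Real.log 2 = (Real.log 2 / γ) * γ := by
          rw [div_mul_cancel₀ _ (ne_of_gt hγpos)]
      _ ≤ (n : ℝ) * γ := mul_le_mul_of_nonneg_right h2 hγpos.le
      _ = γ * n := by ring
  have hsmall : Real.exp (-(γ * n)) ≤ 1 / 2 := by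
    rw [Real.exp_neg]
    rw [show (1:ℝ)/2 = ((2:ℝ))⁻¹ from by norm_num]
    have h2 : (2:ℝ) ≤ Real.exp (γ * n) := by
      calc (2:ℝ) = Real.exp (Real.log 2) := (Real.exp_log (by norm_num)).symm
        _ ≤ Real.exp (γ * n) := Real.exp_le_exp.mpr hlog2
    exact inv_anti₀ (by norm_num) h2
  have hepos : 0 < Real.exp (-(γ * n)) := Real.exp_pos _
  calc Real.sqrt (Real.exp (n * t) / (numMsgs R n)) / 2 + Real.exp (-(lam * t) * n) * Λ ^ n
      ≤ Real.exp (-(β * n)) / 2 + Real.exp (-(δ * n)) := by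
        rw [hterm2]; exact add_le_add hterm1 le_rfl
    _ ≤ Real.exp (-(γ * n) - γ * n) / 2 + Real.exp (-(γ * n) - γ * n) := by
        have e1 : Real.exp (-(β * n)) ≤ Real.exp (-(γ * n) - γ * n) :=
          Real.exp_le_exp.mpr hβm
        have e2 : Real.exp (-(δ * n)) ≤ Real.exp (-(γ * n) - γ * n) :=
          Real.exp_le_exp.mpr hδm
        linarith
    _ = (3 / 2) * (Real.exp (-(γ * n)) * Real.exp (-(γ * n))) := by
        rw [show -(γ * (n:ℝ)) - γ * n = -(γ * n) + -(γ * n) from by ring, Real.exp_add]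
        ring
    _ ≤ (3 / 2) * (Real.exp (-(γ * n)) * (1 / 2)) := by
        gcongr
    _ ≤ Real.exp (-(γ * n)) := by linarith
end
end

section
/- Positivity of the strong converse exponent: if R < C_Wyner(X;Y), then F(R) > 0, where F(R) is the strong converse exponent defined below. -/
open Filter

noncomputable section

/-- Marginal `Q_U` of a distribution on `X × Y × U`. -/
def margU {X Y U : Type*} [Fintype X] [Fintype Y] [Fintype U] (Q : X × Y × U → ℝ) (u : U) : ℝ :=
  ∑ p : X × Y, Q (p.1, p.2, u)

/-- Marginal `Q_{XU}` of a distribution on `X × Y × U`. -/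
def margXU {X Y U : Type*} [Fintype X] [Fintype Y] [Fintype U] (Q : X × Y × U → ℝ)
    (x : X) (u : U) : ℝ := ∑ y, Q (x, y, u)

/-- Marginal `Q_{YU}` of a distribution on `X × Y × U`. -/
def margYU {X Y U : Type*} [Fintype X] [Fintype Y] [Fintype U] (Q : X × Y × U → ℝ)
    (y : Y) (u : U) : ℝ := ∑ x, Q (x, y, u)

/-- Marginal `Q_{XY}` of a distribution on `X × Y × U`. -/
def margXY {X Y U : Type*} [Fintype X] [Fintype Y] [Fintype U] (Q : X × Y × U → ℝ)
    (x : X) (y : Y) : ℝ := ∑ u, Q (x, y, u)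

/-- The set `𝒬` of distributions `Q_{XYU}` on `X × Y × U` (with `|U| = |X||Y|`)
whose `X × Y` marginal is supported inside `supp π`. -/
def QClass {X Y : Type*} [Fintype X] [Fintype Y] (π : X × Y → ℝ) :
    Set (X × Y × Fin (Fintype.card X * Fintype.card Y) → ℝ) :=
  { Q | IsPMF Q ∧ ∀ x y, 0 < margXY Q x y → 0 < π (x, y) }

/-- The linear combination of likelihood ratios `ω^{(α)}_{Q_{XYU}}(x,y|u)`:
`ᾱ ( log (Q_{XY}/π) + log (Q_{XY|U}/(Q_{X|U}Q_{Y|U})) ) + α log (Q_{XY|U}/π)`. -/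
def omegaFn {X Y U : Type*} [Fintype X] [Fintype Y] [Fintype U] (π : X × Y → ℝ) (α : ℝ)
    (Q : X × Y × U → ℝ) (z : X × Y × U) : ℝ :=
  (1 - α) * (Real.log (margXY Q z.1 z.2.1 / π (z.1, z.2.1)) +
      Real.log (Q z * margU Q z.2.2 / (margXU Q z.1 z.2.2 * margYU Q z.2.1 z.2.2))) +
    α * Real.log (Q z / (margU Q z.2.2 * π (z.1, z.2.1)))

/-- The negative cumulant generating function `Ω^{(α,θ)}(Q_{XYU})`. -/
def OmegaQ {X Y U : Type*} [Fintype X] [Fintype Y] [Fintype U] (π : X × Y → ℝ) (α θ : ℝ)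
    (Q : X × Y × U → ℝ) : ℝ :=
  -Real.log (∑ z ∈ Finset.univ.filter (fun z : X × Y × U => 0 < Q z),
    Q z * Real.exp (-(θ * omegaFn π α Q z)))

/-- The minimized negative cumulant generating function `Ω^{(α,θ)}`. -/
def OmegaMin {X Y : Type*} [Fintype X] [Fintype Y] (π : X × Y → ℝ) (α θ : ℝ) : ℝ :=
  sInf { r | ∃ Q ∈ QClass π, r = OmegaQ π α θ Q }

/-- The exponent `F^{(α,θ)}(R) = (Ω^{(α,θ)} − θαR)/(1 + (5−3α)θ)`. -/
def Fat {X Y : Type*} [Fintype X] [Fintype Y] (π : X × Y → ℝ) (α θ R : ℝ) : ℝ :=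
  (OmegaMin π α θ - θ * α * R) / (1 + (5 - 3 * α) * θ)

/-- The strong converse exponent `F(R) = sup_{(α,θ) ∈ [0,1]×[0,∞)} F^{(α,θ)}(R)`. -/
def Fexp {X Y : Type*} [Fintype X] [Fintype Y] (π : X × Y → ℝ) (R : ℝ) : ℝ :=
  sSup { r | ∃ α ∈ Set.Icc (0 : ℝ) 1, ∃ θ ∈ Set.Ici (0 : ℝ), r = Fat π α θ R }

section
open Filter Finset intervalIntegral




lemma term_nonneg {a b : ℝ} (ha : 0 ≤ a) (hab : 0 < a → 0 < b) :
    0 ≤ a * (b / a - 1) - a * Real.log (b / a) := by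
  rcases eq_or_lt_of_le ha with h | h
  · simp [← h]
  · have hb := hab h
    have hx : 0 < b / a := div_pos hb h
    have := Real.log_le_sub_one_of_pos hx
    nlinarith

lemma sum_term_eq {ι : Type*} [Fintype ι] (a b : ι → ℝ)
    (ha : ∀ i, 0 ≤ a i) :
    ∑ i, (a i * (b i / a i - 1) - a i * Real.log (b i / a i))
      = (∑ i ∈ univ.filter (fun i => 0 < a i), b i) - (∑ i, a i)
        + ∑ i, a i * Real.log (a i / b i) := by
  have hcond : ∀ i ∈ (univ : Finset ι), a i * (b i / a i - 1) ≠ 0 → 0 < a i := by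
    intro i _ hne
    rcases eq_or_lt_of_le (ha i) with h | h
    · exact absurd (by simp [← h]) hne
    · exact h
  have hconda : ∀ i ∈ (univ : Finset ι), a i ≠ 0 → 0 < a i := by
    intro i _ hne
    exact lt_of_le_of_ne (ha i) (Ne.symm hne)
  rw [Finset.sum_sub_distrib]
  have h1 : ∑ i, a i * (b i / a i - 1)
      = (∑ i ∈ univ.filter (fun i => 0 < a i), b i) - ∑ i, a i := by
    rw [← Finset.sum_filter_of_ne hcond]
    have e1 : ∑ i ∈ univ.filter (fun i => 0 < a i), a i * (b i / a i - 1)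
        = ∑ i ∈ univ.filter (fun i => 0 < a i), (b i - a i) := by
      apply Finset.sum_congr rfl
      intro i hi
      have h : 0 < a i := by simpa using (Finset.mem_filter.mp hi).2
      field_simp
    rw [e1, Finset.sum_sub_distrib, Finset.sum_filter_of_ne hconda]
  have h2 : ∑ i, a i * Real.log (b i / a i) = -∑ i, a i * Real.log (a i / b i) := by
    rw [← Finset.sum_neg_distrib]
    apply Finset.sum_congr rfl
    intro i _
    rcases eq_or_lt_of_le (ha i) with h | h
    · simp [← h]
    · have : b i / a i = (a i / b i)⁻¹ := by rw [inv_div]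
      rw [this, Real.log_inv]
      ring
  rw [h1, h2]
  ring

/-- Gibbs-type nonnegativity. -/
lemma gibbs_nonneg {ι : Type*} [Fintype ι] (a b : ι → ℝ)
    (ha : ∀ i, 0 ≤ a i) (hab : ∀ i, 0 < a i → 0 < b i)
    (hsum : ∑ i ∈ univ.filter (fun i => 0 < a i), b i ≤ ∑ i, a i) :
    0 ≤ ∑ i, a i * Real.log (a i / b i) := by
  have h0 : 0 ≤ ∑ i, (a i * (b i / a i - 1) - a i * Real.log (b i / a i)) :=
    Finset.sum_nonneg fun i _ => term_nonneg (ha i) (hab i)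
  rw [sum_term_eq a b ha] at h0
  linarith

/-- Gibbs-type equality condition. -/
lemma gibbs_eq {ι : Type*} [Fintype ι] (a b : ι → ℝ)
    (ha : ∀ i, 0 ≤ a i) (hb : ∀ i, 0 ≤ b i) (hab : ∀ i, 0 < a i → 0 < b i)
    (hsum : ∑ i, b i = ∑ i, a i)
    (hle : ∑ i, a i * Real.log (a i / b i) ≤ 0) :
    ∀ i, a i = b i := by
  have hfle : ∑ i ∈ univ.filter (fun i => 0 < a i), b i ≤ ∑ i, b i :=
    Finset.sum_le_sum_of_subset_of_nonneg (Finset.filter_subset _ _) (fun i _ _ => hb i)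
  have hnonneg := gibbs_nonneg a b ha hab (le_of_le_of_eq hfle hsum)
  have hzero : ∑ i, a i * Real.log (a i / b i) = 0 := le_antisymm hle hnonneg
  have key : ∑ i, (a i * (b i / a i - 1) - a i * Real.log (b i / a i)) = 0 := by
    have h1 := sum_term_eq a b ha
    rw [hzero] at h1
    have h2 : 0 ≤ ∑ i, (a i * (b i / a i - 1) - a i * Real.log (b i / a i)) :=
      Finset.sum_nonneg fun i _ => term_nonneg (ha i) (hab i)
    have h3 : ∑ i, (a i * (b i / a i - 1) - a i * Real.log (b i / a i)) ≤ 0 := by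
      rw [h1]; linarith
    linarith
  have hterm : ∀ i, a i * (b i / a i - 1) - a i * Real.log (b i / a i) = 0 := fun i =>
    (Finset.sum_eq_zero_iff_of_nonneg (fun i _ => term_nonneg (ha i) (hab i))).mp key i
      (Finset.mem_univ i)
  have hfilt : ∑ i ∈ univ.filter (fun i => 0 < a i), b i = ∑ i, b i := by
    have h1 := sum_term_eq a b ha
    rw [hzero, key] at h1
    linarith [hsum]
  intro i
  rcases eq_or_lt_of_le (ha i) with h | h
  · have hnotsum : ∑ i ∈ univ.filter (fun j => ¬ 0 < a j), b i = 0 := by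
      have := Finset.sum_filter_add_sum_filter_not univ (fun i => 0 < a i) b
      linarith [hfilt]
    have hmem : i ∈ univ.filter (fun j => ¬ 0 < a j) := by simp [← h]
    have hbi : b i = 0 :=
      (Finset.sum_eq_zero_iff_of_nonneg (fun j _ => hb j)).mp hnotsum i hmem
    rw [← h, hbi]
  · have hbpos := hab i h
    have hx : 0 < b i / a i := div_pos hbpos h
    by_contra hne
    have hxne : b i / a i ≠ 1 := by
      intro hx1
      rw [div_eq_one_iff_eq (ne_of_gt h)] at hx1
      exact hne hx1.symm
    have hstrict := Real.log_lt_sub_one_of_pos hx hxne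
    have : a i * Real.log (b i / a i) < a i * (b i / a i - 1) :=
      (mul_lt_mul_iff_right₀ h).mpr hstrict
    linarith [hterm i]
end

section
open Filter Finset intervalIntegral




lemma integral_exp_neg (x : ℝ) : ∫ t in (0:ℝ)..x, Real.exp (-t) = 1 - Real.exp (-x) := by
  rw [intervalIntegral.integral_comp_neg (fun t => Real.exp t)]
  rw [integral_exp]
  simp

lemma exp_mul_aux (t : ℝ) : (1 - t) * Real.exp t ≤ 1 := by
  have h := mul_le_mul_of_nonneg_right (Real.add_one_le_exp (-t)) (Real.exp_pos t).le
  rw [← Real.exp_add] at h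
  simp at h
  linarith

lemma exp_neg_taylor_nonneg {x : ℝ} (hx : 0 ≤ x) :
    Real.exp (-x) - 1 + x ≤ x ^ 2 / 2 := by
  have hint : IntervalIntegrable (fun t => Real.exp (-t)) MeasureTheory.volume 0 x :=
    Continuous.intervalIntegrable (by continuity) _ _
  have key : Real.exp (-x) - 1 + x = ∫ t in (0:ℝ)..x, (1 - Real.exp (-t)) := by
    rw [intervalIntegral.integral_sub intervalIntegrable_const hint, integral_exp_neg]
    simp
    ring
  have mono : ∫ t in (0:ℝ)..x, (1 - Real.exp (-t)) ≤ ∫ t in (0:ℝ)..x, t := by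
    apply intervalIntegral.integral_mono_on hx
      (Continuous.intervalIntegrable (by continuity) _ _)
      (Continuous.intervalIntegrable (by continuity) _ _)
    intro t ht
    have := Real.add_one_le_exp (-t)
    linarith
  rw [key]
  calc ∫ t in (0:ℝ)..x, (1 - Real.exp (-t)) ≤ ∫ t in (0:ℝ)..x, t := mono
    _ = x ^ 2 / 2 := by rw [integral_id]; ring

lemma exp_taylor_pos {y : ℝ} (hy : 0 ≤ y) :
    Real.exp y - 1 - y ≤ y ^ 2 / 2 * Real.exp y := by
  have key : Real.exp y - 1 - y = ∫ t in (0:ℝ)..y, (Real.exp t - 1) := by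
    rw [intervalIntegral.integral_sub (Continuous.intervalIntegrable (by continuity) _ _)
      intervalIntegrable_const, integral_exp]
    simp
  have mono : ∫ t in (0:ℝ)..y, (Real.exp t - 1) ≤ ∫ t in (0:ℝ)..y, t * Real.exp y := by
    apply intervalIntegral.integral_mono_on hy
      (Continuous.intervalIntegrable (by continuity) _ _)
      (Continuous.intervalIntegrable (by continuity) _ _)
    intro t ht
    obtain ⟨ht0, hty⟩ := ht
    have h1 : Real.exp t - 1 ≤ t * Real.exp t := by
      have := exp_mul_aux t
      nlinarith
    have h2 : t * Real.exp t ≤ t * Real.exp y :=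
      mul_le_mul_of_nonneg_left (Real.exp_le_exp.mpr hty) ht0
    linarith
  rw [key]
  calc ∫ t in (0:ℝ)..y, (Real.exp t - 1) ≤ ∫ t in (0:ℝ)..y, t * Real.exp y := mono
    _ = y ^ 2 / 2 * Real.exp y := by
        rw [intervalIntegral.integral_mul_const, integral_id]; ring

lemma exp_taylor (x : ℝ) :
    Real.exp (-x) - 1 + x ≤ x ^ 2 / 2 * Real.exp |x| := by
  rcases le_or_gt 0 x with h | h
  · have h1 := exp_neg_taylor_nonneg h
    have h2 : (1:ℝ) ≤ Real.exp |x| := Real.one_le_exp (abs_nonneg x)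
    nlinarith [sq_nonneg x]
  · have hy : 0 ≤ -x := by linarith
    have h1 := exp_taylor_pos hy
    rw [abs_of_neg h]
    have h2 : (-x)^2 = x^2 := by ring
    rw [h2] at h1
    linarith [h1]
end

section Marg

open Finset

variable {X Y U : Type*} [Fintype X] [Fintype Y] [Fintype U]

lemma sum_prod3 (f : X × Y × U → ℝ) : ∑ z, f z = ∑ x, ∑ y, ∑ u, f (x, y, u) := by
  rw [Fintype.sum_prod_type]
  congr 1
  ext x
  rw [Fintype.sum_prod_type]

lemma margXY_nonneg {Q : X × Y × U → ℝ} (hQ : ∀ z, 0 ≤ Q z) (x : X) (y : Y) :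
    0 ≤ margXY Q x y := Finset.sum_nonneg fun _ _ => hQ _

lemma margU_nonneg {Q : X × Y × U → ℝ} (hQ : ∀ z, 0 ≤ Q z) (u : U) :
    0 ≤ margU Q u := Finset.sum_nonneg fun _ _ => hQ _

lemma margXU_nonneg {Q : X × Y × U → ℝ} (hQ : ∀ z, 0 ≤ Q z) (x : X) (u : U) :
    0 ≤ margXU Q x u := Finset.sum_nonneg fun _ _ => hQ _

lemma margYU_nonneg {Q : X × Y × U → ℝ} (hQ : ∀ z, 0 ≤ Q z) (y : Y) (u : U) :
    0 ≤ margYU Q y u := Finset.sum_nonneg fun _ _ => hQ _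

lemma le_margXY {Q : X × Y × U → ℝ} (hQ : ∀ z, 0 ≤ Q z) (x : X) (y : Y) (u : U) :
    Q (x, y, u) ≤ margXY Q x y :=
  Finset.single_le_sum (f := fun u => Q (x, y, u)) (fun _ _ => hQ _) (Finset.mem_univ u)

lemma le_margXU {Q : X × Y × U → ℝ} (hQ : ∀ z, 0 ≤ Q z) (x : X) (y : Y) (u : U) :
    Q (x, y, u) ≤ margXU Q x u :=
  Finset.single_le_sum (f := fun y => Q (x, y, u)) (fun _ _ => hQ _) (Finset.mem_univ y)

lemma le_margYU {Q : X × Y × U → ℝ} (hQ : ∀ z, 0 ≤ Q z) (x : X) (y : Y) (u : U) :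
    Q (x, y, u) ≤ margYU Q y u :=
  Finset.single_le_sum (f := fun x => Q (x, y, u)) (fun _ _ => hQ _) (Finset.mem_univ x)

lemma le_margU {Q : X × Y × U → ℝ} (hQ : ∀ z, 0 ≤ Q z) (x : X) (y : Y) (u : U) :
    Q (x, y, u) ≤ margU Q u :=
  Finset.single_le_sum (f := fun p : X × Y => Q (p.1, p.2, u)) (fun _ _ => hQ _)
    (Finset.mem_univ (x, y))

lemma sum_margXY {Q : X × Y × U → ℝ} : ∑ p : X × Y, margXY Q p.1 p.2 = ∑ z, Q z := by
  rw [sum_prod3 Q, Fintype.sum_prod_type]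
  rfl

lemma sum_margU {Q : X × Y × U → ℝ} : ∑ u, margU Q u = ∑ z, Q z := by
  unfold margU
  rw [Finset.sum_comm, sum_prod3 Q, Fintype.sum_prod_type]

lemma sum_margXU {Q : X × Y × U → ℝ} (u : U) : ∑ x, margXU Q x u = margU Q u := by
  unfold margXU margU
  rw [Fintype.sum_prod_type]

lemma sum_margYU {Q : X × Y × U → ℝ} (u : U) : ∑ y, margYU Q y u = margU Q u := by
  unfold margYU margU
  rw [Fintype.sum_prod_type, Finset.sum_comm]

lemma margXU_le_margU {Q : X × Y × U → ℝ} (hQ : ∀ z, 0 ≤ Q z) (x : X) (u : U) :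
    margXU Q x u ≤ margU Q u := by
  rw [← sum_margXU u]
  exact Finset.single_le_sum (fun i _ => margXU_nonneg hQ i u) (Finset.mem_univ x)

lemma margYU_le_margU {Q : X × Y × U → ℝ} (hQ : ∀ z, 0 ≤ Q z) (y : Y) (u : U) :
    margYU Q y u ≤ margU Q u := by
  rw [← sum_margYU u]
  exact Finset.single_le_sum (fun i _ => margYU_nonneg hQ i u) (Finset.mem_univ y)

lemma margU_le_one {Q : X × Y × U → ℝ} (hQ : ∀ z, 0 ≤ Q z) (h1 : ∑ z, Q z = 1) (u : U) :
    margU Q u ≤ 1 := by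
  rw [← h1, ← sum_margU]
  exact Finset.single_le_sum (fun i _ => margU_nonneg hQ i) (Finset.mem_univ u)

lemma margXY_le_one {Q : X × Y × U → ℝ} (hQ : ∀ z, 0 ≤ Q z) (h1 : ∑ z, Q z = 1)
    (x : X) (y : Y) : margXY Q x y ≤ 1 := by
  rw [← h1, ← sum_margXY]
  exact Finset.single_le_sum (f := fun p : X × Y => margXY Q p.1 p.2)
    (fun i _ => margXY_nonneg hQ i.1 i.2) (Finset.mem_univ (x, y))

lemma margXU_le_one {Q : X × Y × U → ℝ} (hQ : ∀ z, 0 ≤ Q z) (h1 : ∑ z, Q z = 1)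
    (x : X) (u : U) : margXU Q x u ≤ 1 :=
  le_trans (margXU_le_margU hQ x u) (margU_le_one hQ h1 u)

lemma margYU_le_one {Q : X × Y × U → ℝ} (hQ : ∀ z, 0 ≤ Q z) (h1 : ∑ z, Q z = 1)
    (y : Y) (u : U) : margYU Q y u ≤ 1 :=
  le_trans (margYU_le_margU hQ y u) (margU_le_one hQ h1 u)

lemma Q_le_one {Q : X × Y × U → ℝ} (hQ : ∀ z, 0 ≤ Q z) (h1 : ∑ z, Q z = 1)
    (z : X × Y × U) : Q z ≤ 1 := by
  rw [← h1]
  exact Finset.single_le_sum (fun i _ => hQ i) (Finset.mem_univ z)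

end Marg

section Decomp

open Finset

variable {X Y U : Type*} [Fintype X] [Fintype Y] [Fintype U]

/-- Expanded relative-entropy-plus-conditional-mutual-information functional. -/
def Dpart (π : X × Y → ℝ) (Q : X × Y × U → ℝ) : ℝ :=
  ∑ p : X × Y, (margXY Q p.1 p.2 * Real.log (margXY Q p.1 p.2)
    - margXY Q p.1 p.2 * Real.log (π p))

def CMIpart (Q : X × Y × U → ℝ) : ℝ :=
  ∑ z : X × Y × U, (Q z * Real.log (Q z) + Q z * Real.log (margU Q z.2.2)
    - Q z * Real.log (margXU Q z.1 z.2.2) - Q z * Real.log (margYU Q z.2.1 z.2.2))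

def Bexp (π : X × Y → ℝ) (Q : X × Y × U → ℝ) : ℝ :=
  ∑ z : X × Y × U, (Q z * Real.log (Q z) - Q z * Real.log (margU Q z.2.2)
    - Q z * Real.log (π (z.1, z.2.1)))

variable {π : X × Y → ℝ} {Q : X × Y × U → ℝ}

lemma S1_eq_Dpart (hQ0 : ∀ z, 0 ≤ Q z)
    (hsupp : ∀ x y, 0 < margXY Q x y → 0 < π (x, y)) :
    ∑ z : X × Y × U, Q z * Real.log (margXY Q z.1 z.2.1 / π (z.1, z.2.1)) = Dpart π Q := by
  rw [sum_prod3, Dpart, Fintype.sum_prod_type]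
  apply Finset.sum_congr rfl
  intro x _
  apply Finset.sum_congr rfl
  intro y _
  have hsum : ∑ u, Q (x, y, u) * Real.log (margXY Q x y / π (x, y))
      = margXY Q x y * Real.log (margXY Q x y / π (x, y)) := by
    rw [← Finset.sum_mul]; rfl
  rw [hsum]
  rcases eq_or_lt_of_le (margXY_nonneg hQ0 x y) with h | h
  · simp [← h]
  · have hπp := hsupp x y h
    rw [Real.log_div (ne_of_gt h) (ne_of_gt hπp)]
    ring

lemma Eomega_eq (hQ0 : ∀ z, 0 ≤ Q z)
    (hsupp : ∀ x y, 0 < margXY Q x y → 0 < π (x, y)) (α : ℝ) :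
    ∑ z, Q z * omegaFn π α Q z = (1 - α) * (Dpart π Q + CMIpart Q) + α * Bexp π Q := by
  have key : ∀ z : X × Y × U, Q z * omegaFn π α Q z =
      (1 - α) * (Q z * Real.log (margXY Q z.1 z.2.1 / π (z.1, z.2.1)) +
        (Q z * Real.log (Q z) + Q z * Real.log (margU Q z.2.2)
          - Q z * Real.log (margXU Q z.1 z.2.2) - Q z * Real.log (margYU Q z.2.1 z.2.2))) +
      α * (Q z * Real.log (Q z) - Q z * Real.log (margU Q z.2.2)
          - Q z * Real.log (π (z.1, z.2.1))) := by
    rintro ⟨x, y, u⟩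
    rcases eq_or_lt_of_le (hQ0 (x, y, u)) with hz | hz
    · simp [omegaFn, ← hz]
    · have hmXY : 0 < margXY Q x y := lt_of_lt_of_le hz (le_margXY hQ0 x y u)
      have hπp : 0 < π (x, y) := hsupp x y hmXY
      have hmU : 0 < margU Q u := lt_of_lt_of_le hz (le_margU hQ0 x y u)
      have hmXU : 0 < margXU Q x u := lt_of_lt_of_le hz (le_margXU hQ0 x y u)
      have hmYU : 0 < margYU Q y u := lt_of_lt_of_le hz (le_margYU hQ0 x y u)
      unfold omegaFn
      simp only
      rw [Real.log_div (mul_ne_zero (ne_of_gt hz) (ne_of_gt hmU))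
        (mul_ne_zero (ne_of_gt hmXU) (ne_of_gt hmYU)),
        Real.log_mul (ne_of_gt hz) (ne_of_gt hmU),
        Real.log_mul (ne_of_gt hmXU) (ne_of_gt hmYU),
        Real.log_div (ne_of_gt hz) (mul_ne_zero (ne_of_gt hmU) (ne_of_gt hπp)),
        Real.log_mul (ne_of_gt hmU) (ne_of_gt hπp)]
      ring
  rw [Finset.sum_congr rfl (fun z _ => key z)]
  rw [Finset.sum_add_distrib, ← Finset.mul_sum, ← Finset.mul_sum, Finset.sum_add_distrib,
    S1_eq_Dpart hQ0 hsupp]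
  rfl

lemma Dpart_nonneg (hQ0 : ∀ z, 0 ≤ Q z) (h1 : ∑ z, Q z = 1) (hπ0 : ∀ p, 0 ≤ π p)
    (hπ1 : ∑ p, π p = 1)
    (hsupp : ∀ x y, 0 < margXY Q x y → 0 < π (x, y)) :
    0 ≤ Dpart π Q := by
  have := gibbs_nonneg (fun p : X × Y => margXY Q p.1 p.2) π
    (fun p => margXY_nonneg hQ0 p.1 p.2) (fun p hp => hsupp p.1 p.2 hp)
    (by
      calc ∑ p ∈ univ.filter (fun p : X × Y => 0 < margXY Q p.1 p.2), π p
          ≤ ∑ p, π p := Finset.sum_le_sum_of_subset_of_nonneg (Finset.filter_subset _ _)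
            (fun p _ _ => hπ0 p)
        _ = 1 := hπ1
        _ = ∑ p : X × Y, margXY Q p.1 p.2 := by rw [sum_margXY, h1])
  rw [Dpart]
  calc (0:ℝ) ≤ ∑ p : X × Y, margXY Q p.1 p.2 * Real.log (margXY Q p.1 p.2 / π p) := this
    _ = ∑ p : X × Y, (margXY Q p.1 p.2 * Real.log (margXY Q p.1 p.2)
        - margXY Q p.1 p.2 * Real.log (π p)) := by
      apply Finset.sum_congr rfl
      intro p _
      rcases eq_or_lt_of_le (margXY_nonneg hQ0 p.1 p.2) with h | h
      · simp [← h]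
      · rw [Real.log_div (ne_of_gt h) (ne_of_gt (hsupp p.1 p.2 h))]; ring

end Decomp

section Decomp2

open Finset

variable {X Y U : Type*} [Fintype X] [Fintype Y] [Fintype U]
variable {π : X × Y → ℝ} {Q : X × Y × U → ℝ}

lemma sum_prod3' (f : X × Y × U → ℝ) :
    ∑ z : X × Y × U, f z = ∑ p : X × Y, ∑ u, f (p.1, p.2, u) := by
  rw [sum_prod3, Fintype.sum_prod_type]

/-- The inner (per-`u`) conditional KL sum. -/
def perU (Q : X × Y × U → ℝ) (u : U) : ℝ :=
  ∑ p : X × Y, Q (p.1, p.2, u) *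
    Real.log (Q (p.1, p.2, u) / (margXU Q p.1 u * margYU Q p.2 u / margU Q u))

lemma sum_b_eq (hQ0 : ∀ z, 0 ≤ Q z) (u : U) :
    ∑ p : X × Y, margXU Q p.1 u * margYU Q p.2 u / margU Q u = margU Q u := by
  rcases eq_or_lt_of_le (margU_nonneg hQ0 u) with h | h
  · rw [← h]
    apply Finset.sum_eq_zero
    intro p _
    exact div_zero _
  · have : ∑ p : X × Y, margXU Q p.1 u * margYU Q p.2 u / margU Q u
        = (∑ x, margXU Q x u) * (∑ y, margYU Q y u) / margU Q u := by
      rw [Fintype.sum_prod_type, Finset.sum_mul, Finset.sum_div]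
      apply Finset.sum_congr rfl
      intro x _
      rw [Finset.mul_sum, Finset.sum_div]
    rw [this, sum_margXU, sum_margYU]
    field_simp
  
lemma perU_nonneg (hQ0 : ∀ z, 0 ≤ Q z) (u : U) : 0 ≤ perU Q u := by
  apply gibbs_nonneg (fun p : X × Y => Q (p.1, p.2, u))
    (fun p => margXU Q p.1 u * margYU Q p.2 u / margU Q u)
    (fun p => hQ0 _)
  · intro p hp
    have hmU : 0 < margU Q u := lt_of_lt_of_le hp (le_margU hQ0 p.1 p.2 u)
    have hmXU : 0 < margXU Q p.1 u := lt_of_lt_of_le hp (le_margXU hQ0 p.1 p.2 u)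
    have hmYU : 0 < margYU Q p.2 u := lt_of_lt_of_le hp (le_margYU hQ0 p.1 p.2 u)
    exact div_pos (mul_pos hmXU hmYU) hmU
  · calc ∑ p ∈ univ.filter (fun p : X × Y => 0 < Q (p.1, p.2, u)),
          margXU Q p.1 u * margYU Q p.2 u / margU Q u
        ≤ ∑ p : X × Y, margXU Q p.1 u * margYU Q p.2 u / margU Q u := by
          apply Finset.sum_le_sum_of_subset_of_nonneg (Finset.filter_subset _ _)
          intro p _ _
          exact div_nonneg (mul_nonneg (margXU_nonneg hQ0 _ _) (margYU_nonneg hQ0 _ _))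
            (margU_nonneg hQ0 _)
      _ = margU Q u := sum_b_eq hQ0 u
      _ = ∑ p : X × Y, Q (p.1, p.2, u) := rfl

lemma perU_term_eq (hQ0 : ∀ z, 0 ≤ Q z) (u : U) (p : X × Y) :
    Q (p.1, p.2, u) *
      Real.log (Q (p.1, p.2, u) / (margXU Q p.1 u * margYU Q p.2 u / margU Q u))
    = Q (p.1, p.2, u) * Real.log (Q (p.1, p.2, u))
      + Q (p.1, p.2, u) * Real.log (margU Q u)
      - Q (p.1, p.2, u) * Real.log (margXU Q p.1 u)
      - Q (p.1, p.2, u) * Real.log (margYU Q p.2 u) := by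
  rcases eq_or_lt_of_le (hQ0 (p.1, p.2, u)) with h | h
  · simp [← h]
  · have hmU : 0 < margU Q u := lt_of_lt_of_le h (le_margU hQ0 p.1 p.2 u)
    have hmXU : 0 < margXU Q p.1 u := lt_of_lt_of_le h (le_margXU hQ0 p.1 p.2 u)
    have hmYU : 0 < margYU Q p.2 u := lt_of_lt_of_le h (le_margYU hQ0 p.1 p.2 u)
    rw [Real.log_div (ne_of_gt h)
      (ne_of_gt (div_pos (mul_pos hmXU hmYU) hmU)),
      Real.log_div (mul_ne_zero (ne_of_gt hmXU) (ne_of_gt hmYU)) (ne_of_gt hmU),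
      Real.log_mul (ne_of_gt hmXU) (ne_of_gt hmYU)]
    ring

lemma CMIpart_eq_sum_perU (hQ0 : ∀ z, 0 ≤ Q z) :
    CMIpart Q = ∑ u, perU Q u := by
  unfold CMIpart perU
  rw [sum_prod3']
  rw [Finset.sum_comm]
  apply Finset.sum_congr rfl
  intro u _
  apply Finset.sum_congr rfl
  intro p _
  exact (perU_term_eq hQ0 u p).symm

lemma CMIpart_nonneg (hQ0 : ∀ z, 0 ≤ Q z) : 0 ≤ CMIpart Q := by
  rw [CMIpart_eq_sum_perU hQ0]
  exact Finset.sum_nonneg fun u _ => perU_nonneg hQ0 u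

lemma Bexp_nonneg (hQ0 : ∀ z, 0 ≤ Q z) (h1 : ∑ z, Q z = 1)
    (hπ0 : ∀ p, 0 ≤ π p) (hπ1 : ∑ p, π p = 1)
    (hsupp : ∀ x y, 0 < margXY Q x y → 0 < π (x, y)) :
    0 ≤ Bexp π Q := by
  have key := gibbs_nonneg Q (fun z : X × Y × U => margU Q z.2.2 * π (z.1, z.2.1)) hQ0
    (fun z hz => mul_pos (lt_of_lt_of_le hz (le_margU hQ0 z.1 z.2.1 z.2.2))
      (hsupp z.1 z.2.1 (lt_of_lt_of_le hz (le_margXY hQ0 z.1 z.2.1 z.2.2))))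
    (by
      have hb1 : ∑ z : X × Y × U, margU Q z.2.2 * π (z.1, z.2.1) = 1 := by
        rw [sum_prod3']
        have : ∀ p : X × Y, ∑ u, margU Q u * π p = π p := by
          intro p
          rw [← Finset.sum_mul, sum_margU, h1, one_mul]
        rw [Finset.sum_congr rfl (fun p _ => this p), hπ1]
      calc ∑ z ∈ univ.filter (fun z : X × Y × U => 0 < Q z), margU Q z.2.2 * π (z.1, z.2.1)
          ≤ ∑ z : X × Y × U, margU Q z.2.2 * π (z.1, z.2.1) := by
            apply Finset.sum_le_sum_of_subset_of_nonneg (Finset.filter_subset _ _)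
            intro z _ _
            exact mul_nonneg (margU_nonneg hQ0 _) (hπ0 _)
        _ = 1 := hb1
        _ = ∑ z, Q z := h1.symm)
  rw [Bexp]
  refine le_trans key (le_of_eq (Finset.sum_congr rfl ?_))
  intro z _
  rcases eq_or_lt_of_le (hQ0 z) with h | h
  · simp [← h]
  · have hmU : 0 < margU Q z.2.2 := lt_of_lt_of_le h (le_margU hQ0 z.1 z.2.1 z.2.2)
    have hπp : 0 < π (z.1, z.2.1) :=
      hsupp z.1 z.2.1 (lt_of_lt_of_le h (le_margXY hQ0 z.1 z.2.1 z.2.2))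
    rw [Real.log_div (ne_of_gt h) (mul_ne_zero (ne_of_gt hmU) (ne_of_gt hπp)),
      Real.log_mul (ne_of_gt hmU) (ne_of_gt hπp)]
    ring

end Decomp2

section EqLem

open Finset

variable {X Y U : Type*} [Fintype X] [Fintype Y] [Fintype U]
variable {π : X × Y → ℝ} {Q : X × Y × U → ℝ}

lemma margXY_eq_of_Dpart (hQ0 : ∀ z, 0 ≤ Q z) (h1 : ∑ z, Q z = 1)
    (hπ0 : ∀ p, 0 ≤ π p) (hπ1 : ∑ p, π p = 1)
    (hsupp : ∀ x y, 0 < margXY Q x y → 0 < π (x, y))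
    (hD : Dpart π Q ≤ 0) :
    ∀ x y, margXY Q x y = π (x, y) := by
  have hle : ∑ p : X × Y, margXY Q p.1 p.2 * Real.log (margXY Q p.1 p.2 / π p) ≤ 0 := by
    refine le_trans (le_of_eq (Finset.sum_congr rfl ?_)) hD
    intro p _
    rcases eq_or_lt_of_le (margXY_nonneg hQ0 p.1 p.2) with h | h
    · simp [← h]
    · rw [Real.log_div (ne_of_gt h) (ne_of_gt (hsupp p.1 p.2 h))]; ring
  have := gibbs_eq (fun p : X × Y => margXY Q p.1 p.2) π
    (fun p => margXY_nonneg hQ0 p.1 p.2) hπ0 (fun p hp => hsupp p.1 p.2 hp)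
    (by rw [hπ1, sum_margXY, h1]) hle
  intro x y
  exact this (x, y)

lemma markov_of_CMIpart (hQ0 : ∀ z, 0 ≤ Q z) (hCMI : CMIpart Q ≤ 0) :
    IsMarkovXWY Q := by
  have hper0 : ∀ u, perU Q u = 0 := by
    have hsum : ∑ u, perU Q u ≤ 0 := by rw [← CMIpart_eq_sum_perU hQ0]; exact hCMI
    have hsum0 : ∑ u, perU Q u = 0 :=
      le_antisymm hsum (Finset.sum_nonneg fun u _ => perU_nonneg hQ0 u)
    intro u
    exact (Finset.sum_eq_zero_iff_of_nonneg (fun u _ => perU_nonneg hQ0 u)).mp hsum0 u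
      (Finset.mem_univ u)
  intro x y u
  show Q (x, y, u) * margU Q u = margXU Q x u * margYU Q y u
  rcases eq_or_lt_of_le (margU_nonneg hQ0 u) with h | h
  · have hQz : Q (x, y, u) = 0 :=
      le_antisymm (le_trans (le_margU hQ0 x y u) (le_of_eq h.symm)) (hQ0 _)
    have hXU : margXU Q x u = 0 :=
      le_antisymm (le_trans (margXU_le_margU hQ0 x u) (le_of_eq h.symm))
        (margXU_nonneg hQ0 x u)
    rw [hQz, hXU, zero_mul, zero_mul]
  · have heq := gibbs_eq (fun p : X × Y => Q (p.1, p.2, u))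
      (fun p : X × Y => margXU Q p.1 u * margYU Q p.2 u / margU Q u)
      (fun p => hQ0 _)
      (fun p => div_nonneg (mul_nonneg (margXU_nonneg hQ0 _ _) (margYU_nonneg hQ0 _ _))
        (margU_nonneg hQ0 _))
      (fun p hp => div_pos
        (mul_pos (lt_of_lt_of_le hp (le_margXU hQ0 p.1 p.2 u))
          (lt_of_lt_of_le hp (le_margYU hQ0 p.1 p.2 u))) h)
      (sum_b_eq hQ0 u)
      (le_of_eq (hper0 u))
    have := heq (x, y)
    simp only at this
    rw [this]
    field_simp

lemma mutualInfoW_filter_eq (hQ0 : ∀ z, 0 ≤ Q z) :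
    mutualInfoW Q = ∑ z : X × Y × U, Q z * Real.log (Q z /
      (margXY Q z.1 z.2.1 * margU Q z.2.2)) := by
  unfold mutualInfoW
  rw [Finset.sum_filter_of_ne]
  · rfl
  · intro z _ hne
    rcases eq_or_lt_of_le (hQ0 z) with h | h
    · exact absurd (by rw [← h, zero_mul]) hne
    · exact h

lemma mutualInfoW_nonneg (hQ0 : ∀ z, 0 ≤ Q z) (h1 : ∑ z, Q z = 1) :
    0 ≤ mutualInfoW Q := by
  rw [mutualInfoW_filter_eq hQ0]
  apply gibbs_nonneg Q (fun z : X × Y × U => margXY Q z.1 z.2.1 * margU Q z.2.2) hQ0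
  · intro z hz
    exact mul_pos (lt_of_lt_of_le hz (le_margXY hQ0 z.1 z.2.1 z.2.2))
      (lt_of_lt_of_le hz (le_margU hQ0 z.1 z.2.1 z.2.2))
  · have hb1 : ∑ z : X × Y × U, margXY Q z.1 z.2.1 * margU Q z.2.2 = 1 := by
      rw [sum_prod3']
      have : ∀ p : X × Y, ∑ u, margXY Q p.1 p.2 * margU Q u = margXY Q p.1 p.2 := by
        intro p
        rw [← Finset.mul_sum, sum_margU, h1, mul_one]
      rw [Finset.sum_congr rfl (fun p _ => this p), sum_margXY, h1]
    calc ∑ z ∈ univ.filter (fun z : X × Y × U => 0 < Q z),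
          margXY Q z.1 z.2.1 * margU Q z.2.2
        ≤ ∑ z : X × Y × U, margXY Q z.1 z.2.1 * margU Q z.2.2 := by
          apply Finset.sum_le_sum_of_subset_of_nonneg (Finset.filter_subset _ _)
          intro z _ _
          exact mul_nonneg (margXY_nonneg hQ0 _ _) (margU_nonneg hQ0 _)
      _ = 1 := hb1
      _ = ∑ z, Q z := h1.symm

lemma mutualInfoW_eq_Bexp (hQ0 : ∀ z, 0 ≤ Q z)
    (hsupp : ∀ x y, 0 < margXY Q x y → 0 < π (x, y))
    (hmarg : ∀ x y, margXY Q x y = π (x, y)) :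
    mutualInfoW Q = Bexp π Q := by
  rw [mutualInfoW_filter_eq hQ0, Bexp]
  apply Finset.sum_congr rfl
  intro z _
  rcases eq_or_lt_of_le (hQ0 z) with h | h
  · simp [← h]
  · have hmXY : 0 < margXY Q z.1 z.2.1 := lt_of_lt_of_le h (le_margXY hQ0 z.1 z.2.1 z.2.2)
    have hπp : 0 < π (z.1, z.2.1) := hsupp z.1 z.2.1 hmXY
    have hmU : 0 < margU Q z.2.2 := lt_of_lt_of_le h (le_margU hQ0 z.1 z.2.1 z.2.2)
    rw [hmarg z.1 z.2.1,
      Real.log_div (ne_of_gt h) (mul_ne_zero (ne_of_gt hπp) (ne_of_gt hmU)),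
      Real.log_mul (ne_of_gt hπp) (ne_of_gt hmU)]
    ring

end EqLem

section Cont

open Finset Filter Topology

lemma tendsto_xlogx {a : ℕ → ℝ} {la : ℝ} (ha : Tendsto a atTop (nhds la)) :
    Tendsto (fun n => a n * Real.log (a n)) atTop (nhds (la * Real.log la)) :=
  (Real.continuous_mul_log.tendsto la).comp ha

lemma tendsto_alogb {a b : ℕ → ℝ} {la lb : ℝ}
    (ha : Tendsto a atTop (nhds la)) (hb : Tendsto b atTop (nhds lb))
    (h0 : ∀ n, 0 ≤ a n) (hab : ∀ n, a n ≤ b n) (h1 : ∀ n, b n ≤ 1) :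
    Tendsto (fun n => a n * Real.log (b n)) atTop (nhds (la * Real.log lb)) := by
  have hla : 0 ≤ la := le_of_tendsto_of_tendsto' tendsto_const_nhds ha h0
  have hlab : la ≤ lb := le_of_tendsto_of_tendsto' ha hb hab
  have hlb1 : lb ≤ 1 := le_of_tendsto_of_tendsto' hb tendsto_const_nhds h1
  rcases eq_or_lt_of_le (le_trans hla hlab) with h | h
  · -- lb = 0, hence la = 0
    have hla0 : la = 0 := le_antisymm (h ▸ hlab) hla
    have hgoal0 : la * Real.log lb = 0 := by rw [hla0, zero_mul]
    rw [hgoal0]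
    have hlow : ∀ n, b n * Real.log (b n) ≤ a n * Real.log (b n) := by
      intro n
      apply mul_le_mul_of_nonpos_right (hab n)
      exact Real.log_nonpos (le_trans (h0 n) (hab n)) (h1 n)
    have hup : ∀ n, a n * Real.log (b n) ≤ 0 := by
      intro n
      apply mul_nonpos_of_nonneg_of_nonpos (h0 n)
      exact Real.log_nonpos (le_trans (h0 n) (hab n)) (h1 n)
    have hblb : Tendsto (fun n => b n * Real.log (b n)) atTop (nhds 0) := by
      have := tendsto_xlogx hb
      rw [← h] at this
      simpa using this
    exact tendsto_of_tendsto_of_tendsto_of_le_of_le hblb tendsto_const_nhds hlow hup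
  · -- lb > 0
    have hlog : Tendsto (fun n => Real.log (b n)) atTop (nhds (Real.log lb)) :=
      ((Real.continuousAt_log (ne_of_gt h)).tendsto).comp hb
    exact ha.mul hlog

variable {X Y : Type*} [Fintype X] [Fintype Y]

lemma continuous_margXY (x : X) (y : Y) {U : Type*} [Fintype U] :
    Continuous (fun Q : X × Y × U → ℝ => margXY Q x y) :=
  continuous_finset_sum _ fun u _ => continuous_apply (x, y, u)

lemma isCompact_QClass (π : X × Y → ℝ) : IsCompact (QClass π) := by
  have hsub : QClass π ⊆ Set.pi Set.univ (fun _ : X × Y × Fin (Fintype.card X * Fintype.card Y) => Set.Icc (0:ℝ) 1) := by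
    intro Q hQ z _
    exact ⟨hQ.1.1 z, Q_le_one hQ.1.1 hQ.1.2 z⟩
  have hclosed : IsClosed (QClass π) := by
    have heq : QClass π =
        ((⋂ z, {Q : X × Y × Fin (Fintype.card X * Fintype.card Y) → ℝ | 0 ≤ Q z})
          ∩ {Q | ∑ z, Q z = 1})
        ∩ ⋂ p : X × Y, {Q | 0 < margXY Q p.1 p.2 → 0 < π p} := by
      ext Q
      constructor
      · rintro ⟨⟨h0, h1⟩, h2⟩
        exact ⟨⟨Set.mem_iInter.mpr fun z => h0 z, h1⟩,
          Set.mem_iInter.mpr fun p => h2 p.1 p.2⟩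
      · rintro ⟨⟨h0, h1⟩, h2⟩
        exact ⟨⟨fun z => Set.mem_iInter.mp h0 z, h1⟩,
          fun x y => Set.mem_iInter.mp h2 (x, y)⟩
    rw [heq]
    apply IsClosed.inter
    · apply IsClosed.inter
      · exact isClosed_iInter fun z => isClosed_le continuous_const (continuous_apply z)
      · exact isClosed_eq (continuous_finset_sum _ fun z _ => continuous_apply z)
          continuous_const
    · apply isClosed_iInter
      intro p
      by_cases hp : 0 < π p
      · have : {Q : X × Y × Fin (Fintype.card X * Fintype.card Y) → ℝ |
            0 < margXY Q p.1 p.2 → 0 < π p} = Set.univ := by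
          ext Q; simp [hp]
        rw [this]; exact isClosed_univ
      · have : {Q : X × Y × Fin (Fintype.card X * Fintype.card Y) → ℝ |
            0 < margXY Q p.1 p.2 → 0 < π p} = {Q | margXY Q p.1 p.2 ≤ 0} := by
          ext Q
          simp only [Set.mem_setOf_eq]
          constructor
          · intro h
            by_contra hc
            exact hp (h (lt_of_not_ge hc))
          · intro h h'
            exact absurd h (not_le.mpr h')
        rw [this]
        exact isClosed_le (continuous_margXY p.1 p.2) continuous_const
  exact (isCompact_univ_pi fun _ => isCompact_Icc).of_isClosed_subset hclosed hsub

end Cont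

section LemA

open Finset Filter Topology

variable {X Y : Type*} [Fintype X] [Fintype Y] {π : X × Y → ℝ}

local notation "UU" => Fin (Fintype.card X * Fintype.card Y)

lemma QClass_basic {Q : X × Y × UU → ℝ} (hQ : Q ∈ QClass π) :
    (∀ z, 0 ≤ Q z) ∧ (∑ z, Q z = 1) ∧ (∀ x y, 0 < margXY Q x y → 0 < π (x, y)) :=
  ⟨hQ.1.1, hQ.1.2, hQ.2⟩

lemma tendsto_functional {Qs : ℕ → (X × Y × UU → ℝ)} {Qstar : X × Y × UU → ℝ}
    (hmem : ∀ n, Qs n ∈ QClass π) (hlim : Tendsto Qs atTop (nhds Qstar)) :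
    Tendsto (fun n => Dpart π (Qs n) + CMIpart (Qs n)) atTop
      (nhds (Dpart π Qstar + CMIpart Qstar)) ∧
    Tendsto (fun n => Bexp π (Qs n)) atTop (nhds (Bexp π Qstar)) := by
  have hz : ∀ z, Tendsto (fun n => Qs n z) atTop (nhds (Qstar z)) :=
    fun z => ((continuous_apply z).tendsto Qstar).comp hlim
  have h0 : ∀ n z, 0 ≤ Qs n z := fun n => (hmem n).1.1
  have h1 : ∀ n, ∑ z, Qs n z = 1 := fun n => (hmem n).1.2
  have hmXY : ∀ x y, Tendsto (fun n => margXY (Qs n) x y) atTop (nhds (margXY Qstar x y)) :=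
    fun x y => tendsto_finset_sum _ fun u _ => hz (x, y, u)
  have hmU : ∀ u, Tendsto (fun n => margU (Qs n) u) atTop (nhds (margU Qstar u)) :=
    fun u => tendsto_finset_sum _ fun p _ => hz (p.1, p.2, u)
  have hmXU : ∀ x u, Tendsto (fun n => margXU (Qs n) x u) atTop (nhds (margXU Qstar x u)) :=
    fun x u => tendsto_finset_sum _ fun y _ => hz (x, y, u)
  have hmYU : ∀ y u, Tendsto (fun n => margYU (Qs n) y u) atTop (nhds (margYU Qstar y u)) :=
    fun y u => tendsto_finset_sum _ fun x _ => hz (x, y, u)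
  constructor
  · apply Tendsto.add
    · -- Dpart
      apply tendsto_finset_sum
      intro p _
      apply Tendsto.sub
      · exact tendsto_xlogx (hmXY p.1 p.2)
      · exact (hmXY p.1 p.2).mul_const _
    · -- CMIpart
      apply tendsto_finset_sum
      intro z _
      apply Tendsto.sub
      apply Tendsto.sub
      apply Tendsto.add
      · exact tendsto_xlogx (hz z)
      · exact tendsto_alogb (hz z) (hmU z.2.2) (fun n => h0 n z)
          (fun n => le_margU (h0 n) z.1 z.2.1 z.2.2)
          (fun n => margU_le_one (h0 n) (h1 n) z.2.2)
      · exact tendsto_alogb (hz z) (hmXU z.1 z.2.2) (fun n => h0 n z)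
          (fun n => le_margXU (h0 n) z.1 z.2.1 z.2.2)
          (fun n => margXU_le_one (h0 n) (h1 n) z.1 z.2.2)
      · exact tendsto_alogb (hz z) (hmYU z.2.1 z.2.2) (fun n => h0 n z)
          (fun n => le_margYU (h0 n) z.1 z.2.1 z.2.2)
          (fun n => margYU_le_one (h0 n) (h1 n) z.2.1 z.2.2)
  · apply tendsto_finset_sum
    intro z _
    apply Tendsto.sub
    apply Tendsto.sub
    · exact tendsto_xlogx (hz z)
    · exact tendsto_alogb (hz z) (hmU z.2.2) (fun n => h0 n z)
        (fun n => le_margU (h0 n) z.1 z.2.1 z.2.2)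
        (fun n => margU_le_one (h0 n) (h1 n) z.2.2)
    · exact (hz z).mul_const _

lemma exists_good_alpha (hπ : IsPMF π) {R : ℝ} (hR : R < CWyner π) :
    ∃ α : ℝ, 0 < α ∧ α ≤ 1 ∧ ∃ ε : ℝ, 0 < ε ∧
      ∀ Q ∈ QClass π, α * R + ε ≤ ∑ z, Q z * omegaFn π α Q z := by
  by_contra hcon
  push_neg at hcon
  set αf : ℕ → ℝ := fun n => 1 / ((n : ℝ) + 2) with hαf
  have hαpos : ∀ n, 0 < αf n := fun n => by positivity
  have hαle : ∀ n, αf n ≤ 1 / 2 := by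
    intro n
    apply one_div_le_one_div_of_le (by norm_num)
    have := Nat.cast_nonneg (α := ℝ) n
    linarith
  have hαle1 : ∀ n, αf n ≤ 1 := fun n => le_trans (hαle n) (by norm_num)
  have hαtend : Tendsto αf atTop (nhds 0) := by
    have h1 : Tendsto (fun n : ℕ => (1:ℝ) / n) atTop (nhds 0) :=
      tendsto_const_div_atTop_nhds_zero_nat 1
    have h2 := h1.comp (tendsto_add_atTop_nat 2)
    have : (fun n : ℕ => (1:ℝ) / ((n + 2 : ℕ) : ℝ)) = αf := by
      funext n
      rw [hαf]
      push_cast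
      ring_nf
    rw [← this]
    exact h2
  choose Qs hQmem hQlt using fun n =>
    hcon (αf n) (hαpos n) (hαle1 n) ((αf n) ^ 2) (by positivity)
  -- rewrite the expectation
  have hEeq : ∀ n, ∑ z, Qs n z * omegaFn π (αf n) (Qs n) z
      = (1 - αf n) * (Dpart π (Qs n) + CMIpart (Qs n)) + αf n * Bexp π (Qs n) :=
    fun n => Eomega_eq (hQmem n).1.1 (hQmem n).2 (αf n)
  set A : ℕ → ℝ := fun n => Dpart π (Qs n) + CMIpart (Qs n) with hA
  set B : ℕ → ℝ := fun n => Bexp π (Qs n) with hB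
  have hlt : ∀ n, (1 - αf n) * A n + αf n * B n < αf n * R + (αf n) ^ 2 := by
    intro n
    have := hQlt n
    rw [hEeq n] at this
    exact this
  have hAnn : ∀ n, 0 ≤ A n := by
    intro n
    exact add_nonneg
      (Dpart_nonneg (hQmem n).1.1 (hQmem n).1.2 hπ.1 hπ.2 (hQmem n).2)
      (CMIpart_nonneg (hQmem n).1.1)
  have hBnn : ∀ n, 0 ≤ B n :=
    fun n => Bexp_nonneg (hQmem n).1.1 (hQmem n).1.2 hπ.1 hπ.2 (hQmem n).2
  have hAbound : ∀ n, A n ≤ 2 * αf n * (|R| + 1) := by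
    intro n
    have h := hlt n
    have h1 : αf n * R ≤ αf n * |R| :=
      mul_le_mul_of_nonneg_left (le_abs_self R) (hαpos n).le
    have h2 : (αf n) ^ 2 ≤ αf n := by nlinarith [hαpos n, hαle1 n]
    have h3 : 0 ≤ αf n * B n := mul_nonneg (hαpos n).le (hBnn n)
    have h4 : (1 - αf n) * A n ≤ αf n * (|R| + 1) := by nlinarith
    have h5 : (1:ℝ)/2 ≤ 1 - αf n := by linarith [hαle n]
    nlinarith [hAnn n]
  have hBbound : ∀ n, B n ≤ R + αf n := by
    intro n
    have h := hlt n
    have h3 : 0 ≤ (1 - αf n) * A n := mul_nonneg (by linarith [hαle n]) (hAnn n)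
    have h6 : αf n * B n ≤ αf n * (R + αf n) := by nlinarith
    exact le_of_mul_le_mul_left h6 (hαpos n)
  obtain ⟨Qstar, hQstar, φ, hφmono, hφtend⟩ :=
    (isCompact_QClass π).tendsto_subseq hQmem
  have hαφ : Tendsto (fun n => αf (φ n)) atTop (nhds 0) :=
    hαtend.comp hφmono.tendsto_atTop
  obtain ⟨hAt, hBt⟩ := tendsto_functional (π := π) (fun n => hQmem (φ n)) hφtend
  -- A Qstar ≤ 0
  have hAstar : Dpart π Qstar + CMIpart Qstar ≤ 0 := by
    have hub : Tendsto (fun n => 2 * αf (φ n) * (|R| + 1)) atTop (nhds 0) := by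
      have := (hαφ.const_mul 2).mul_const (|R| + 1)
      simpa using this
    exact le_of_tendsto_of_tendsto' hAt hub (fun n => hAbound (φ n))
  have hDnn : 0 ≤ Dpart π Qstar :=
    Dpart_nonneg hQstar.1.1 hQstar.1.2 hπ.1 hπ.2 hQstar.2
  have hCnn : 0 ≤ CMIpart Qstar := CMIpart_nonneg hQstar.1.1
  have hDle : Dpart π Qstar ≤ 0 := by linarith
  have hCle : CMIpart Qstar ≤ 0 := by linarith
  have hmarg : ∀ x y, margXY Qstar x y = π (x, y) :=
    margXY_eq_of_Dpart hQstar.1.1 hQstar.1.2 hπ.1 hπ.2 hQstar.2 hDle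
  have hmarkov : IsMarkovXWY Qstar := markov_of_CMIpart hQstar.1.1 hCle
  -- B Qstar ≤ R
  have hBstar : Bexp π Qstar ≤ R := by
    have hub : Tendsto (fun n => R + αf (φ n)) atTop (nhds R) := by
      have := (tendsto_const_nhds (x := R) (f := atTop (α := ℕ))).add hαφ
      simpa using this
    exact le_of_tendsto_of_tendsto' hBt hub (fun n => hBbound (φ n))
  -- contradiction with CWyner
  have hmem' : mutualInfoW Qstar ∈ { r | ∃ P : X × Y × UU → ℝ,
      IsPMF P ∧ (∀ x y, (∑ w, P (x, y, w)) = π (x, y)) ∧ IsMarkovXWY P ∧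
      r = mutualInfoW P } :=
    ⟨Qstar, hQstar.1, fun x y => hmarg x y, hmarkov, rfl⟩
  have hbdd : BddBelow { r | ∃ P : X × Y × UU → ℝ,
      IsPMF P ∧ (∀ x y, (∑ w, P (x, y, w)) = π (x, y)) ∧ IsMarkovXWY P ∧
      r = mutualInfoW P } := by
    refine ⟨0, ?_⟩
    rintro r ⟨P, hP, _, _, rfl⟩
    exact mutualInfoW_nonneg hP.1 hP.2
  have hC : CWyner π ≤ mutualInfoW Qstar := csInf_le hbdd hmem'
  have hMI : mutualInfoW Qstar = Bexp π Qstar :=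
    mutualInfoW_eq_Bexp hQstar.1.1 hQstar.2 hmarg
  linarith

end LemA

section Bound

open Finset Filter

variable {X Y : Type*} [Fintype X] [Fintype Y] {π : X × Y → ℝ}

local notation "UU" => Fin (Fintype.card X * Fintype.card Y)

lemma exists_pmin (hπ : IsPMF π) : ∃ c : ℝ, 0 < c ∧ c ≤ 1 ∧ ∀ p, 0 < π p → c ≤ π p := by
  have hne : ∃ p, 0 < π p := by
    by_contra h
    push_neg at h
    have : ∑ p, π p ≤ 0 := Finset.sum_nonpos fun p _ => h p
    rw [hπ.2] at this
    linarith
  obtain ⟨p0, hp0⟩ := hne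
  have hsne : (univ.filter (fun p => 0 < π p)).Nonempty :=
    ⟨p0, Finset.mem_filter.mpr ⟨Finset.mem_univ _, hp0⟩⟩
  refine ⟨(univ.filter (fun p => 0 < π p)).inf' hsne π, ?_, ?_, ?_⟩
  · rw [Finset.lt_inf'_iff]
    intro p hp
    exact (Finset.mem_filter.mp hp).2
  · obtain ⟨q, hq, hqe⟩ := Finset.exists_mem_eq_inf' hsne π
    rw [hqe]
    calc π q ≤ ∑ p, π p := Finset.single_le_sum (fun p _ => hπ.1 p) (Finset.mem_univ q)
      _ = 1 := hπ.2
  · intro p hp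
    exact Finset.inf'_le π (Finset.mem_filter.mpr ⟨Finset.mem_univ _, hp⟩)

lemma omega_abs_bound (hπ : IsPMF π) {c : ℝ}
    (hc : 0 < c ∧ c ≤ 1 ∧ ∀ p, 0 < π p → c ≤ π p)
    {Q : X × Y × UU → ℝ} (hQ : Q ∈ QClass π) {α : ℝ} (hα0 : 0 ≤ α) (hα1 : α ≤ 1)
    (z : X × Y × UU) (hz : 0 < Q z) :
    |omegaFn π α Q z| ≤ -Real.log c + 3 * (-Real.log (Q z)) := by
  obtain ⟨x, y, u⟩ := z
  obtain ⟨hQ0, h1, hsupp⟩ := QClass_basic hQ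
  have hQle1 : Q (x, y, u) ≤ 1 := Q_le_one hQ0 h1 _
  have hL0 : 0 ≤ -Real.log (Q (x, y, u)) := by
    simp only [neg_nonneg]
    exact Real.log_nonpos hz.le hQle1
  have hc10 : 0 ≤ -Real.log c := by
    simp only [neg_nonneg]; exact Real.log_nonpos hc.1.le hc.2.1
  have hm : 0 < margXY Q x y := lt_of_lt_of_le hz (le_margXY hQ0 x y u)
  have hπp : 0 < π (x, y) := hsupp x y hm
  have hπle1 : π (x, y) ≤ 1 := by
    calc π (x, y) ≤ ∑ p, π p := Finset.single_le_sum (fun p _ => hπ.1 p) (Finset.mem_univ (x, y))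
      _ = 1 := hπ.2
  have hmU : 0 < margU Q u := lt_of_lt_of_le hz (le_margU hQ0 x y u)
  have hmXU : 0 < margXU Q x u := lt_of_lt_of_le hz (le_margXU hQ0 x y u)
  have hmYU : 0 < margYU Q y u := lt_of_lt_of_le hz (le_margYU hQ0 x y u)
  -- log bounds
  have hlm1 : Real.log (margXY Q x y) ≤ 0 :=
    Real.log_nonpos hm.le (margXY_le_one hQ0 h1 x y)
  have hlm2 : Real.log (Q (x, y, u)) ≤ Real.log (margXY Q x y) :=
    Real.log_le_log hz (le_margXY hQ0 x y u)
  have hlπ1 : Real.log (π (x, y)) ≤ 0 := Real.log_nonpos hπp.le hπle1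
  have hlπ2 : Real.log c ≤ Real.log (π (x, y)) := Real.log_le_log hc.1 (hc.2.2 _ hπp)
  have hlmU1 : Real.log (margU Q u) ≤ 0 :=
    Real.log_nonpos hmU.le (margU_le_one hQ0 h1 u)
  have hlmU2 : Real.log (Q (x, y, u)) ≤ Real.log (margU Q u) :=
    Real.log_le_log hz (le_margU hQ0 x y u)
  have hlmXU1 : Real.log (margXU Q x u) ≤ 0 :=
    Real.log_nonpos hmXU.le (margXU_le_one hQ0 h1 x u)
  have hlmXU2 : Real.log (Q (x, y, u)) ≤ Real.log (margXU Q x u) :=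
    Real.log_le_log hz (le_margXU hQ0 x y u)
  have hlmYU1 : Real.log (margYU Q y u) ≤ 0 :=
    Real.log_nonpos hmYU.le (margYU_le_one hQ0 h1 y u)
  have hlmYU2 : Real.log (Q (x, y, u)) ≤ Real.log (margYU Q y u) :=
    Real.log_le_log hz (le_margYU hQ0 x y u)
  -- expand omegaFn
  have hexp : omegaFn π α Q (x, y, u) =
      (1 - α) * ((Real.log (margXY Q x y) - Real.log (π (x, y))) +
        (Real.log (Q (x, y, u)) + Real.log (margU Q u)
          - Real.log (margXU Q x u) - Real.log (margYU Q y u))) +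
      α * (Real.log (Q (x, y, u)) - Real.log (margU Q u) - Real.log (π (x, y))) := by
    unfold omegaFn
    simp only
    rw [Real.log_div (ne_of_gt hm) (ne_of_gt hπp),
      Real.log_div (mul_ne_zero (ne_of_gt hz) (ne_of_gt hmU))
        (mul_ne_zero (ne_of_gt hmXU) (ne_of_gt hmYU)),
      Real.log_mul (ne_of_gt hz) (ne_of_gt hmU),
      Real.log_mul (ne_of_gt hmXU) (ne_of_gt hmYU),
      Real.log_div (ne_of_gt hz) (mul_ne_zero (ne_of_gt hmU) (ne_of_gt hπp)),
      Real.log_mul (ne_of_gt hmU) (ne_of_gt hπp)]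
    ring
  rw [hexp, abs_le]
  constructor
  · nlinarith
  · nlinarith

end Bound

section Taylor

open Finset Filter

variable {X Y : Type*} [Fintype X] [Fintype Y] {π : X × Y → ℝ}

local notation "UU" => Fin (Fintype.card X * Fintype.card Y)

lemma sq_exp_bound {L : ℝ} (hL : 0 ≤ L) : L ^ 2 * Real.exp (-(L / 2)) ≤ 16 := by
  have h1 : L ≤ 4 * Real.exp (L / 4) := by
    have := Real.add_one_le_exp (L / 4)
    have he := Real.exp_pos (L / 4)
    nlinarith
  have h2 : Real.exp (L / 4) * Real.exp (L / 4) = Real.exp (L / 2) := by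
    rw [← Real.exp_add]; ring_nf
  have h3 : Real.exp (-(L / 2)) * Real.exp (L / 2) = 1 := by
    rw [← Real.exp_add]; simp
  have h4 : L ^ 2 ≤ 16 * Real.exp (L / 2) := by nlinarith [Real.exp_pos (L / 4)]
  have h5 := Real.exp_pos (-(L / 2))
  nlinarith [Real.exp_pos (L / 2)]

lemma term_taylor (hπ : IsPMF π) {c : ℝ}
    (hc : 0 < c ∧ c ≤ 1 ∧ ∀ p, 0 < π p → c ≤ π p)
    {Q : X × Y × UU → ℝ} (hQ : Q ∈ QClass π) {α : ℝ} (hα0 : 0 ≤ α) (hα1 : α ≤ 1)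
    {θ : ℝ} (hθ0 : 0 ≤ θ) (hθ6 : θ ≤ 1 / 6) (z : X × Y × UU) :
    Q z * Real.exp (-(θ * omegaFn π α Q z)) ≤
      Q z - θ * (Q z * omegaFn π α Q z)
        + θ ^ 2 * (Real.exp ((-Real.log c) / 6) * ((-Real.log c) ^ 2 + 144)) := by
  set c1 : ℝ := -Real.log c with hc1def
  have hc10 : 0 ≤ c1 := by
    rw [hc1def]; simp only [neg_nonneg]; exact Real.log_nonpos hc.1.le hc.2.1
  have hK0 : 0 ≤ Real.exp (c1 / 6) * (c1 ^ 2 + 144) := by positivity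
  obtain ⟨hQ0, h1, hsupp⟩ := QClass_basic hQ
  rcases eq_or_lt_of_le (hQ0 z) with hz | hz
  · rw [← hz]
    simp only [zero_mul, mul_zero, sub_zero, zero_sub, neg_zero, zero_add]
    positivity
  · set w : ℝ := omegaFn π α Q z with hwdef
    set L : ℝ := -Real.log (Q z) with hLdef
    have hL0 : 0 ≤ L := by
      rw [hLdef]
      simp only [neg_nonneg]
      exact Real.log_nonpos hz.le (Q_le_one hQ0 h1 z)
    have hQeL : Q z = Real.exp (-L) := by
      rw [hLdef, neg_neg, Real.exp_log hz]
    have hw : |w| ≤ c1 + 3 * L := omega_abs_bound hπ hc hQ hα0 hα1 z hz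
    have htay := exp_taylor (θ * w)
    have hmul := mul_le_mul_of_nonneg_left htay hz.le
    -- |θ w| ≤ c1/6 + L/2
    have habs : |θ * w| ≤ c1 / 6 + L / 2 := by
      rw [abs_mul, abs_of_nonneg hθ0]
      calc θ * |w| ≤ (1 / 6) * (c1 + 3 * L) := by
            apply mul_le_mul hθ6 hw (abs_nonneg w) (by norm_num)
        _ = c1 / 6 + L / 2 := by ring
    have hex : Real.exp |θ * w| ≤ Real.exp (c1 / 6) * Real.exp (L / 2) := by
      rw [← Real.exp_add]
      exact Real.exp_le_exp.mpr (by linarith)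
    have habs2 : |θ * w| ≤ θ * (c1 + 3 * L) := by
      rw [abs_mul, abs_of_nonneg hθ0]
      exact mul_le_mul_of_nonneg_left hw hθ0
    have hx2 : (θ * w) ^ 2 ≤ θ ^ 2 * (c1 + 3 * L) ^ 2 := by
      rw [← sq_abs (θ * w)]
      calc |θ * w| ^ 2 ≤ (θ * (c1 + 3 * L)) ^ 2 := pow_le_pow_left₀ (abs_nonneg _) habs2 2
        _ = θ ^ 2 * (c1 + 3 * L) ^ 2 := by ring
    set A : ℝ := Real.exp (c1 / 6) with hAdef
    set E1 : ℝ := Real.exp (-L) with hE1def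
    set E2 : ℝ := Real.exp (L / 2) with hE2def
    set E3 : ℝ := Real.exp (-(L / 2)) with hE3def
    have hE : E1 * E2 = E3 := by
      rw [hE1def, hE2def, hE3def, ← Real.exp_add]; ring_nf
    have hE3le1 : E3 ≤ 1 := Real.exp_le_one_iff.mpr (by linarith)
    have hfact : (c1 + 3 * L) ^ 2 * E3 ≤ 2 * c1 ^ 2 + 288 := by
      have h6 : (c1 + 3 * L) ^ 2 ≤ 2 * c1 ^ 2 + 18 * L ^ 2 := by
        nlinarith [sq_nonneg (c1 - 3 * L)]
      have h7 : L ^ 2 * E3 ≤ 16 := sq_exp_bound hL0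
      have h8 : 0 < E3 := Real.exp_pos _
      nlinarith [sq_nonneg c1, sq_nonneg L]
    have hT : Q z * ((θ * w) ^ 2 / 2 * Real.exp |θ * w|)
        ≤ θ ^ 2 * (A * (c1 ^ 2 + 144)) := by
      have hmm : E1 * ((θ * w) ^ 2 * Real.exp |θ * w|)
          ≤ E1 * (θ ^ 2 * (c1 + 3 * L) ^ 2 * (A * E2)) :=
        mul_le_mul_of_nonneg_left
          (mul_le_mul hx2 hex (Real.exp_pos _).le (by positivity))
          (Real.exp_pos _).le
      have h9 : E1 * (θ ^ 2 * (c1 + 3 * L) ^ 2 * (A * E2)) / 2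
          = θ ^ 2 * A / 2 * ((c1 + 3 * L) ^ 2 * E3) := by
        rw [← hE]; ring
      calc Q z * ((θ * w) ^ 2 / 2 * Real.exp |θ * w|)
          = E1 * ((θ * w) ^ 2 * Real.exp |θ * w|) / 2 := by rw [hQeL]; ring
        _ ≤ E1 * (θ ^ 2 * (c1 + 3 * L) ^ 2 * (A * E2)) / 2 := by gcongr ?_ / 2
        _ = θ ^ 2 * A / 2 * ((c1 + 3 * L) ^ 2 * E3) := h9
        _ ≤ θ ^ 2 * A / 2 * (2 * c1 ^ 2 + 288) :=
            mul_le_mul_of_nonneg_left hfact (by positivity)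
        _ = θ ^ 2 * (A * (c1 ^ 2 + 144)) := by ring
    have expand : Q z * (Real.exp (-(θ * w)) - 1 + θ * w)
        = Q z * Real.exp (-(θ * w)) - Q z + Q z * (θ * w) := by ring
    rw [expand] at hmul
    have hcomm : θ * (Q z * w) = Q z * (θ * w) := by ring
    clear_value c1 w L A E1 E2 E3
    linarith [hmul, hT]

end Taylor

section Final1

open Finset Filter

variable {X Y : Type*} [Fintype X] [Fintype Y] {π : X × Y → ℝ}

local notation "UU" => Fin (Fintype.card X * Fintype.card Y)

lemma filter_sum_eq {Q : X × Y × UU → ℝ} (hQ0 : ∀ z, 0 ≤ Q z) (f : X × Y × UU → ℝ) :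
    ∑ z ∈ univ.filter (fun z => 0 < Q z), Q z * f z = ∑ z, Q z * f z := by
  apply Finset.sum_filter_of_ne
  intro z _ hne
  rcases eq_or_lt_of_le (hQ0 z) with h | h
  · exact absurd (by rw [← h, zero_mul]) hne
  · exact h

lemma S_le (hπ : IsPMF π) {c : ℝ}
    (hc : 0 < c ∧ c ≤ 1 ∧ ∀ p, 0 < π p → c ≤ π p)
    {Q : X × Y × UU → ℝ} (hQ : Q ∈ QClass π) {α : ℝ} (hα0 : 0 ≤ α) (hα1 : α ≤ 1)
    {θ : ℝ} (hθ0 : 0 ≤ θ) (hθ6 : θ ≤ 1 / 6) :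
    ∑ z, Q z * Real.exp (-(θ * omegaFn π α Q z)) ≤
      1 - θ * (∑ z, Q z * omegaFn π α Q z)
        + θ ^ 2 * ((Fintype.card (X × Y × UU) : ℝ) *
          (Real.exp ((-Real.log c) / 6) * ((-Real.log c) ^ 2 + 144))) := by
  have hsum := Finset.sum_le_sum (s := (univ : Finset (X × Y × UU)))
    (fun z _ => term_taylor hπ hc hQ hα0 hα1 hθ0 hθ6 z)
  calc ∑ z, Q z * Real.exp (-(θ * omegaFn π α Q z))
      ≤ ∑ z, (Q z - θ * (Q z * omegaFn π α Q z)
          + θ ^ 2 * (Real.exp ((-Real.log c) / 6) * ((-Real.log c) ^ 2 + 144))) := hsum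
    _ = 1 - θ * (∑ z, Q z * omegaFn π α Q z)
        + θ ^ 2 * ((Fintype.card (X × Y × UU) : ℝ) *
          (Real.exp ((-Real.log c) / 6) * ((-Real.log c) ^ 2 + 144))) := by
      rw [Finset.sum_add_distrib, Finset.sum_sub_distrib, ← Finset.mul_sum,
        Finset.sum_const, hQ.1.2, Finset.card_univ, nsmul_eq_mul]
      ring

lemma exists_Q0 (hπ : IsPMF π) :
    ∃ Q0 : X × Y × UU → ℝ, Q0 ∈ QClass π ∧ (∀ x y, margXY Q0 x y = π (x, y)) ∧
      ∃ z0 : X × Y × UU, Q0 z0 = π (z0.1, z0.2.1) ∧ 0 < π (z0.1, z0.2.1) := by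
  have hne : Nonempty (X × Y) := by
    by_contra h
    have : IsEmpty (X × Y) := not_nonempty_iff.mp h
    have h2 := hπ.2
    rw [Finset.univ_eq_empty, Finset.sum_empty] at h2
    exact absurd h2 (by norm_num)
  have hcard : 0 < Fintype.card X * Fintype.card Y := by
    rw [← Fintype.card_prod]
    exact Fintype.card_pos
  set u0 : UU := ⟨0, hcard⟩ with hu0
  set Q0 : X × Y × UU → ℝ := fun z => if z.2.2 = u0 then π (z.1, z.2.1) else 0 with hQ0def
  have hmarg : ∀ x y, margXY Q0 x y = π (x, y) := by
    intro x y
    unfold margXY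
    rw [hQ0def]
    simp only
    rw [Finset.sum_ite_eq' univ u0 (fun _ => π (x, y))]
    simp
  have hnn : ∀ z, 0 ≤ Q0 z := by
    intro z
    rw [hQ0def]
    by_cases h : z.2.2 = u0 <;> simp [h, hπ.1]
  have hsum1 : ∑ z, Q0 z = 1 := by
    rw [← sum_margXY]
    rw [Finset.sum_congr rfl (fun p _ => hmarg p.1 p.2)]
    exact hπ.2
  have hmem : Q0 ∈ QClass π := by
    refine ⟨⟨hnn, hsum1⟩, ?_⟩
    intro x y h
    rw [hmarg x y] at h
    exact h
  obtain ⟨p0, hp0⟩ : ∃ p, 0 < π p := by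
    by_contra h
    push_neg at h
    have : ∑ p, π p ≤ 0 := Finset.sum_nonpos fun p _ => h p
    rw [hπ.2] at this
    linarith
  refine ⟨Q0, hmem, hmarg, (p0.1, p0.2, u0), ?_, hp0⟩
  rw [hQ0def]
  simp

lemma OmegaQ_Q0_le (hπ : IsPMF π) {c : ℝ}
    (hc : 0 < c ∧ c ≤ 1 ∧ ∀ p, 0 < π p → c ≤ π p)
    {Q0 : X × Y × UU → ℝ} (hQ : Q0 ∈ QClass π)
    {z0 : X × Y × UU} (hz0 : Q0 z0 = π (z0.1, z0.2.1)) (hz0pos : 0 < π (z0.1, z0.2.1))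
    {α : ℝ} (hα0 : 0 ≤ α) (hα1 : α ≤ 1) {θ : ℝ} (hθ0 : 0 ≤ θ) :
    OmegaQ π α θ Q0 ≤ -Real.log c + θ * (4 * (-Real.log c)) := by
  set c1 : ℝ := -Real.log c with hc1def
  have hc10 : 0 ≤ c1 := by
    rw [hc1def]; simp only [neg_nonneg]; exact Real.log_nonpos hc.1.le hc.2.1
  have hQz0 : 0 < Q0 z0 := by rw [hz0]; exact hz0pos
  have hcQ : c ≤ Q0 z0 := by rw [hz0]; exact hc.2.2 _ hz0pos
  have hL0 : -Real.log (Q0 z0) ≤ c1 := by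
    rw [hc1def]
    have := Real.log_le_log hc.1 hcQ
    linarith
  have hw : |omegaFn π α Q0 z0| ≤ c1 + 3 * (-Real.log (Q0 z0)) :=
    omega_abs_bound hπ hc hQ hα0 hα1 z0 hQz0
  have hwle : omegaFn π α Q0 z0 ≤ 4 * c1 := by
    have h1 := (abs_le.mp hw).2
    have hL0' : 0 ≤ -Real.log (Q0 z0) := by
      simp only [neg_nonneg]
      exact Real.log_nonpos hQz0.le (Q_le_one hQ.1.1 hQ.1.2 z0)
    linarith
  -- lower bound on the sum
  have hmemz0 : z0 ∈ univ.filter (fun z => 0 < Q0 z) :=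
    Finset.mem_filter.mpr ⟨Finset.mem_univ _, hQz0⟩
  have hSge : c * Real.exp (-(θ * (4 * c1))) ≤
      ∑ z ∈ univ.filter (fun z => 0 < Q0 z), Q0 z * Real.exp (-(θ * omegaFn π α Q0 z)) := by
    calc c * Real.exp (-(θ * (4 * c1)))
        ≤ Q0 z0 * Real.exp (-(θ * omegaFn π α Q0 z0)) := by
          apply mul_le_mul hcQ _ (Real.exp_pos _).le hQz0.le
          apply Real.exp_le_exp.mpr
          have : θ * omegaFn π α Q0 z0 ≤ θ * (4 * c1) :=
            mul_le_mul_of_nonneg_left hwle hθ0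
          linarith
      _ ≤ ∑ z ∈ univ.filter (fun z => 0 < Q0 z), Q0 z * Real.exp (-(θ * omegaFn π α Q0 z)) := by
          apply Finset.single_le_sum (f := fun z => Q0 z * Real.exp (-(θ * omegaFn π α Q0 z)))
            _ hmemz0
          intro i hi
          exact mul_nonneg (hQ.1.1 i) (Real.exp_pos _).le
  have hSpos : 0 < c * Real.exp (-(θ * (4 * c1))) := mul_pos hc.1 (Real.exp_pos _)
  unfold OmegaQ
  have hlog := Real.log_le_log hSpos hSge
  rw [Real.log_mul (ne_of_gt hc.1) (ne_of_gt (Real.exp_pos _)), Real.log_exp] at hlog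
  have hlogc : Real.log c = -c1 := by rw [hc1def]; ring
  clear_value c1
  rw [hlogc] at hlog
  linarith

end Final1

section Final2

open Finset Filter

variable {X Y : Type*} [Fintype X] [Fintype Y] {π : X × Y → ℝ}

local notation "UU" => Fin (Fintype.card X * Fintype.card Y)

lemma OmegaMin_le_max (hπ : IsPMF π) {c : ℝ}
    (hc : 0 < c ∧ c ≤ 1 ∧ ∀ p, 0 < π p → c ≤ π p)
    {α θ : ℝ} (hα0 : 0 ≤ α) (hα1 : α ≤ 1) (hθ0 : 0 ≤ θ) :
    OmegaMin π α θ ≤ -Real.log c + θ * (4 * (-Real.log c)) := by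
  obtain ⟨Q0, hQ0mem, hQ0marg, z0, hz0, hz0pos⟩ := exists_Q0 hπ
  have hub := OmegaQ_Q0_le hπ hc hQ0mem hz0 hz0pos hα0 hα1 hθ0
  have hmem : OmegaQ π α θ Q0 ∈ { r | ∃ Q ∈ QClass π, r = OmegaQ π α θ Q } :=
    ⟨Q0, hQ0mem, rfl⟩
  have hc10 : 0 ≤ -Real.log c := by
    simp only [neg_nonneg]; exact Real.log_nonpos hc.1.le hc.2.1
  by_cases hb : BddBelow { r | ∃ Q ∈ QClass π, r = OmegaQ π α θ Q }
  · exact le_trans (csInf_le hb hmem) hub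
  · unfold OmegaMin
    rw [Real.sInf_of_not_bddBelow hb]
    nlinarith

lemma Fat_le_bound (hπ : IsPMF π) {c : ℝ}
    (hc : 0 < c ∧ c ≤ 1 ∧ ∀ p, 0 < π p → c ≤ π p) (R : ℝ)
    {α θ : ℝ} (hα0 : 0 ≤ α) (hα1 : α ≤ 1) (hθ0 : 0 ≤ θ) :
    Fat π α θ R ≤ -Real.log c + (4 * (-Real.log c) + |R|) / 2 := by
  set c1 : ℝ := -Real.log c with hc1def
  have hc10 : 0 ≤ c1 := by
    rw [hc1def]; simp only [neg_nonneg]; exact Real.log_nonpos hc.1.le hc.2.1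
  have hd : (0:ℝ) < 1 + (5 - 3 * α) * θ := by nlinarith
  have h1 : OmegaMin π α θ ≤ c1 + θ * (4 * c1) := by
    rw [hc1def]
    exact OmegaMin_le_max hπ hc hα0 hα1 hθ0
  have h2 : -(θ * α * R) ≤ θ * |R| := by
    nlinarith [mul_nonneg (mul_nonneg hθ0 hα0) (by linarith [neg_abs_le R] : (0:ℝ) ≤ |R| + R),
      mul_nonneg (mul_nonneg hθ0 (by linarith : (0:ℝ) ≤ 1 - α)) (abs_nonneg R)]
  have hnum : OmegaMin π α θ - θ * α * R ≤ c1 + θ * (4 * c1) + θ * |R| := by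
    linarith [h1, h2]
  rw [Fat, div_le_iff₀ hd]
  set CB : ℝ := c1 + (4 * c1 + |R|) / 2 with hCB
  have hCB0 : 0 ≤ CB := by rw [hCB]; positivity
  have h3 : 1 + 2 * θ ≤ 1 + (5 - 3 * α) * θ := by nlinarith
  calc OmegaMin π α θ - θ * α * R ≤ c1 + θ * (4 * c1) + θ * |R| := hnum
    _ ≤ CB * (1 + 2 * θ) := by rw [hCB]; nlinarith [abs_nonneg R]
    _ ≤ CB * (1 + (5 - 3 * α) * θ) := mul_le_mul_of_nonneg_left h3 hCB0
end Final2

section MainProof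

open Finset Filter

variable {X Y : Type*} [Fintype X] [Fintype Y]

local notation "UU" => Fin (Fintype.card X * Fintype.card Y)

theorem strong_converse_exponent_positive'
    (π : X × Y → ℝ) (hπ : IsPMF π)
    (R : ℝ) (hR : R < CWyner π) :
    0 < Fexp π R := by
  obtain ⟨c, hcpos, hcle, hcmin⟩ := exists_pmin hπ
  have hc : 0 < c ∧ c ≤ 1 ∧ ∀ p, 0 < π p → c ≤ π p := ⟨hcpos, hcle, hcmin⟩
  obtain ⟨α, hα0, hα1, ε, hε, hE⟩ := exists_good_alpha hπ hR
  obtain ⟨M, hM0, hS_le_all⟩ : ∃ M : ℝ, 0 ≤ M ∧ ∀ Q ∈ QClass π, ∀ θ' : ℝ, 0 ≤ θ' → θ' ≤ 1/6 →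
      ∑ z, Q z * Real.exp (-(θ' * omegaFn π α Q z)) ≤
        1 - θ' * (∑ z, Q z * omegaFn π α Q z) + θ' ^ 2 * M := by
    refine ⟨(Fintype.card (X × Y × UU) : ℝ) *
      (Real.exp ((-Real.log c) / 6) * ((-Real.log c) ^ 2 + 144)), ?_, ?_⟩
    · have : 0 ≤ -Real.log c := by
        simp only [neg_nonneg]; exact Real.log_nonpos hcpos.le hcle
      positivity
    · intro Q hQ θ' h1 h2
      exact S_le hπ hc hQ hα0.le hα1 h1 h2
  set θ : ℝ := min (1/6) (min (ε / (2 * (M + 1))) (1 / (2 * (|R| + ε + 1)))) with hθdef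
  have hθpos : 0 < θ := by
    apply lt_min (by norm_num)
    apply lt_min
    · positivity
    · positivity
  have hθ6 : θ ≤ 1/6 := min_le_left _ _
  have hθM : θ * M ≤ ε / 2 := by
    have hb : θ ≤ ε / (2 * (M + 1)) := le_trans (min_le_right _ _) (min_le_left _ _)
    calc θ * M ≤ θ * (M + 1) := by nlinarith
      _ ≤ (ε / (2 * (M + 1))) * (M + 1) := mul_le_mul_of_nonneg_right hb (by linarith)
      _ = ε / 2 := by field_simp
  have hθR : θ * (|R| + ε) ≤ 1/2 := by
    have hb : θ ≤ 1 / (2 * (|R| + ε + 1)) := le_trans (min_le_right _ _) (min_le_right _ _)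
    have habs := abs_nonneg R
    calc θ * (|R| + ε) ≤ θ * (|R| + ε + 1) := by nlinarith
      _ ≤ (1 / (2 * (|R| + ε + 1))) * (|R| + ε + 1) :=
          mul_le_mul_of_nonneg_right hb (by linarith)
      _ = 1 / 2 := by field_simp
  -- the key uniform bound
  have key : ∀ Q ∈ QClass π, θ * (α * R) + θ * (ε / 2) ≤ OmegaQ π α θ Q := by
    intro Q hQ
    have hQ0 : ∀ z, 0 ≤ Q z := hQ.1.1
    have hS_le := hS_le_all Q hQ θ hθpos.le hθ6
    have hEge := hE Q hQ
    have hfe := filter_sum_eq hQ0 (fun z => Real.exp (-(θ * omegaFn π α Q z)))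
    have hSpos : 0 < ∑ z ∈ univ.filter (fun z => 0 < Q z),
        Q z * Real.exp (-(θ * omegaFn π α Q z)) := by
      obtain ⟨z1, hz1⟩ : ∃ z, 0 < Q z := by
        by_contra h
        push_neg at h
        have : ∑ z, Q z ≤ 0 := Finset.sum_nonpos fun z _ => h z
        rw [hQ.1.2] at this
        linarith
      apply Finset.sum_pos
      · intro i hi
        exact mul_pos (Finset.mem_filter.mp hi).2 (Real.exp_pos _)
      · exact ⟨z1, Finset.mem_filter.mpr ⟨Finset.mem_univ _, hz1⟩⟩
    have hθE : θ * (α * R + ε) ≤ θ * (∑ z, Q z * omegaFn π α Q z) :=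
      mul_le_mul_of_nonneg_left hEge hθpos.le
    have hθ2M : θ ^ 2 * M ≤ θ * (ε / 2) := by
      have := mul_le_mul_of_nonneg_left hθM hθpos.le
      nlinarith
    have hαR : α * R ≤ |R| := by
      nlinarith [le_abs_self R, neg_abs_le R, abs_nonneg R,
        mul_nonneg hα0.le (by linarith [le_abs_self R] : (0:ℝ) ≤ |R| - R),
        mul_nonneg (by linarith : (0:ℝ) ≤ 1 - α) (abs_nonneg R)]
    have hu_le : θ * (α * R + ε) - θ ^ 2 * M ≤ 1/2 := by
      have h5 : θ * (α * R + ε) ≤ θ * (|R| + ε) :=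
        mul_le_mul_of_nonneg_left (by linarith) hθpos.le
      have h6 : 0 ≤ θ ^ 2 * M := by positivity
      linarith
    have hSle2 : ∑ z ∈ univ.filter (fun z => 0 < Q z),
        Q z * Real.exp (-(θ * omegaFn π α Q z))
        ≤ 1 - (θ * (α * R + ε) - θ ^ 2 * M) := by
      rw [hfe]
      linarith
    have h1u : 0 < 1 - (θ * (α * R + ε) - θ ^ 2 * M) := by linarith
    have hlog1 := Real.log_le_log hSpos hSle2
    have hlog2 : Real.log (1 - (θ * (α * R + ε) - θ ^ 2 * M))
        ≤ -(θ * (α * R + ε) - θ ^ 2 * M) := by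
      have := Real.log_le_sub_one_of_pos h1u
      linarith
    have hu_ge : θ * (α * R) + θ * (ε / 2) ≤ θ * (α * R + ε) - θ ^ 2 * M := by
      nlinarith
    unfold OmegaQ
    linarith
  -- conclude
  obtain ⟨Q0, hQ0mem, _, _, _, _⟩ := exists_Q0 hπ
  have hMin : θ * (α * R) + θ * (ε / 2) ≤ OmegaMin π α θ := by
    have hne : Set.Nonempty { r | ∃ Q ∈ QClass π, r = OmegaQ π α θ Q } :=
      ⟨OmegaQ π α θ Q0, Q0, hQ0mem, rfl⟩
    unfold OmegaMin
    apply le_csInf hne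
    rintro r ⟨Q, hQ, rfl⟩
    exact key Q hQ
  have hFat : 0 < Fat π α θ R := by
    rw [Fat]
    apply div_pos
    · have hpos : 0 < θ * (ε / 2) := by positivity
      have hcomm : θ * α * R = θ * (α * R) := by ring
      linarith
    · nlinarith
  have hbdd : BddAbove { r | ∃ a ∈ Set.Icc (0:ℝ) 1, ∃ t ∈ Set.Ici (0:ℝ), r = Fat π a t R } := by
    refine ⟨-Real.log c + (4 * (-Real.log c) + |R|) / 2, ?_⟩
    rintro r ⟨a, ⟨ha0, ha1⟩, t, ht, rfl⟩
    exact Fat_le_bound hπ hc R ha0 ha1 ht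
  have hmem : Fat π α θ R ∈
      { r | ∃ a ∈ Set.Icc (0:ℝ) 1, ∃ t ∈ Set.Ici (0:ℝ), r = Fat π a t R } :=
    ⟨α, ⟨hα0.le, hα1⟩, θ, hθpos.le, rfl⟩
  calc (0:ℝ) < Fat π α θ R := hFat
    _ ≤ Fexp π R := le_csSup hbdd hmem

end MainProof

/-- Positivity of the strong converse exponent: if `R < C_Wyner(X;Y)` then `F(R) > 0`. -/
theorem strong_converse_exponent_positive
    {X Y : Type*} [Fintype X] [Fintype Y] (π : X × Y → ℝ) (hπ : IsPMF π)
    (R : ℝ) (hR : R < CWyner π) :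
    0 < Fexp π R := by
  exact strong_converse_exponent_positive' π hπ R hR
end
end

section
/- Vanishing of the strong converse exponent above the common information: if R ≥ C_Wyner(X;Y), then F(R) = 0, where F(R) is the strong converse exponent defined below. -/
open Filter

noncomputable section

section AuxLemmas

lemma sum_filter_pos_eq {α : Type*} [Fintype α] {P : α → ℝ} (h0 : ∀ a, 0 ≤ P a) :
    ∑ a ∈ Finset.univ.filter (fun a => 0 < P a), P a = ∑ a, P a := by
  apply Finset.sum_subset (Finset.filter_subset _ _)
  intro a _ ha
  simp only [Finset.mem_filter, Finset.mem_univ, true_and] at ha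
  exact le_antisymm (not_lt.1 ha) (h0 a)

lemma neg_log_sum_exp_le {ι : Type*} (t : Finset ι) (w g : ι → ℝ)
    (hw : ∀ i ∈ t, 0 ≤ w i) (h1 : ∑ i ∈ t, w i = 1) :
    -Real.log (∑ i ∈ t, w i * Real.exp (g i)) ≤ -∑ i ∈ t, w i * g i := by
  have hj := convexOn_exp.map_sum_le hw h1 (fun i _ => Set.mem_univ (g i))
  simp only [smul_eq_mul] at hj
  have hlog := Real.log_le_log (Real.exp_pos _) hj
  rw [Real.log_exp] at hlog
  linarith

variable {X Y : Type*} [Fintype X] [Fintype Y]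

lemma omega_eq_on_supp {U : Type*} [Fintype U] (π : X × Y → ℝ) (α : ℝ)
    (P : X × Y × U → ℝ) (h0 : ∀ z, 0 ≤ P z)
    (hm : ∀ x y, (∑ u, P (x, y, u)) = π (x, y))
    (hmk : IsMarkovXWY P)
    (z : X × Y × U) (hz : 0 < P z) :
    omegaFn π α P z = α * Real.log (P z / (margU P z.2.2 * π (z.1, z.2.1))) := by
  obtain ⟨x, y, u⟩ := z
  have hπ : 0 < π (x, y) := by
    rw [← hm x y]
    exact lt_of_lt_of_le hz (Finset.single_le_sum (fun i _ => h0 (x, y, i)) (Finset.mem_univ u))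
  have hXU : 0 < margXU P x u :=
    lt_of_lt_of_le hz (Finset.single_le_sum (fun i _ => h0 (x, i, u)) (Finset.mem_univ y))
  have hYU : 0 < margYU P y u :=
    lt_of_lt_of_le hz (Finset.single_le_sum (fun i _ => h0 (i, y, u)) (Finset.mem_univ x))
  have h1 : margXY P x y / π (x, y) = 1 := by
    rw [margXY, hm x y, div_self hπ.ne']
  have h2 : P (x, y, u) * margU P u / (margXU P x u * margYU P y u) = 1 := by
    rw [show P (x, y, u) * margU P u = margXU P x u * margYU P y u from hmk x y u,
      div_self (mul_pos hXU hYU).ne']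
  simp only [omegaFn, h1, h2, Real.log_one]
  ring

lemma OmegaQ_le_mi {U : Type*} [Fintype U] (π : X × Y → ℝ) (α θ : ℝ)
    (P : X × Y × U → ℝ) (hP : IsPMF P)
    (hm : ∀ x y, (∑ u, P (x, y, u)) = π (x, y))
    (hmk : IsMarkovXWY P) :
    OmegaQ π α θ P ≤ θ * α * mutualInfoW P := by
  classical
  set S := Finset.univ.filter (fun z : X × Y × U => 0 < P z) with hS
  have hsum1 : ∑ z ∈ S, P z = 1 := (sum_filter_pos_eq hP.1).trans hP.2
  have hj := neg_log_sum_exp_le S P (fun z => -(θ * omegaFn π α P z))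
    (fun z _ => hP.1 z) hsum1
  have hkey : ∀ z ∈ S, P z * -(θ * omegaFn π α P z) =
      -(θ * α) * (P z * Real.log (P z /
        ((∑ w, P (z.1, z.2.1, w)) * (∑ p : X × Y, P (p.1, p.2, z.2.2))))) := by
    intro z hz
    have hz' : 0 < P z := by simpa [hS] using hz
    rw [omega_eq_on_supp π α P hP.1 hm hmk z hz']
    rw [show margU P z.2.2 * π (z.1, z.2.1)
        = (∑ w, P (z.1, z.2.1, w)) * (∑ p : X × Y, P (p.1, p.2, z.2.2)) by
      rw [margU, hm z.1 z.2.1, mul_comm]]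
    ring
  have heq : -∑ z ∈ S, P z * -(θ * omegaFn π α P z) = θ * α * mutualInfoW P := by
    rw [Finset.sum_congr rfl hkey, ← Finset.mul_sum, mutualInfoW]
    ring
  calc OmegaQ π α θ P ≤ -∑ z ∈ S, P z * -(θ * omegaFn π α P z) := hj
    _ = θ * α * mutualInfoW P := heq

lemma mutualInfoW_nonneg_s9 {U : Type*} [Fintype U] (P : X × Y × U → ℝ) (hP : IsPMF P) :
    0 ≤ mutualInfoW P := by
  classical
  set q : X × Y × U → ℝ := fun z =>
    (∑ w, P (z.1, z.2.1, w)) * (∑ p : X × Y, P (p.1, p.2, z.2.2)) with hq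
  set S := Finset.univ.filter (fun z : X × Y × U => 0 < P z) with hS
  have hsum1 : ∑ z ∈ S, P z = 1 := (sum_filter_pos_eq hP.1).trans hP.2
  have hq0 : ∀ z, 0 ≤ q z := fun z =>
    mul_nonneg (Finset.sum_nonneg fun i _ => hP.1 _) (Finset.sum_nonneg fun i _ => hP.1 _)
  have hqpos : ∀ z ∈ S, 0 < q z := by
    intro z hz
    have hz' : 0 < P z := by simpa [hS] using hz
    exact mul_pos
      (lt_of_lt_of_le hz' (Finset.single_le_sum (fun i _ => hP.1 (z.1, z.2.1, i))
        (Finset.mem_univ z.2.2)))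
      (lt_of_lt_of_le hz' (Finset.single_le_sum (fun i (_ : i ∈ Finset.univ) =>
        hP.1 (i.1, i.2, z.2.2)) (Finset.mem_univ (z.1, z.2.1))))
  have htot : ∀ f : X × Y × U → ℝ, ∑ z, f z = ∑ x, ∑ y, ∑ u, f (x, y, u) := by
    intro f
    rw [Fintype.sum_prod_type]
    exact Finset.sum_congr rfl fun x _ => Fintype.sum_prod_type _
  have hA : ∑ x, ∑ y, ∑ w, P (x, y, w) = 1 := by rw [← htot]; exact hP.2
  have hB : ∑ u, ∑ p : X × Y, P (p.1, p.2, u) = 1 := by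
    rw [Finset.sum_comm, Fintype.sum_prod_type]
    simpa using hA
  have hqsum : ∑ z, q z = 1 := by
    rw [htot q]
    simp only [hq]
    have step : ∑ x, ∑ y, ∑ u, (∑ w, P (x, y, w)) * (∑ p : X × Y, P (p.1, p.2, u))
        = ∑ x, ∑ y, (∑ w, P (x, y, w)) * ∑ u, ∑ p : X × Y, P (p.1, p.2, u) := by
      refine Finset.sum_congr rfl fun x _ => Finset.sum_congr rfl fun y _ => ?_
      rw [Finset.mul_sum]
    rw [step, hB]
    simpa using hA
  have hterm : ∀ z ∈ S, P z - q z ≤ P z * Real.log (P z / q z) := by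
    intro z hz
    have hz' : 0 < P z := by simpa [hS] using hz
    have hqz := hqpos z hz
    have hlog : Real.log (q z / P z) ≤ q z / P z - 1 :=
      Real.log_le_sub_one_of_pos (div_pos hqz hz')
    have : Real.log (P z / q z) = -Real.log (q z / P z) := by
      rw [← Real.log_inv, inv_div]
    rw [this]
    have h2 : P z * Real.log (q z / P z) ≤ q z - P z := by
      have := mul_le_mul_of_nonneg_left hlog hz'.le
      rw [mul_sub, mul_one, mul_div_cancel₀ _ hz'.ne'] at this
      linarith
    nlinarith
  have hqS : ∑ z ∈ S, q z ≤ 1 := by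
    rw [← hqsum]
    exact Finset.sum_le_sum_of_subset_of_nonneg (Finset.filter_subset _ _)
      (fun z _ _ => hq0 z)
  calc (0:ℝ) = 1 - 1 := by ring
    _ ≤ ∑ z ∈ S, P z - ∑ z ∈ S, q z := by rw [hsum1]; linarith
    _ = ∑ z ∈ S, (P z - q z) := (Finset.sum_sub_distrib _ _).symm
    _ ≤ ∑ z ∈ S, P z * Real.log (P z / q z) := Finset.sum_le_sum hterm
    _ = mutualInfoW P := rfl


lemma le_of_forall_pos_le_add' {a b : ℝ} (h : ∀ ε : ℝ, 0 < ε → a ≤ b + ε) : a ≤ b := by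
  by_contra hc
  push_neg at hc
  have := h ((a - b) / 2) (by linarith)
  linarith

lemma exists_wyner (π : X × Y → ℝ) (hπ : IsPMF π) :
    ∃ P : X × Y × Fin (Fintype.card X * Fintype.card Y) → ℝ,
      IsPMF P ∧ (∀ x y, (∑ w, P (x, y, w)) = π (x, y)) ∧ IsMarkovXWY P := by
  classical
  have hcard : Fintype.card (X × Y) = Fintype.card X * Fintype.card Y := Fintype.card_prod X Y
  let e : X × Y ≃ Fin (Fintype.card X * Fintype.card Y) :=
    (Fintype.equivFin (X × Y)).trans (finCongr hcard)
  refine ⟨fun z => if z.2.2 = e (z.1, z.2.1) then π (z.1, z.2.1) else 0, ⟨?_, ?_⟩, ?_, ?_⟩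
  · intro z; dsimp only; split
    · exact hπ.1 _
    · exact le_refl 0
  · rw [show (∑ z : X × Y × Fin (Fintype.card X * Fintype.card Y),
        if z.2.2 = e (z.1, z.2.1) then π (z.1, z.2.1) else 0)
        = ∑ p : X × Y, ∑ w, (if w = e (p.1, p.2) then π (p.1, p.2) else 0) by
      rw [← Finset.sum_product']
      exact Finset.sum_nbij' (fun z => ((z.1, z.2.1), z.2.2)) (fun q => (q.1.1, q.1.2, q.2))
        (by simp) (by simp) (by simp) (by simp) (by simp)]
    simp only [Finset.sum_ite_eq', Finset.mem_univ, if_true]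
    exact hπ.2
  · intro x y
    simp [Finset.sum_ite_eq']
  · intro x y w
    dsimp only
    rcases hab : e.symm w with ⟨a, b⟩
    have hw : ∀ (x' : X) (y' : Y), (w = e (x', y')) ↔ (x' = a ∧ y' = b) := by
      intro x' y'
      constructor
      · intro h
        have h2 : e.symm w = (x', y') := by rw [h, Equiv.symm_apply_apply]
        rw [hab] at h2
        exact ⟨congrArg Prod.fst h2.symm, congrArg Prod.snd h2.symm⟩
      · rintro ⟨rfl, rfl⟩
        exact ((Equiv.symm_apply_eq e).1 hab)
    simp only [hw]
    have hmid : (∑ p : X × Y, if p.1 = a ∧ p.2 = b then π (p.1, p.2) else 0) = π (a, b) := by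
      rw [Fintype.sum_prod_type]
      simp [ite_and, Finset.sum_ite_eq]
    rw [hmid]
    by_cases hx : x = a <;> by_cases hy : y = b <;>
      simp [hx, hy, ite_and, Finset.sum_ite_eq]

end AuxLemmas

/-- Vanishing of the strong converse exponent above the common information:
if `R ≥ C_Wyner(X;Y)` then `F(R) = 0`. -/
theorem strong_converse_exponent_zero
    {X Y : Type*} [Fintype X] [Fintype Y] (π : X × Y → ℝ) (hπ : IsPMF π)
    (R : ℝ) (hR : CWyner π ≤ R) :
    Fexp π R = 0 := by
    classical
  obtain ⟨P0, hP0pmf, hP0m, hP0mk⟩ := exists_wyner π hπ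
  set WS := { r | ∃ P : X × Y × Fin (Fintype.card X * Fintype.card Y) → ℝ,
      IsPMF P ∧ (∀ x y, (∑ w, P (x, y, w)) = π (x, y)) ∧ IsMarkovXWY P ∧ r = mutualInfoW P }
    with hWSdef
  have hCW : CWyner π = sInf WS := rfl
  have hWSne : WS.Nonempty := ⟨mutualInfoW P0, P0, hP0pmf, hP0m, hP0mk, rfl⟩
  have hCnn : 0 ≤ CWyner π := by
    rw [hCW]
    apply le_csInf hWSne
    rintro r ⟨P, hpmf, -, -, rfl⟩
    exact mutualInfoW_nonneg_s9 P hpmf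
  have hRnn : 0 ≤ R := hCnn.trans hR
  have hQ0 : P0 ∈ QClass π := by
    refine ⟨hP0pmf, fun x y h => ?_⟩
    simp only [margXY] at h
    rwa [hP0m x y] at h
  have hOQ0 : ∀ (Q : X × Y × Fin (Fintype.card X * Fintype.card Y) → ℝ), IsPMF Q →
      OmegaQ π 0 0 Q = 0 := by
    intro Q hQ
    unfold OmegaQ
    simp only [zero_mul, neg_zero, Real.exp_zero, mul_one]
    rw [sum_filter_pos_eq hQ.1, hQ.2, Real.log_one, neg_zero]
  have hOmegaMin00 : OmegaMin π 0 0 = 0 := by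
    have hset : { r | ∃ Q ∈ QClass π, r = OmegaQ π 0 0 Q } = {0} := by
      ext r
      simp only [Set.mem_setOf_eq, Set.mem_singleton_iff]
      constructor
      · rintro ⟨Q, hQ, rfl⟩; exact hOQ0 Q hQ.1
      · rintro rfl; exact ⟨P0, hQ0, (hOQ0 P0 hP0pmf).symm⟩
    rw [OmegaMin, hset, csInf_singleton]
  have hub : ∀ r ∈ { r | ∃ α ∈ Set.Icc (0:ℝ) 1, ∃ θ ∈ Set.Ici (0:ℝ), r = Fat π α θ R },
      r ≤ 0 := by
    rintro r ⟨α, hα, θ, hθ, rfl⟩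
    have hθ' : (0:ℝ) ≤ θ := hθ
    have hden : 0 < 1 + (5 - 3 * α) * θ := by nlinarith [hα.1, hα.2]
    have ht : 0 ≤ θ * α := mul_nonneg hθ' hα.1
    have hmain : OmegaMin π α θ ≤ θ * α * R := by
      by_cases hbdd : BddBelow { r | ∃ Q ∈ QClass π, r = OmegaQ π α θ Q }
      · have hkey : ∀ ε : ℝ, 0 < ε → OmegaMin π α θ ≤ θ * α * R + θ * α * ε := by
          intro ε hε
          obtain ⟨r', hr', hlt⟩ := Real.lt_sInf_add_pos hWSne hε
          obtain ⟨P, hpmf, hm, hmk, rfl⟩ := hr'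
          have hQP : P ∈ QClass π := by
            refine ⟨hpmf, fun x y h => ?_⟩
            simp only [margXY] at h
            rwa [hm x y] at h
          have h1 : OmegaMin π α θ ≤ OmegaQ π α θ P := csInf_le hbdd ⟨P, hQP, rfl⟩
          have h2 := OmegaQ_le_mi π α θ P hpmf (fun x y => hm x y) hmk
          have h3 : mutualInfoW P ≤ R + ε := by
            rw [← hCW] at hlt
            linarith
          calc OmegaMin π α θ ≤ θ * α * mutualInfoW P := h1.trans h2
            _ ≤ θ * α * (R + ε) := mul_le_mul_of_nonneg_left h3 ht
            _ = θ * α * R + θ * α * ε := by ring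
        rcases eq_or_lt_of_le ht with h0 | hpos
        · have := hkey 1 one_pos
          rw [← h0] at this ⊢
          simpa using this
        · apply le_of_forall_pos_le_add'
          intro ε hε
          have := hkey (ε / (θ * α)) (div_pos hε hpos)
          rwa [mul_div_cancel₀ _ (ne_of_gt hpos)] at this
      · rw [OmegaMin, csInf_of_not_bddBelow hbdd, Real.sInf_empty]
        exact mul_nonneg ht hRnn
    have hnum : OmegaMin π α θ - θ * α * R ≤ 0 := by linarith
    rw [Fat]
    exact div_nonpos_of_nonpos_of_nonneg hnum hden.le
  have h0mem : (0:ℝ) ∈ { r | ∃ α ∈ Set.Icc (0:ℝ) 1, ∃ θ ∈ Set.Ici (0:ℝ), r = Fat π α θ R } := by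
    refine ⟨0, ⟨le_refl 0, zero_le_one⟩, 0, Set.self_mem_Ici, ?_⟩
    rw [Fat, hOmegaMin00]
    norm_num
  rw [Fexp]
  exact le_antisymm (csSup_le ⟨0, h0mem⟩ hub) (le_csSup ⟨0, hub⟩ h0mem)
end
end

section
/- One-shot achievability bound for source synthesis: let s ∈ (0,1]. Then E_U[ exp(s D_{1+s}(P_{X|U} ‖ π_X)) ] ≤ exp(s D_{1+s}(P_{X|W} ‖ π_X | P_W)) / |ℳ|^s + exp(s D_{1+s}(P_X ‖ π_X)), i.e., e^{s D_{1+s}(P_{X|U}‖π_X|P_U)} ≤ e^{s D_{1+s}(P_{X|W}‖π_X|P_W) − sR} + e^{s D_{1+s}(P_X‖π_X)} when |ℳ| = e^R. -/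
noncomputable section

open Finset

set_option maxHeartbeats 1000000

lemma rpow_add_le_add_rpow' {x y s : ℝ} (hx : 0 ≤ x) (hy : 0 ≤ y) (hs : 0 ≤ s) (hs1 : s ≤ 1) :
    (x + y) ^ s ≤ x ^ s + y ^ s := by
  lift x to NNReal using hx
  lift y to NNReal using hy
  have := NNReal.rpow_add_le_add_rpow x y hs hs1
  exact_mod_cast this

/-- Marginalization at one coordinate. -/
lemma sum_pi_one {ι W : Type*} [Fintype ι] [DecidableEq ι] [Fintype W]
    (PW : W → ℝ) (h1 : ∑ w, PW w = 1) (m : ι) (F : W → ℝ) :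
    ∑ g : ι → W, (∏ j, PW (g j)) * F (g m) = ∑ w, PW w * F w := by
  have key : ∀ g : ι → W, (∏ j, PW (g j)) * F (g m)
      = ∏ j, (PW (g j) * if j = m then F (g j) else 1) := by
    intro g
    rw [Finset.prod_mul_distrib, Finset.prod_ite_eq' univ m (fun j => F (g j))]
    simp
  calc ∑ g : ι → W, (∏ j, PW (g j)) * F (g m)
      = ∑ g : ι → W, ∏ j, (PW (g j) * if j = m then F (g j) else 1) := by
        exact Finset.sum_congr rfl fun g _ => key g
    _ = ∏ j, ∑ w, (PW w * if j = m then F w else 1) :=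
        (Fintype.prod_sum (κ := fun _ : ι => W) (fun i w => PW w * if i = m then F w else 1)).symm
    _ = ∑ w, PW w * F w := by
        rw [show (fun j => ∑ w, (PW w * if j = m then F w else 1))
            = fun j => if j = m then (∑ w, PW w * F w) else 1 from ?_,
          Finset.prod_ite_eq' univ m (fun _ => ∑ w, PW w * F w)]
        · simp
        · funext j
          by_cases h : j = m <;> simp [h, h1]

/-- Marginalization at two distinct coordinates. -/
lemma sum_pi_two {ι W : Type*} [Fintype ι] [DecidableEq ι] [Fintype W]
    (PW : W → ℝ) (h1 : ∑ w, PW w = 1) {m j : ι} (hmj : j ≠ m) (F G : W → ℝ) :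
    ∑ g : ι → W, (∏ i, PW (g i)) * (F (g m) * G (g j))
      = (∑ w, PW w * F w) * (∑ w, PW w * G w) := by
  have key : ∀ g : ι → W, (∏ i, PW (g i)) * (F (g m) * G (g j))
      = ∏ i, (PW (g i) * (if i = m then F (g i) else if i = j then G (g i) else 1)) := by
    intro g
    rw [Finset.prod_mul_distrib]
    congr 1
    have hm : m ∈ (univ : Finset ι) := mem_univ m
    have hj : j ∈ (univ : Finset ι).erase m := Finset.mem_erase.2 ⟨hmj, mem_univ j⟩
    rw [← Finset.mul_prod_erase univ _ hm, ← Finset.mul_prod_erase _ _ hj]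
    rw [if_pos rfl, if_neg hmj, if_pos rfl]
    rw [Finset.prod_eq_one, mul_one]
    intro i hi
    rw [Finset.mem_erase] at hi
    obtain ⟨hij, hi'⟩ := hi
    rw [Finset.mem_erase] at hi'
    rw [if_neg hi'.1, if_neg hij]
  calc ∑ g : ι → W, (∏ i, PW (g i)) * (F (g m) * G (g j))
      = ∑ g : ι → W, ∏ i, (PW (g i) * (if i = m then F (g i) else if i = j then G (g i) else 1)) :=
        Finset.sum_congr rfl fun g _ => key g
    _ = ∏ i, ∑ w, (PW w * (if i = m then F w else if i = j then G w else 1)) :=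
        (Fintype.prod_sum (κ := fun _ : ι => W)
          (fun i w => PW w * (if i = m then F w else if i = j then G w else 1))).symm
    _ = (∑ w, PW w * F w) * (∑ w, PW w * G w) := by
        have hm : m ∈ (univ : Finset ι) := mem_univ m
        have hj : j ∈ (univ : Finset ι).erase m := Finset.mem_erase.2 ⟨hmj, mem_univ j⟩
        rw [← Finset.mul_prod_erase univ _ hm, ← Finset.mul_prod_erase _ _ hj]
        have e1 : (∑ w, PW w * if m = m then F w else if m = j then G w else 1)
            = ∑ w, PW w * F w := by simp
        have e2 : (∑ w, PW w * if j = m then F w else if j = j then G w else 1)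
            = ∑ w, PW w * G w := by simp [hmj]
        have e3 : (∏ i ∈ ((univ : Finset ι).erase m).erase j,
            ∑ w, PW w * if i = m then F w else if i = j then G w else 1) = 1 := by
          apply Finset.prod_eq_one
          intro i hi
          rw [Finset.mem_erase] at hi
          obtain ⟨hij, hi'⟩ := hi
          rw [Finset.mem_erase] at hi'
          simp [hi'.1, hij, h1]
        rw [e1, e2, e3, mul_one]

lemma key_bound {W : Type*} [Fintype W]
    (PW : W → ℝ) (hPW0 : ∀ w, 0 ≤ PW w) (hPW1 : ∑ w, PW w = 1)
    (a : W → ℝ) (ha : ∀ w, 0 ≤ a w) (M : ℕ) (hM : 0 < M)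
    (s : ℝ) (hs0 : 0 < s) (hs1 : s ≤ 1) :
    ∑ f : Fin M → W, (∏ m, PW (f m)) * ((M : ℝ)⁻¹ * ∑ m, a (f m)) ^ (1 + s)
      ≤ (∑ w, PW w * a w ^ (1 + s)) / (M : ℝ) ^ s + (∑ w, PW w * a w) ^ (1 + s) := by
  have hMR : (0 : ℝ) < (M : ℝ) := by exact_mod_cast hM
  have hMR1 : (1 : ℝ) ≤ (M : ℝ) := by exact_mod_cast hM
  have h1s : (0:ℝ) < 1 + s := by linarith
  have h1s' : (1:ℝ) + s ≠ 0 := h1s.ne'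
  set μ := ∑ w, PW w * a w with hμdef
  have hμ : 0 ≤ μ := Finset.sum_nonneg fun w _ => mul_nonneg (hPW0 w) (ha w)
  set μA := ∑ w, PW w * a w ^ (1 + s) with hμAdef
  have hμA : 0 ≤ μA := Finset.sum_nonneg fun w _ =>
    mul_nonneg (hPW0 w) (Real.rpow_nonneg (ha w) _)
  have hQ : ∀ f : Fin M → W, 0 ≤ ∏ m, PW (f m) := fun f =>
    Finset.prod_nonneg fun m _ => hPW0 (f m)
  have hS : ∀ f : Fin M → W, 0 ≤ ∑ m, a (f m) := fun f =>
    Finset.sum_nonneg fun m _ => ha (f m)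
  -- the per-m bound
  have per_m : ∀ m : Fin M,
      ∑ f : Fin M → W, (∏ i, PW (f i)) * (a (f m) * (∑ i, a (f i)) ^ s)
        ≤ μA + μ * ((M : ℝ) * μ) ^ s := by
    intro m
    set T : (Fin M → W) → ℝ := fun f => ∑ j ∈ Finset.univ.erase m, a (f j) with hTdef
    have hT : ∀ f, 0 ≤ T f := fun f => Finset.sum_nonneg fun j _ => ha (f j)
    have hsplit : ∀ f : Fin M → W, (∑ i, a (f i)) = a (f m) + T f := fun f =>
      (Finset.add_sum_erase _ _ (Finset.mem_univ m)).symm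
    have step1 : ∀ f : Fin M → W,
        (∏ i, PW (f i)) * (a (f m) * (∑ i, a (f i)) ^ s)
          ≤ (∏ i, PW (f i)) * (a (f m) ^ (1 + s)) + (∏ i, PW (f i)) * (a (f m) * T f ^ s) := by
      intro f
      have hsub : (∑ i, a (f i)) ^ s ≤ a (f m) ^ s + T f ^ s := by
        rw [hsplit f]; exact rpow_add_le_add_rpow' (ha (f m)) (hT f) hs0.le hs1
      calc (∏ i, PW (f i)) * (a (f m) * (∑ i, a (f i)) ^ s)
          ≤ (∏ i, PW (f i)) * (a (f m) * (a (f m) ^ s + T f ^ s)) :=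
            mul_le_mul_of_nonneg_left
              (mul_le_mul_of_nonneg_left hsub (ha (f m))) (hQ f)
        _ = (∏ i, PW (f i)) * (a (f m) ^ (1 + s)) + (∏ i, PW (f i)) * (a (f m) * T f ^ s) := by
            rw [Real.rpow_one_add' (ha (f m)) h1s']; ring
    have sumA : ∑ f : Fin M → W, (∏ i, PW (f i)) * (a (f m) ^ (1 + s)) = μA :=
      sum_pi_one PW hPW1 m (fun w => a w ^ (1 + s))
    have sumB : ∑ f : Fin M → W, (∏ i, PW (f i)) * (a (f m) * T f ^ s)
        ≤ μ * ((M : ℝ) * μ) ^ s := by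
      rcases eq_or_lt_of_le hμ with hμ0 | hμpos
      · -- μ = 0 : every term vanishes
        have hz : ∀ w, PW w * a w = 0 := fun w =>
          (Finset.sum_eq_zero_iff_of_nonneg
            (fun w _ => mul_nonneg (hPW0 w) (ha w))).1 hμ0.symm w (Finset.mem_univ w)
        have hterm : ∀ f : Fin M → W, (∏ i, PW (f i)) * (a (f m) * T f ^ s) = 0 := by
          intro f
          rw [← Finset.mul_prod_erase Finset.univ _ (Finset.mem_univ m)]
          calc PW (f m) * (∏ i ∈ Finset.univ.erase m, PW (f i)) * (a (f m) * T f ^ s)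
              = (PW (f m) * a (f m)) * ((∏ i ∈ Finset.univ.erase m, PW (f i)) * T f ^ s) := by
                ring
            _ = 0 := by rw [hz (f m), zero_mul]
        rw [Finset.sum_congr rfl fun f _ => hterm f]
        have : 0 ≤ μ * ((M : ℝ) * μ) ^ s :=
          mul_nonneg hμ (Real.rpow_nonneg (mul_nonneg hMR.le hμ) s)
        simpa using this
      · -- μ > 0 : Jensen
        set ν : (Fin M → W) → ℝ := fun f => (∏ i, PW (f i)) * a (f m) / μ with hνdef
        have hν0 : ∀ f, 0 ≤ ν f := fun f => div_nonneg (mul_nonneg (hQ f) (ha (f m))) hμ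
        have hν1 : ∑ f : Fin M → W, ν f = 1 := by
          rw [hνdef, ← Finset.sum_div, sum_pi_one PW hPW1 m a, div_self hμpos.ne']
        have hmeanT : ∑ f : Fin M → W, ν f * T f = ((M : ℝ) - 1) * μ := by
          have expand : ∀ f : Fin M → W,
              ν f * T f = ∑ j ∈ Finset.univ.erase m,
                (∏ i, PW (f i)) * (a (f m) * a (f j)) / μ := by
            intro f
            rw [hνdef, hTdef]
            rw [Finset.mul_sum]
            refine Finset.sum_congr rfl fun j _ => ?_
            ring
          rw [Finset.sum_congr rfl fun f _ => expand f, Finset.sum_comm]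
          have inner : ∀ j ∈ Finset.univ.erase m,
              ∑ f : Fin M → W, (∏ i, PW (f i)) * (a (f m) * a (f j)) / μ = μ := by
            intro j hj
            have hjm : j ≠ m := (Finset.mem_erase.1 hj).1
            rw [← Finset.sum_div, sum_pi_two PW hPW1 hjm a a, ← hμdef]
            field_simp
          rw [Finset.sum_congr rfl inner, Finset.sum_const, Finset.card_erase_of_mem
            (Finset.mem_univ m), Finset.card_univ, Fintype.card_fin]
          have : ((M - 1 : ℕ) : ℝ) = (M : ℝ) - 1 := by
            rw [Nat.cast_sub hM]; norm_num
          rw [nsmul_eq_mul, this]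
        have jensen : ∑ f : Fin M → W, ν f * T f ^ s
            ≤ (∑ f : Fin M → W, ν f * T f) ^ s := by
          have hp : (1:ℝ) ≤ 1 / s := by
            rw [le_div_iff₀ hs0]; linarith
          have h := Real.arith_mean_le_rpow_mean Finset.univ ν (fun f => T f ^ s)
            (fun f _ => hν0 f) hν1 (fun f _ => Real.rpow_nonneg (hT f) s) hp
          have heq : ∀ f : Fin M → W, (T f ^ s) ^ (1/s : ℝ) = T f := by
            intro f
            rw [← Real.rpow_mul (hT f), mul_one_div, div_self hs0.ne', Real.rpow_one]
          rw [one_div_one_div] at h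
          calc ∑ f : Fin M → W, ν f * T f ^ s
              ≤ (∑ f : Fin M → W, ν f * (T f ^ s) ^ (1/s : ℝ)) ^ s := h
            _ = (∑ f : Fin M → W, ν f * T f) ^ s := by
                rw [Finset.sum_congr rfl fun f _ => by rw [heq f]]
        have factor : ∑ f : Fin M → W, (∏ i, PW (f i)) * (a (f m) * T f ^ s)
            = μ * ∑ f : Fin M → W, ν f * T f ^ s := by
          rw [Finset.mul_sum]
          refine Finset.sum_congr rfl fun f _ => ?_
          rw [hνdef]
          field_simp
        rw [factor]
        have step : (∑ f : Fin M → W, ν f * T f) ^ s ≤ ((M : ℝ) * μ) ^ s := by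
          rw [hmeanT]
          apply Real.rpow_le_rpow (mul_nonneg (by linarith) hμ) _ hs0.le
          nlinarith
        exact mul_le_mul_of_nonneg_left (jensen.trans step) hμ
    calc ∑ f : Fin M → W, (∏ i, PW (f i)) * (a (f m) * (∑ i, a (f i)) ^ s)
        ≤ ∑ f : Fin M → W, ((∏ i, PW (f i)) * (a (f m) ^ (1 + s))
            + (∏ i, PW (f i)) * (a (f m) * T f ^ s)) :=
          Finset.sum_le_sum fun f _ => step1 f
      _ = μA + ∑ f : Fin M → W, (∏ i, PW (f i)) * (a (f m) * T f ^ s) := by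
          rw [Finset.sum_add_distrib, sumA]
      _ ≤ μA + μ * ((M : ℝ) * μ) ^ s := by linarith [sumB]
  -- assemble
  have expand : ∀ f : Fin M → W,
      (∏ i, PW (f i)) * ((M : ℝ)⁻¹ * ∑ i, a (f i)) ^ (1 + s)
        = ((M : ℝ) ^ (1 + s))⁻¹ *
            ∑ m, (∏ i, PW (f i)) * (a (f m) * (∑ i, a (f i)) ^ s) := by
    intro f
    rw [Real.mul_rpow (by positivity) (hS f), Real.inv_rpow hMR.le,
      Real.rpow_one_add' (hS f) h1s', ← Finset.mul_sum, ← Finset.sum_mul]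
    ring
  have main : ∑ f : Fin M → W, (∏ i, PW (f i)) * ((M : ℝ)⁻¹ * ∑ i, a (f i)) ^ (1 + s)
      ≤ ((M : ℝ) ^ (1 + s))⁻¹ * ((M : ℝ) * (μA + μ * ((M : ℝ) * μ) ^ s)) := by
    rw [Finset.sum_congr rfl fun f _ => expand f, ← Finset.mul_sum]
    apply mul_le_mul_of_nonneg_left _ (by positivity)
    rw [Finset.sum_comm]
    calc ∑ m : Fin M, ∑ f : Fin M → W, (∏ i, PW (f i)) * (a (f m) * (∑ i, a (f i)) ^ s)
        ≤ ∑ _m : Fin M, (μA + μ * ((M : ℝ) * μ) ^ s) :=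
          Finset.sum_le_sum fun m _ => per_m m
      _ = (M : ℝ) * (μA + μ * ((M : ℝ) * μ) ^ s) := by
          rw [Finset.sum_const, Finset.card_univ, Fintype.card_fin, nsmul_eq_mul]
  refine main.trans (le_of_eq ?_)
  have hMs : (0:ℝ) < (M : ℝ) ^ s := Real.rpow_pos_of_pos hMR s
  rw [Real.rpow_one_add' hMR.le h1s', Real.mul_rpow hMR.le hμ,
    Real.rpow_one_add' hμ h1s']
  field_simp


/-- One-shot achievability bound for source synthesis (Lemma 5 / one-shot bound of Yu–Tan):
for `s ∈ (0,1]`, the expectation over a random codebook `U = (W(1),…,W(M))` of i.i.d.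
codewords `W(m) ∼ P_W` of `exp(s D_{1+s}(P_{X|U} ‖ π_X))` is at most
`exp(s D_{1+s}(P_{X|W} ‖ π_X | P_W)) / M^s + exp(s D_{1+s}(P_X ‖ π_X))`, where
`P_{X|U}(x) = M⁻¹ ∑_m P_{X|W}(x|W(m))` and `P_X` is the marginal of `P_W × P_{X|W}`.
All the exponentiated Rényi divergences are written out explicitly. -/
theorem one_shot_achievability_bound
    {W X : Type*} [Fintype W] [Fintype X]
    (PW : W → ℝ) (hPW : IsPMF PW)
    (PXW : W → X → ℝ) (hPXW : ∀ w, IsPMF (PXW w))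
    (πX : X → ℝ) (hπX : IsPMF πX)
    (M : ℕ) (hM : 0 < M) (s : ℝ) (hs : s ∈ Set.Ioc (0 : ℝ) 1) :
    (∑ f : Fin M → W, (∏ m, PW (f m)) *
        ∑ x, ((M : ℝ)⁻¹ * ∑ m, PXW (f m) x) ^ (1 + s) * πX x ^ (-s))
      ≤ (∑ w, ∑ x, PW w * PXW w x ^ (1 + s) * πX x ^ (-s)) / (M : ℝ) ^ s
        + ∑ x, (∑ w, PW w * PXW w x) ^ (1 + s) * πX x ^ (-s) := by
  obtain ⟨hs0, hs1⟩ := hs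
  have hπ0 : ∀ x, (0:ℝ) ≤ πX x ^ (-s) := fun x => Real.rpow_nonneg (hπX.1 x) _
  calc ∑ f : Fin M → W, (∏ m, PW (f m)) *
        ∑ x, ((M : ℝ)⁻¹ * ∑ m, PXW (f m) x) ^ (1 + s) * πX x ^ (-s)
      = ∑ f : Fin M → W, ∑ x,
          ((∏ m, PW (f m)) * ((M : ℝ)⁻¹ * ∑ m, PXW (f m) x) ^ (1 + s)) * πX x ^ (-s) := by
        refine Finset.sum_congr rfl fun f _ => ?_
        rw [Finset.mul_sum]
        exact Finset.sum_congr rfl fun x _ => by ring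
    _ = ∑ x, (∑ f : Fin M → W,
          (∏ m, PW (f m)) * ((M : ℝ)⁻¹ * ∑ m, PXW (f m) x) ^ (1 + s)) * πX x ^ (-s) := by
        rw [Finset.sum_comm]
        exact Finset.sum_congr rfl fun x _ => (Finset.sum_mul _ _ _).symm
    _ ≤ ∑ x, ((∑ w, PW w * PXW w x ^ (1 + s)) / (M : ℝ) ^ s
          + (∑ w, PW w * PXW w x) ^ (1 + s)) * πX x ^ (-s) := by
        refine Finset.sum_le_sum fun x _ => mul_le_mul_of_nonneg_right ?_ (hπ0 x)
        exact key_bound PW hPW.1 hPW.2 (fun w => PXW w x) (fun w => (hPXW w).1 x) M hM s hs0 hs1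
    _ = (∑ w, ∑ x, PW w * PXW w x ^ (1 + s) * πX x ^ (-s)) / (M : ℝ) ^ s
        + ∑ x, (∑ w, PW w * PXW w x) ^ (1 + s) * πX x ^ (-s) := by
        rw [show (fun x => ((∑ w, PW w * PXW w x ^ (1 + s)) / (M : ℝ) ^ s
            + (∑ w, PW w * PXW w x) ^ (1 + s)) * πX x ^ (-s))
          = fun x => (∑ w, PW w * PXW w x ^ (1 + s)) / (M : ℝ) ^ s * πX x ^ (-s)
            + (∑ w, PW w * PXW w x) ^ (1 + s) * πX x ^ (-s) from funext fun x => by ring]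
        rw [Finset.sum_add_distrib]
        congr 1
        conv_rhs => rw [Finset.sum_comm, Finset.sum_div]
        refine Finset.sum_congr rfl fun x _ => ?_
        rw [div_mul_eq_mul_div, Finset.sum_mul]
end
end
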